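/- arXiv:1505.05642 — 9 statements merged into one kernel-verified Lean document; each statement's English description precedes it below -/
import Mathlib

section
/- For every integer q ≥ 2 and every integer k ≥ 1, the Z_q-Simplex code S_k(q) is an [n_k, k, d_k] Z_q-linear code, i.e. it has length n_k = (q^k − 1)/(q − 1), exactly q^k codewords, and minimum Hamming distance d_k = (q/p)(p − 1)·n_{k−1} + 1, where p > 1 is the smallest divisor of q and n_{k−1} = (q^{k−1} − 1)/(q − 1). -/
/-- Hamming weight of a word over `ZMod q`: the number of nonzero coordinates. -/
def wt {q : ℕ} (l : List (ZMod q)) : ℕ := l.countP (fun x => decide (x ≠ 0))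

/-- The word `(c, α, c + α·𝟏, c + 2α·𝟏, …, c + (q−1)α·𝟏)`, where `𝟏` is the
all-ones vector of the same length as `c`. -/
def simplexWord (q : ℕ) (α : ZMod q) (c : List (ZMod q)) : List (ZMod q) :=
  c ++ α :: (List.range (q - 1)).flatMap (fun i => c.map (fun x => x + ((i + 1 : ℕ) : ZMod q) * α))

/-- The `ZMod q`-Simplex code `S_k(q)` of dimension `k`, as a set of words (lists):
`S_1(q) = ZMod q` (as length-1 words) and
`S_k(q) = {(c, α, c + α·𝟏, …, c + (q−1)α·𝟏) : c ∈ S_{k-1}(q), α ∈ ZMod q}`. -/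
def simplex (q : ℕ) : ℕ → Set (List (ZMod q))
  | 0 => {[]}
  | k + 1 => {w | ∃ c ∈ simplex q k, ∃ α : ZMod q, w = simplexWord q α c}

/-- The word `(α, c + α·𝟏, c + 2α·𝟏, …, c + (q−1)α·𝟏)`. -/
def macWord (q : ℕ) (α : ZMod q) (c : List (ZMod q)) : List (ZMod q) :=
  α :: (List.range (q - 1)).flatMap (fun i => c.map (fun x => x + ((i + 1 : ℕ) : ZMod q) * α))

/-- The `ZMod q`-MacDonald code `M_{k,k-1}(q)`, as a set of words:
`M_{k,k-1}(q) = {(α, c + α·𝟏, …, c + (q−1)α·𝟏) : α ∈ ZMod q, c ∈ S_{k-1}(q)}`. -/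
def macdonald (q k : ℕ) : Set (List (ZMod q)) :=
  {w | ∃ α : ZMod q, ∃ c ∈ simplex q (k - 1), w = macWord q α c}

section Aux

variable {q : ℕ}

/-- Geometric partial sum `1 + q + ⋯ + q^{k-1}`. -/
def Gq (q k : ℕ) : ℕ := ∑ i ∈ Finset.range k, q ^ i

lemma gq_succ (k : ℕ) : Gq q (k + 1) = q * Gq q k + 1 := by
  rw [Gq, Finset.sum_range_succ']
  simp [Gq, Finset.mul_sum, pow_succ, mul_comm]

lemma gq_eq (hq : 2 ≤ q) (k : ℕ) : Gq q k = (q ^ k - 1) / (q - 1) :=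
  Nat.geomSum_eq hq k

lemma length_simplexWord (α : ZMod q) (c : List (ZMod q)) (hq : 1 ≤ q) :
    (simplexWord q α c).length = q * c.length + 1 := by
  simp only [simplexWord, List.length_append, List.length_cons, List.length_flatMap,
    List.length_map, Function.comp_def, List.map_const', List.sum_replicate,
    List.length_range, smul_eq_mul]
  cases q with
  | zero => omega
  | succ n => simp only [Nat.add_sub_cancel]; ring

lemma simplex_length (hq : 1 ≤ q) : ∀ k, ∀ w ∈ simplex q k, w.length = Gq q k := by
  intro k
  induction k with
  | zero => intro w hw; simp [simplex] at hw; simp [hw, Gq]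
  | succ k ih =>
    rintro w ⟨c, hc, α, rfl⟩
    rw [length_simplexWord α c hq, ih c hc, gq_succ]

lemma countP_flatMap {α β : Type*} (f : α → List β) (l : List α) (p : β → Bool) :
    (l.flatMap f).countP p = (l.map fun a => (f a).countP p).sum := by
  induction l with
  | nil => simp
  | cons a l ih => simp [List.flatMap_cons, List.countP_append, ih]

lemma list_map_range_sum (n : ℕ) (g : ℕ → ℕ) :
    ((List.range n).map g).sum = ∑ i ∈ Finset.range n, g i := by
  induction n with
  | zero => simp
  | succ n ih => rw [List.range_succ, Finset.sum_range_succ]; simp [ih]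

lemma wt_simplexWord (hq : 1 ≤ q) (α : ZMod q) (c : List (ZMod q)) :
    wt (simplexWord q α c) =
      (if α = 0 then 0 else 1) +
        ∑ i ∈ Finset.range q, c.countP (fun x => decide (x + (i : ℕ) * α ≠ 0)) := by
  obtain ⟨n, rfl⟩ : ∃ n, q = n + 1 := ⟨q - 1, by omega⟩
  rw [Finset.sum_range_succ']
  simp only [wt, simplexWord, List.countP_append, List.countP_cons, countP_flatMap,
    List.map_map, list_map_range_sum, Nat.add_sub_cancel,
    Nat.cast_zero, zero_mul, add_zero]
  simp only [Function.comp_def, List.countP_map]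
  push_cast
  by_cases h : α = 0 <;> simp [h] <;> omega

lemma sum_countP (c : List (ZMod q)) (s : Finset ℕ) (P : ℕ → ZMod q → Bool) :
    ∑ i ∈ s, c.countP (P i) = (c.map (fun x => (s.filter (fun i => P i x = true)).card)).sum := by
  induction c with
  | nil => simp
  | cons a c ih =>
    simp only [List.countP_cons, List.map_cons, List.sum_cons]
    rw [Finset.sum_add_distrib, ih, Finset.card_filter]
    omega

lemma card_filter_range_eq [NeZero q] (P : ZMod q → Prop) [DecidablePred P] :
    ((Finset.range q).filter (fun i => P ((i : ℕ) : ZMod q))).card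
      = (Finset.univ.filter P).card := by
  apply Finset.card_nbij' (fun i => ((i : ℕ) : ZMod q)) (fun y => y.val)
  · intro a ha
    simp only [Finset.mem_coe, Finset.mem_filter, Finset.mem_range] at ha
    simp [ha.2]
  · intro y hy
    simp only [Finset.mem_coe, Finset.mem_filter, Finset.mem_univ, true_and] at hy
    simp [Finset.mem_filter, Finset.mem_range, ZMod.val_lt, ZMod.natCast_rightInverse y, hy]
  · intro a ha
    simp only [Finset.mem_coe, Finset.mem_filter, Finset.mem_range] at ha
    exact ZMod.val_cast_of_lt ha.1
  · intro y _
    exact ZMod.natCast_rightInverse y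

lemma proper_divisor_le (hq : 2 ≤ q) {d : ℕ} (hd : d ∣ q) (hdq : d ≠ q) :
    d ≤ q / q.minFac := by
  have hq0 : 0 < q := by omega
  have hd0 : 0 < d := Nat.pos_of_dvd_of_pos hd hq0
  have hdlt : d < q := lt_of_le_of_ne (Nat.le_of_dvd hq0 hd) hdq
  have hqd : d * (q / d) = q := Nat.mul_div_cancel' hd
  have h2 : 2 ≤ q / d := by
    by_contra h
    push_neg at h
    interval_cases h' : (q / d) <;> omega
  have hmf : q.minFac ≤ q / d :=
    Nat.minFac_le_of_dvd h2 (Nat.div_dvd_of_dvd hd)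
  calc d = q / (q / d) := (Nat.div_div_self hd hq0.ne').symm
    _ ≤ q / q.minFac := Nat.div_le_div_left hmf (Nat.minFac_pos q)

lemma card_ann_le [NeZero q] (hq : 2 ≤ q) (α : ZMod q) (hα : α ≠ 0) :
    (Finset.univ.filter (fun y : ZMod q => y * α = 0)).card ≤ q / q.minFac := by
  set H : AddSubgroup (ZMod q) := (AddMonoidHom.mulRight α).ker with hH
  have hmem : ∀ y : ZMod q, y ∈ H ↔ y * α = 0 := fun y => Iff.rfl
  have hset : (Finset.univ.filter (fun y : ZMod q => y * α = 0))
      = Finset.univ.filter (fun y => y ∈ H) := by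
    ext y; simp [hH, AddMonoidHom.mem_ker]
  have hcard : (Finset.univ.filter (fun y : ZMod q => y * α = 0)).card = Nat.card H := by
    rw [hset, Nat.card_eq_fintype_card, Fintype.card_subtype]
  rw [hcard]
  have hdvd : Nat.card H ∣ q := by
    have := AddSubgroup.card_addSubgroup_dvd_card H
    rwa [Nat.card_zmod] at this
  have hne : Nat.card H ≠ q := by
    intro h
    have : H = ⊤ := AddSubgroup.eq_top_of_card_eq H (by rw [h, Nat.card_zmod])
    have h1 : (1 : ZMod q) ∈ H := this ▸ AddSubgroup.mem_top 1
    rw [hmem, one_mul] at h1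
    exact hα h1
  exact proper_divisor_le hq hdvd hne

lemma card_sol_le [NeZero q] (hq : 2 ≤ q) (α : ZMod q) (hα : α ≠ 0) (x : ZMod q) :
    (Finset.univ.filter (fun y : ZMod q => x + y * α = 0)).card ≤ q / q.minFac := by
  rcases Finset.eq_empty_or_nonempty
      (Finset.univ.filter (fun y : ZMod q => x + y * α = 0)) with h | ⟨y₀, hy₀⟩
  · simp [h]
  · simp only [Finset.mem_filter, Finset.mem_univ, true_and] at hy₀
    refine le_trans (Finset.card_le_card_of_injOn (fun y => y - y₀) ?_ ?_) (card_ann_le hq α hα)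
    · intro y hy
      simp only [Finset.mem_coe, Finset.mem_filter, Finset.mem_univ, true_and] at hy ⊢
      linear_combination hy - hy₀
    · intro a _ b _ hab
      simpa using sub_left_injective hab

lemma le_sum_map {l : List (ZMod q)} {f : ZMod q → ℕ} {m : ℕ}
    (h : ∀ x ∈ l, m ≤ f x) : l.length * m ≤ (l.map f).sum := by
  induction l with
  | nil => simp
  | cons a l ih =>
    simp only [List.map_cons, List.sum_cons, List.length_cons]
    have h1 := h a (by simp)
    have h2 := ih (fun x hx => h x (by simp [hx]))
    have : (l.length + 1) * m = l.length * m + m := by ring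
    omega

/-- key per-coordinate lower bound -/
lemma entry_lb [NeZero q] (hq : 2 ≤ q) (α : ZMod q) (hα : α ≠ 0) (x : ZMod q) :
    q - q / q.minFac ≤ ((Finset.range q).filter (fun i => x + (i : ℕ) * α ≠ 0)).card := by
  have hsplit := Finset.card_filter_add_card_filter_not
    (s := Finset.range q) (p := fun i => x + (i : ℕ) * α = 0)
  simp only [Finset.card_range] at hsplit
  have hzero : ((Finset.range q).filter (fun i => x + (i : ℕ) * α = 0)).card ≤ q / q.minFac := by
    have h2 := card_sol_le hq α hα x
    calc ((Finset.range q).filter (fun i => x + (i : ℕ) * α = 0)).card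
        = (Finset.univ.filter (fun y : ZMod q => x + y * α = 0)).card := by
          convert card_filter_range_eq (q := q) (fun y => x + y * α = 0) using 2
      _ ≤ q / q.minFac := h2
  have heq : ((Finset.range q).filter (fun i => ¬(x + (i : ℕ) * α = 0))).card
      = ((Finset.range q).filter (fun i => x + (i : ℕ) * α ≠ 0)).card := by
    simp [Ne]
  omega

lemma wt_simplexWord_lb [NeZero q] (hq : 2 ≤ q) (α : ZMod q) (hα : α ≠ 0)
    (c : List (ZMod q)) :
    (q - q / q.minFac) * c.length + 1 ≤ wt (simplexWord q α c) := by
  rw [wt_simplexWord (by omega) α c, if_neg hα,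
    sum_countP c (Finset.range q) (fun i x => decide (x + (i : ℕ) * α ≠ 0))]
  have : c.length * (q - q / q.minFac)
      ≤ (c.map (fun x =>
          ((Finset.range q).filter
            (fun i => decide (x + (i : ℕ) * α ≠ 0) = true)).card)).sum := by
    apply le_sum_map
    intro x _
    have := entry_lb hq α hα x
    simpa using this
  have hcomm : (q - q / q.minFac) * c.length = c.length * (q - q / q.minFac) :=
    Nat.mul_comm _ _
  omega

end Aux

section Aux2
variable {q : ℕ}

lemma card_filter_dvd {p : ℕ} (hp : 0 < p) (hpq : p ∣ q) :
    ((Finset.range q).filter (fun i => p ∣ i)).card = q / p := by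
  have hq' : p * (q / p) = q := Nat.mul_div_cancel' hpq
  rw [← Finset.card_range (q / p)]
  apply Finset.card_nbij' (fun i => i / p) (fun j => p * j)
  · intro a ha
    simp only [Finset.mem_coe, Finset.mem_filter, Finset.mem_range] at ha ⊢
    exact Nat.div_lt_div_of_lt_of_dvd hpq ha.1
  · intro j hj
    simp only [Finset.mem_coe, Finset.mem_range] at hj
    simp only [Finset.mem_coe, Finset.mem_filter, Finset.mem_range]
    have h1 : p * (j + 1) ≤ p * (q / p) := Nat.mul_le_mul_left p hj
    have h2 : p * (j + 1) = p * j + p := by ring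
    exact ⟨by omega, dvd_mul_right p j⟩
  · intro a ha
    simp only [Finset.mem_coe, Finset.mem_filter, Finset.mem_range] at ha
    exact Nat.mul_div_cancel' ha.2
  · intro j _
    exact Nat.mul_div_cancel_left j hp

lemma entry_witness [NeZero q] (hq : 2 ≤ q) :
    ((Finset.range q).filter
      (fun i => (0 : ZMod q) + (i : ℕ) * ((q / q.minFac : ℕ) : ZMod q) ≠ 0)).card
      = q - q / q.minFac := by
  set p := q.minFac with hp
  have hpq : p ∣ q := Nat.minFac_dvd q
  have hp2 : 2 ≤ p := (Nat.minFac_prime (by omega : q ≠ 1)).two_le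
  have hq0 : 0 < q / p := Nat.div_pos (Nat.minFac_le (by omega)) (by omega)
  have hfe : ∀ i : ℕ, ((0 : ZMod q) + (i : ℕ) * ((q / p : ℕ) : ZMod q) = 0) ↔ p ∣ i := by
    intro i
    rw [zero_add, ← Nat.cast_mul, ZMod.natCast_eq_zero_iff]
    constructor
    · intro h
      have hq' : p * (q / p) = q := Nat.mul_div_cancel' hpq
      have h' : p * (q / p) ∣ i * (q / p) := by rw [hq']; exact h
      exact (Nat.mul_dvd_mul_iff_right hq0).mp h'
    · rintro ⟨j, rfl⟩
      have hq' : p * (q / p) = q := Nat.mul_div_cancel' hpq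
      exact ⟨j, by calc p * j * (q / p) = p * (q / p) * j := by ring
        _ = q * j := by rw [hq']⟩
  have hsplit := Finset.card_filter_add_card_filter_not
    (s := Finset.range q)
    (p := fun i => (0 : ZMod q) + (i : ℕ) * ((q / p : ℕ) : ZMod q) = 0)
  simp only [Finset.card_range] at hsplit
  have hcnt : ((Finset.range q).filter
      (fun i => (0 : ZMod q) + (i : ℕ) * ((q / p : ℕ) : ZMod q) = 0)).card = q / p := by
    rw [Finset.filter_congr (fun i _ => by rw [hfe i])]
    exact card_filter_dvd (by omega) hpq
  have hne : ((Finset.range q).filter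
      (fun i => ¬((0 : ZMod q) + (i : ℕ) * ((q / p : ℕ) : ZMod q) = 0))).card
      = ((Finset.range q).filter
      (fun i => (0 : ZMod q) + (i : ℕ) * ((q / p : ℕ) : ZMod q) ≠ 0)).card := by
    simp [Ne]
  omega

lemma zero_mem (hq : 1 ≤ q) : ∀ k, List.replicate (Gq q k) (0 : ZMod q) ∈ simplex q k := by
  intro k
  induction k with
  | zero => simp [simplex, Gq]
  | succ k ih =>
    refine ⟨_, ih, 0, ?_⟩
    rw [gq_succ]
    have : simplexWord q 0 (List.replicate (Gq q k) 0)
        = List.replicate (q * Gq q k + 1) (0 : ZMod q) := by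
      rw [List.eq_replicate_iff]
      refine ⟨by rw [length_simplexWord _ _ hq, List.length_replicate], ?_⟩
      intro b hb
      simp only [simplexWord, List.mem_append, List.mem_cons, List.mem_flatMap,
        List.mem_map, List.mem_replicate] at hb
      rcases hb with h | h | ⟨i, _, x, ⟨_, rfl⟩, rfl⟩
      · exact h.2
      · exact h
      · simp
    exact this.symm

lemma wt_witness [NeZero q] (hq : 2 ≤ q) (n : ℕ) :
    wt (simplexWord q ((q / q.minFac : ℕ) : ZMod q) (List.replicate n 0))
      = (q - q / q.minFac) * n + 1 := by
  have hp2 : 2 ≤ q.minFac := (Nat.minFac_prime (by omega : q ≠ 1)).two_le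
  have hα : ((q / q.minFac : ℕ) : ZMod q) ≠ 0 := by
    rw [Ne, ZMod.natCast_eq_zero_iff]
    intro h
    have hpos : 0 < q / q.minFac := Nat.div_pos (Nat.minFac_le (by omega)) (by omega)
    have hlt : q / q.minFac < q := Nat.div_lt_self (by omega) (by omega)
    have := Nat.le_of_dvd hpos h
    omega
  rw [wt_simplexWord (by omega), if_neg hα,
    sum_countP _ _ (fun i x => decide (x + ((i : ℕ) : ZMod q) * ((q / q.minFac : ℕ) : ZMod q) ≠ 0)),
    List.map_replicate, List.sum_replicate, smul_eq_mul]
  have hf : ((Finset.range q).filter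
      (fun i => decide ((0 : ZMod q) + (i : ℕ) * ((q / q.minFac : ℕ) : ZMod q) ≠ 0)
        = true)).card = q - q / q.minFac := by
    simpa using entry_witness (q := q) hq
  rw [hf]
  ring

lemma simplexWord_inj {α β : ZMod q} {c d : List (ZMod q)}
    (hlen : c.length = d.length) (h : simplexWord q α c = simplexWord q β d) :
    α = β ∧ c = d := by
  unfold simplexWord at h
  obtain ⟨h1, h2⟩ := List.append_inj h hlen
  exact ⟨by injection h2, h1⟩

def fsimplex (q : ℕ) [NeZero q] : ℕ → Finset (List (ZMod q))
  | 0 => {[]}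
  | k + 1 => ((Finset.univ : Finset (ZMod q)) ×ˢ fsimplex q k).image
      fun p => simplexWord q p.1 p.2

lemma coe_fsimplex [NeZero q] : ∀ k, (fsimplex q k : Set (List (ZMod q))) = simplex q k := by
  intro k
  induction k with
  | zero => simp [fsimplex, simplex]
  | succ k ih =>
    ext w
    simp only [fsimplex, Finset.coe_image, Set.mem_image, Finset.mem_coe,
      Finset.mem_product, Finset.mem_univ, true_and, simplex, Set.mem_setOf_eq]
    constructor
    · rintro ⟨⟨a, c⟩, hc, rfl⟩
      exact ⟨c, by rw [← ih]; exact hc, a, rfl⟩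
    · rintro ⟨c, hc, a, rfl⟩
      refine ⟨(a, c), ?_, rfl⟩
      rw [← ih] at hc
      exact hc

lemma card_fsimplex [NeZero q] (hq : 2 ≤ q) : ∀ k, (fsimplex q k).card = q ^ k := by
  intro k
  induction k with
  | zero => simp [fsimplex]
  | succ k ih =>
    rw [fsimplex, Finset.card_image_of_injOn, Finset.card_product, Finset.card_univ,
      ZMod.card, ih, pow_succ]
    · ring
    · rintro ⟨a, c⟩ h1 ⟨b, d⟩ h2 heq
      simp only [Finset.coe_product, Set.mem_prod, Finset.mem_coe, Finset.coe_univ,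
        Set.mem_univ, true_and] at h1 h2
      have hc : c ∈ simplex q k := by rw [← coe_fsimplex]; exact h1
      have hd : d ∈ simplex q k := by rw [← coe_fsimplex]; exact h2
      have hlen : c.length = d.length := by
        rw [simplex_length (by omega) k c hc, simplex_length (by omega) k d hd]
      obtain ⟨hab, hcd⟩ := simplexWord_inj hlen heq
      have hab' : a = b := hab
      simp [hab', hcd]

lemma wt_lb [NeZero q] (hq : 2 ≤ q) : ∀ k, ∀ w ∈ simplex q (k + 1), wt w ≠ 0 →
    (q - q / q.minFac) * Gq q k + 1 ≤ wt w := by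
  intro k
  induction k with
  | zero =>
    rintro w ⟨c, hc, α, rfl⟩ hne
    have hc0 : c = [] := by simpa [simplex] using hc
    subst hc0
    by_cases hα : α = 0
    · exfalso
      apply hne
      subst hα
      simp [wt_simplexWord (by omega : 1 ≤ q)]
    · have := wt_simplexWord_lb hq α hα []
      simpa [Gq] using this
  | succ k ih =>
    rintro w ⟨c, hc, α, rfl⟩ hne
    by_cases hα : α = 0
    · subst hα
      have hwt : wt (simplexWord q 0 c) = q * wt c := by
        rw [wt_simplexWord (by omega : 1 ≤ q)]
        simp [wt]
      rw [hwt] at hne ⊢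
      have hcne : wt c ≠ 0 := fun h => hne (by rw [h, Nat.mul_zero])
      have hwc := ih c hc hcne
      rw [gq_succ]
      have hA : q - q / q.minFac + 1 ≤ q := by
        have h0 : 0 < q / q.minFac :=
          Nat.div_pos (Nat.minFac_le (by omega)) (Nat.minFac_pos q)
        omega
      have h1 : q * ((q - q / q.minFac) * Gq q k + 1) ≤ q * wt c :=
        Nat.mul_le_mul_left q hwc
      have h2 : q * ((q - q / q.minFac) * Gq q k + 1)
          = (q - q / q.minFac) * (q * Gq q k) + q := by ring
      have h3 : (q - q / q.minFac) * (q * Gq q k + 1)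
          = (q - q / q.minFac) * (q * Gq q k) + (q - q / q.minFac) := by ring
      omega
    · have := wt_simplexWord_lb hq α hα c
      rw [simplex_length (by omega : 1 ≤ q) _ c hc] at this
      exact this

end Aux2

/-- The `ZMod q`-Simplex code of dimension `k` is an
`[(q^k − 1)/(q − 1), k, (q/p)(p − 1)·n_{k−1} + 1]` `ZMod q`-linear code, where
`p > 1` is the smallest divisor of `q` (i.e. `q.minFac`). -/
theorem simplex_params (q k : ℕ) (hq : 2 ≤ q) (hk : 1 ≤ k) :
    (∀ w ∈ simplex q k, w.length = (q ^ k - 1) / (q - 1)) ∧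
    (simplex q k).ncard = q ^ k ∧
    IsLeast {m | ∃ w ∈ simplex q k, wt w ≠ 0 ∧ wt w = m}
      ((q / q.minFac) * (q.minFac - 1) * ((q ^ (k - 1) - 1) / (q - 1)) + 1) := by
  obtain ⟨k', rfl⟩ : ∃ k', k = k' + 1 := ⟨k - 1, by omega⟩
  haveI : NeZero q := ⟨by omega⟩
  have hp2 : 2 ≤ q.minFac := (Nat.minFac_prime (by omega : q ≠ 1)).two_le
  have hpq : q.minFac ∣ q := Nat.minFac_dvd q
  have hDf : (q / q.minFac) * (q.minFac - 1) = q - q / q.minFac := by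
    have h1 : q / q.minFac * q.minFac = q := Nat.div_mul_cancel hpq
    obtain ⟨p', hp'⟩ : ∃ p', q.minFac = p' + 1 := ⟨q.minFac - 1, by omega⟩
    rw [hp'] at h1 ⊢
    have h2 : q / (p' + 1) * (p' + 1) = q / (p' + 1) * p' + q / (p' + 1) := by ring
    simp only [Nat.add_sub_cancel]
    omega
  have hGq : (q ^ k' - 1) / (q - 1) = Gq q k' := (gq_eq hq k').symm
  refine ⟨?_, ?_, ?_, ?_⟩
  · intro w hw
    rw [← gq_eq hq]
    exact simplex_length (by omega) _ w hw
  · rw [← coe_fsimplex, Set.ncard_coe_finset, card_fsimplex hq]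
  · refine ⟨simplexWord q ((q / q.minFac : ℕ) : ZMod q) (List.replicate (Gq q k') 0),
      ⟨List.replicate (Gq q k') 0, zero_mem (by omega) k', _, rfl⟩, ?_, ?_⟩
    · rw [wt_witness hq]
      omega
    · rw [wt_witness hq]
      simp only [Nat.add_sub_cancel]
      rw [hGq, hDf]
  · rintro m ⟨w, hw, hne, rfl⟩
    simp only [Nat.add_sub_cancel]
    rw [hGq, hDf]
    exact wt_lb hq k' w hw hne
end

section
/- For every integer q ≥ 2, the weight distribution {A_i} of the Z_q-Simplex code S_2(q) of dimension 2 is: A_0 = 1; A_q = q·φ(q) + q − 1; A_{q − q/d + 1} = d·φ(d) for every divisor d of q with d ≠ 1 and d ≠ q; and A_{q+1} = q(q − 1) − Σ_{d | q, d ≠ 1} d·φ(d), where φ is Euler's totient function. -/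
/-! ### Auxiliary development -/

open Finset

namespace SimplexAux

theorem lmapflat {α β : Type} (l : List α) (g : α → β) : (l.flatMap fun i => [g i]) = l.map g := by
  rw [← List.flatMap_map (g := fun x => [x]), List.flatMap_singleton']

theorem sw_pair (q : ℕ) (α β : ZMod q) : simplexWord q α [β] =
    β :: α :: (List.range (q-1)).map (fun i => β + ((i + 1 : ℕ) : ZMod q) * α) := by
  simp [simplexWord, lmapflat]

theorem wt_sw (q : ℕ) (hq : 1 ≤ q) (α β : ZMod q) : wt (simplexWord q α [β]) =
    (if α = 0 then 0 else 1) + (List.range q).countP (fun i => decide (β + (i:ℕ) * α ≠ 0)) := by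
  obtain ⟨n, rfl⟩ : ∃ n, q = n + 1 := ⟨q-1, by omega⟩
  rw [sw_pair, wt]
  have h1 : List.countP (fun x => decide (x ≠ 0))
        ((List.range n).map (fun i => β + ((i+1:ℕ) : ZMod (n+1)) * α)) =
      List.countP (fun i => decide (β + (i:ℕ) * α ≠ 0)) ((List.range n).map Nat.succ) := by
    rw [List.countP_map, List.countP_map]
    apply List.countP_congr
    intro i _
    simp [Function.comp, Nat.succ_eq_add_one]
  simp only [Nat.add_sub_cancel]
  rw [List.range_succ_eq_map, List.countP_cons, List.countP_cons, List.countP_cons, ← h1]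
  simp only [Nat.cast_zero, zero_mul, add_zero]
  by_cases hα : α = 0 <;> by_cases hβ : β = 0 <;> simp [hα, hβ] <;> omega

theorem countP_range_filter (n : ℕ) (p : ℕ → Prop) [DecidablePred p] :
    ((Finset.range n).filter p).card = (List.range n).countP (fun i => decide (p i)) := by
  rw [Finset.card_filter, List.countP_eq_length_filter]
  induction n with
  | zero => simp
  | succ m ih =>
      rw [Finset.sum_range_succ, List.range_succ, List.filter_append, ih]
      by_cases h : p m <;> simp [h]

theorem range_to_univ (q : ℕ) [NeZero q] (P : ZMod q → Prop) [DecidablePred P] :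
    ((Finset.range q).filter (fun i : ℕ => P (i : ZMod q))).card = (Finset.univ.filter P).card := by
  apply Finset.card_bij' (fun (i : ℕ) _ => ((i : ZMod q))) (fun (x : ZMod q) _ => x.val)
  · intro a ha; simp_all [Finset.mem_filter]
  · intro a ha; simp_all [Finset.mem_filter, ZMod.val_lt]
  · intro a ha; simp_all [Finset.mem_filter, ZMod.val_cast_of_lt, Nat.mod_eq_of_lt]
  · intro a ha; simp_all [Finset.mem_filter, ZMod.natCast_val, ZMod.cast_id]

variable {q : ℕ} [NeZero q]

/-- The image of multiplication by `α`. -/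
def Im (α : ZMod q) : Finset (ZMod q) := Finset.univ.image (fun x => x * α)

theorem Im_card (α : ZMod q) : (Im α).card = addOrderOf α := by
  have h1 : (↑(Im α) : Set (ZMod q)) = ↑(AddSubgroup.zmultiples α) := by
    ext c
    simp only [Im, Finset.coe_image, Finset.coe_univ, Set.image_univ, Set.mem_range,
      Finset.mem_coe, Finset.mem_image, SetLike.mem_coe, AddSubgroup.mem_zmultiples_iff]
    constructor
    · rintro ⟨x, rfl⟩
      refine ⟨(x.val : ℤ), ?_⟩
      rw [zsmul_eq_mul]
      push_cast
      rw [ZMod.natCast_val, ZMod.cast_id]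
    · rintro ⟨n, rfl⟩
      exact ⟨(n : ZMod q), (zsmul_eq_mul α n).symm⟩
  have h2 : Nat.card (↑(Im α) : Set (ZMod q)) = Nat.card (AddSubgroup.zmultiples α) := by
    rw [h1]; rfl
  rw [← Nat.card_zmultiples α, ← h2]
  simp [Nat.card_eq_fintype_card, Fintype.card_coe]

theorem zero_mem_Im (α : ZMod q) : 0 ∈ Im α :=
  Finset.mem_image.2 ⟨0, Finset.mem_univ _, zero_mul α⟩

theorem neg_mem_Im {α c : ZMod q} (hc : c ∈ Im α) : -c ∈ Im α := by
  obtain ⟨x, -, rfl⟩ := Finset.mem_image.1 hc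
  exact Finset.mem_image.2 ⟨-x, Finset.mem_univ _, by ring⟩

/-- Fiber of multiplication by `α` over `c`. -/
def fib (α c : ZMod q) : Finset (ZMod q) := Finset.univ.filter (fun x => x * α = c)

theorem fib_card_congr (α : ZMod q) {c c' : ZMod q} (hc : c ∈ Im α) (hc' : c' ∈ Im α) :
    (fib α c).card = (fib α c').card := by
  obtain ⟨x₀, -, rfl⟩ := Finset.mem_image.1 hc
  obtain ⟨x₁, -, rfl⟩ := Finset.mem_image.1 hc'
  apply Finset.card_bij' (fun x _ => x + (x₁ - x₀)) (fun x _ => x + (x₀ - x₁))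
  · intro a ha
    simp only [fib, Finset.mem_filter, Finset.mem_univ, true_and] at *
    rw [add_mul, sub_mul, ha]; ring
  · intro a ha
    simp only [fib, Finset.mem_filter, Finset.mem_univ, true_and] at *
    rw [add_mul, sub_mul, ha]; ring
  · intro a _; ring
  · intro a _; ring

theorem sum_fib (α : ZMod q) : ∑ c ∈ Im α, (fib α c).card = q := by
  simp only [fib]
  rw [← Finset.card_eq_sum_card_fiberwise (f := fun x => x * α) (s := Finset.univ) (t := Im α)
    (fun x _ => Finset.mem_image_of_mem _ (Finset.mem_univ x))]
  simp [ZMod.card]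

theorem fib_card (α : ZMod q) {c : ZMod q} (hc : c ∈ Im α) :
    (fib α c).card = q / addOrderOf α := by
  have h := sum_fib α
  rw [Finset.sum_congr rfl (fun c' hc' => fib_card_congr α hc' hc), Finset.sum_const,
    smul_eq_mul, Im_card] at h
  have hpos : 0 < addOrderOf α := addOrderOf_pos α
  exact (Nat.div_eq_of_eq_mul_left hpos (by conv_lhs => rw [← h, Nat.mul_comm])).symm

theorem fib_card' (α : ZMod q) {c : ZMod q} (hc : c ∈ Im α) :
    addOrderOf α * (fib α c).card = q := by
  have h := sum_fib α
  rw [Finset.sum_congr rfl (fun c' hc' => fib_card_congr α hc' hc), Finset.sum_const,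
    smul_eq_mul, Im_card] at h
  exact h

theorem fib_empty (α : ZMod q) {c : ZMod q} (hc : c ∉ Im α) : fib α c = ∅ := by
  ext x
  simp only [fib, Finset.mem_filter, Finset.mem_univ, true_and, Finset.notMem_empty, iff_false]
  intro h
  exact hc (h ▸ Finset.mem_image_of_mem _ (Finset.mem_univ x))

theorem addOrderOf_dvd (α : ZMod q) : addOrderOf α ∣ q := by
  have := addOrderOf_dvd_card (x := α); simpa [ZMod.card] using this

theorem wt_formula (hq : 2 ≤ q) (α β : ZMod q) :
    wt (simplexWord q α [β]) = (if addOrderOf α = 1 then 0 else 1) +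
      (q - (if β ∈ Im α then q / addOrderOf α else 0)) := by
  rw [wt_sw q (by omega) α β]
  congr 1
  · simp [AddMonoid.addOrderOf_eq_one_iff]
  · rw [← countP_range_filter q (fun i : ℕ => β + (i : ZMod q) * α ≠ 0),
      range_to_univ q (fun x => β + x * α ≠ 0)]
    have hsplit := Finset.card_filter_add_card_filter_not
      (s := (Finset.univ : Finset (ZMod q))) (p := fun x => β + x * α = 0)
    have hcu : (Finset.univ : Finset (ZMod q)).card = q := by simp [ZMod.card]
    have hFib : Finset.univ.filter (fun x : ZMod q => β + x * α = 0) = fib α (-β) := by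
      ext x
      simp only [fib, Finset.mem_filter, Finset.mem_univ, true_and]
      constructor
      · intro h; linear_combination h
      · intro h; linear_combination h
    have hne : (Finset.univ.filter (fun x : ZMod q => ¬ β + x * α = 0)) =
        Finset.univ.filter (fun x : ZMod q => β + x * α ≠ 0) := rfl
    rw [hne, hFib] at hsplit
    by_cases hβ : β ∈ Im α
    · have h1 : (fib α (-β)).card = q / addOrderOf α := fib_card α (neg_mem_Im hβ)
      rw [if_pos hβ]
      omega
    · have h1 : (fib α (-β)).card = 0 := by
        rw [fib_empty α (fun h => hβ (by simpa using neg_mem_Im h))]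
        simp
      rw [if_neg hβ]
      omega

/-- count of `β` giving weight `t`, as a function of `d = addOrderOf α`. -/
def H (q t d : ℕ) : ℕ :=
  (if (if d = 1 then 0 else 1) + (q - q / d) = t then d else 0) +
  (if (if d = 1 then 0 else 1) + q = t then q - d else 0)

theorem inner_count (hq : 2 ≤ q) (α : ZMod q) (t : ℕ) :
    (Finset.univ.filter (fun β : ZMod q => wt (simplexWord q α [β]) = t)).card
      = H q t (addOrderOf α) := by
  set d := addOrderOf α with hd
  have hdvd : d ∣ q := addOrderOf_dvd α
  have hdpos : 0 < d := addOrderOf_pos α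
  have hqpos : 0 < q := by omega
  have hdle : d ≤ q := Nat.le_of_dvd hqpos hdvd
  have hqd1 : 1 ≤ q / d := Nat.one_le_div_iff hdpos |>.2 hdle
  have hqdle : q / d ≤ q := Nat.div_le_self q d
  have hwt : ∀ β : ZMod q, wt (simplexWord q α [β]) =
      if β ∈ Im α then (if d = 1 then 0 else 1) + (q - q / d)
      else (if d = 1 then 0 else 1) + q := by
    intro β
    rw [wt_formula hq α β, ← hd]
    by_cases hβ : β ∈ Im α
    · rw [if_pos hβ, if_pos hβ]
    · rw [if_neg hβ, if_neg hβ, Nat.sub_zero]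
  have hcu : (Finset.univ : Finset (ZMod q)).card = q := by simp [ZMod.card]
  set c₁ := if d = 1 then 0 else 1 with hc₁
  have hImcard : (Im α).card = d := Im_card α
  by_cases h1 : c₁ + (q - q / d) = t <;> by_cases h2 : c₁ + q = t
  · omega
  · have : Finset.univ.filter (fun β : ZMod q => wt (simplexWord q α [β]) = t) = Im α := by
      ext β
      by_cases hβ : β ∈ Im α <;> simp [hwt, hβ, h1, h2]
    rw [this, hImcard, H, if_pos h1, if_neg h2]
    omega
  · have : Finset.univ.filter (fun β : ZMod q => wt (simplexWord q α [β]) = t) = (Im α)ᶜ := by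
      ext β
      by_cases hβ : β ∈ Im α <;> simp [hwt, hβ, h1, h2]
    rw [this, Finset.card_compl, hImcard, H, if_neg h1, if_pos h2, ZMod.card]
    omega
  · have : Finset.univ.filter (fun β : ZMod q => wt (simplexWord q α [β]) = t) = ∅ := by
      ext β
      by_cases hβ : β ∈ Im α <;> simp [hwt, hβ, h1, h2]
    rw [this, H, if_neg h1, if_neg h2]
    simp

set_option linter.unusedSectionVars false



theorem count_pairs (hq : 2 ≤ q) (t : ℕ) :
    (Finset.univ.filter (fun p : ZMod q × ZMod q => wt (simplexWord q p.2 [p.1]) = t)).card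
      = ∑ d ∈ q.divisors, Nat.totient d * H q t d := by
  have hqpos : q ≠ 0 := by omega
  have step1 : (Finset.univ.filter
      (fun p : ZMod q × ZMod q => wt (simplexWord q p.2 [p.1]) = t)).card
      = ∑ α : ZMod q, H q t (addOrderOf α) := by
    rw [Finset.card_filter, Fintype.sum_prod_type_right]
    refine Finset.sum_congr rfl fun α _ => ?_
    rw [← inner_count hq α t, Finset.card_filter]
  rw [step1]
  have hmaps : ∀ α : ZMod q, α ∈ (Finset.univ : Finset (ZMod q)) → addOrderOf α ∈ q.divisors :=
    fun α _ => Nat.mem_divisors.2 ⟨addOrderOf_dvd α, hqpos⟩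
  rw [← Finset.sum_fiberwise_of_maps_to hmaps (fun α => H q t (addOrderOf α))]
  refine Finset.sum_congr rfl fun d hd => ?_
  have hcard : (Finset.univ.filter (fun α : ZMod q => addOrderOf α = d)).card
      = Nat.totient d := by
    apply IsAddCyclic.card_addOrderOf_eq_totient
    rw [ZMod.card]
    exact (Nat.mem_divisors.1 hd).1
  calc ∑ α ∈ Finset.univ.filter (fun α : ZMod q => addOrderOf α = d), H q t (addOrderOf α)
      = ∑ _α ∈ Finset.univ.filter (fun α : ZMod q => addOrderOf α = d), H q t d := by
        refine Finset.sum_congr rfl fun α hα => ?_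
        rw [(Finset.mem_filter.1 hα).2]
    _ = Nat.totient d * H q t d := by rw [Finset.sum_const, smul_eq_mul, hcard]

theorem sw_injective :
    Function.Injective (fun p : ZMod q × ZMod q => simplexWord q p.2 [p.1]) := by
  rintro ⟨β, α⟩ ⟨β', α'⟩ h
  simp only [sw_pair, List.cons.injEq] at h
  exact Prod.ext h.1 h.2.1

theorem simplex_one : simplex q 1 = {w | ∃ β : ZMod q, w = [β]} := by
  ext w
  simp only [simplex, Set.mem_setOf_eq, Set.mem_singleton_iff]
  constructor
  · rintro ⟨c, rfl, α, rfl⟩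
    exact ⟨α, by simp [simplexWord]⟩
  · rintro ⟨β, rfl⟩
    exact ⟨[], rfl, β, by simp [simplexWord]⟩

theorem simplex_two : simplex q 2 =
    Set.range (fun p : ZMod q × ZMod q => simplexWord q p.2 [p.1]) := by
  have h2 : simplex q 2 = {w | ∃ c ∈ simplex q 1, ∃ α : ZMod q, w = simplexWord q α c} := rfl
  rw [h2, simplex_one]
  ext w
  simp only [Set.mem_setOf_eq, Set.mem_range]
  constructor
  · rintro ⟨c, ⟨β, rfl⟩, α, rfl⟩
    exact ⟨(β, α), rfl⟩
  · rintro ⟨⟨β, α⟩, rfl⟩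
    exact ⟨[β], ⟨β, rfl⟩, α, rfl⟩

theorem ncard_eq_card (hq : 2 ≤ q) (t : ℕ) :
    ({w ∈ simplex q 2 | wt w = t}).ncard
      = ∑ d ∈ q.divisors, Nat.totient d * H q t d := by
  rw [← count_pairs hq t]
  have himg : {w ∈ simplex q 2 | wt w = t}
      = (fun p : ZMod q × ZMod q => simplexWord q p.2 [p.1]) ''
        {p : ZMod q × ZMod q | wt (simplexWord q p.2 [p.1]) = t} := by
    ext w
    simp only [simplex_two, Set.mem_setOf_eq, Set.mem_range, Set.mem_image, Set.mem_sep_iff]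
    constructor
    · rintro ⟨⟨p, rfl⟩, hwt⟩
      exact ⟨p, hwt, rfl⟩
    · rintro ⟨p, hwt, rfl⟩
      exact ⟨⟨p, rfl⟩, hwt⟩
  rw [himg, Set.ncard_image_of_injective _ sw_injective]
  have hset : {p : ZMod q × ZMod q | wt (simplexWord q p.2 [p.1]) = t}
      = ↑(Finset.univ.filter (fun p : ZMod q × ZMod q => wt (simplexWord q p.2 [p.1]) = t)) := by
    ext p; simp
  rw [hset, Set.ncard_coe_finset]


end SimplexAux

open SimplexAux in

/-- The weight distribution of the `ZMod q`-Simplex code of dimension 2: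
`A_0 = 1`, `A_q = q·φ(q) + q − 1`, `A_{q − q/d + 1} = d·φ(d)` for every divisor
`d` of `q` with `d ≠ 1, d ≠ q`, and `A_{q+1} = q(q − 1) − Σ_{d ∣ q, d ≠ 1} d·φ(d)`. -/
theorem simplex_two_weight_distribution (q : ℕ) (hq : 2 ≤ q) :
    ({w ∈ simplex q 2 | wt w = 0}).ncard = 1 ∧
    ({w ∈ simplex q 2 | wt w = q}).ncard = q * Nat.totient q + q - 1 ∧
    (∀ d : ℕ, d ∣ q → d ≠ 1 → d ≠ q →
      ({w ∈ simplex q 2 | wt w = q - q / d + 1}).ncard = d * Nat.totient d) ∧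
    ({w ∈ simplex q 2 | wt w = q + 1}).ncard =
      q * (q - 1) - ∑ d ∈ q.divisors.filter (fun d => d ≠ 1), d * Nat.totient d := by
  haveI : NeZero q := ⟨by omega⟩
  have hq0 : q ≠ 0 := by omega
  have hdivfacts : ∀ d ∈ q.divisors, d ∣ q ∧ 1 ≤ d ∧ d ≤ q ∧ 1 ≤ q / d ∧ q / d ≤ q ∧
      q / (q / d) = d := by
    intro d hd
    obtain ⟨hdvd, -⟩ := Nat.mem_divisors.1 hd
    have h1 : 1 ≤ d := Nat.pos_of_dvd_of_pos hdvd (by omega)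
    have h2 : d ≤ q := Nat.le_of_dvd (by omega) hdvd
    have h3 : 1 ≤ q / d := (Nat.one_le_div_iff h1).2 h2
    exact ⟨hdvd, h1, h2, h3, Nat.div_le_self q d, Nat.div_div_self hdvd hq0⟩
  have hsplit : ∀ t : ℕ, ({w ∈ simplex q 2 | wt w = t}).ncard =
      (∑ d ∈ q.divisors, Nat.totient d *
        (if (if d = 1 then 0 else 1) + (q - q / d) = t then d else 0)) +
      (∑ d ∈ q.divisors, Nat.totient d *
        (if (if d = 1 then 0 else 1) + q = t then q - d else 0)) := by
    intro t
    rw [ncard_eq_card hq t, ← Finset.sum_add_distrib]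
    exact Finset.sum_congr rfl fun d _ => by simp only [H, Nat.mul_add]
  refine ⟨?_, ?_, ?_, ?_⟩
  · -- t = 0
    rw [hsplit 0]
    have hS1 : (∑ d ∈ q.divisors, Nat.totient d *
        (if (if d = 1 then 0 else 1) + (q - q / d) = 0 then d else 0)) = 1 := by
      rw [Finset.sum_eq_single_of_mem 1 (Nat.one_mem_divisors.2 hq0)]
      · simp
      · intro b hb hb1
        rw [if_neg hb1, if_neg (show ¬(1 + (q - q / b) = 0) by omega), Nat.mul_zero]
    have hS2 : (∑ d ∈ q.divisors, Nat.totient d *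
        (if (if d = 1 then 0 else 1) + q = 0 then q - d else 0)) = 0 := by
      apply Finset.sum_eq_zero
      intro d _
      by_cases hd1 : d = 1
      · rw [if_pos hd1, if_neg (show ¬((0:ℕ) + q = 0) by omega), Nat.mul_zero]
      · rw [if_neg hd1, if_neg (show ¬((1:ℕ) + q = 0) by omega), Nat.mul_zero]
    rw [hS1, hS2]
  · -- t = q
    rw [hsplit q]
    have hS1 : (∑ d ∈ q.divisors, Nat.totient d *
        (if (if d = 1 then 0 else 1) + (q - q / d) = q then d else 0)) = Nat.totient q * q := by
      rw [Finset.sum_eq_single_of_mem q (Nat.mem_divisors.2 ⟨dvd_refl q, hq0⟩)]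
      · rw [if_neg (show ¬(q = 1) by omega), Nat.div_self (show 0 < q by omega),
          if_pos (show 1 + (q - 1) = q by omega)]
      · intro b hb hbq
        obtain ⟨hdvd, h1, h2, h3, h4, h5⟩ := hdivfacts b hb
        by_cases hb1 : b = 1
        · rw [if_pos hb1, hb1, Nat.div_one, if_neg (show ¬(0 + (q - q) = q) by omega),
            Nat.mul_zero]
        · have hne : q / b ≠ 1 := by
            intro hcon
            rw [hcon, Nat.div_one] at h5
            exact hbq h5.symm
          rw [if_neg hb1, if_neg (show ¬(1 + (q - q / b) = q) by omega), Nat.mul_zero]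
    have hS2 : (∑ d ∈ q.divisors, Nat.totient d *
        (if (if d = 1 then 0 else 1) + q = q then q - d else 0)) = q - 1 := by
      rw [Finset.sum_eq_single_of_mem 1 (Nat.one_mem_divisors.2 hq0)]
      · simp
      · intro b hb hb1
        rw [if_neg hb1, if_neg (show ¬((1:ℕ) + q = q) by omega), Nat.mul_zero]
    rw [hS1, hS2, Nat.mul_comm]
    omega
  · -- t = q - q/d₀ + 1
    intro d₀ hdvd₀ hne1 hneq
    have hmem₀ : d₀ ∈ q.divisors := Nat.mem_divisors.2 ⟨hdvd₀, hq0⟩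
    obtain ⟨-, hd1, hd2, hk1, hk2, hk5⟩ := hdivfacts d₀ hmem₀
    have hk₀ : q / d₀ ≠ 1 := by
      intro hcon
      rw [hcon, Nat.div_one] at hk5
      exact hneq hk5.symm
    rw [hsplit (q - q / d₀ + 1)]
    have hS1 : (∑ d ∈ q.divisors, Nat.totient d *
        (if (if d = 1 then 0 else 1) + (q - q / d) = q - q / d₀ + 1 then d else 0))
        = Nat.totient d₀ * d₀ := by
      rw [Finset.sum_eq_single_of_mem d₀ hmem₀]
      · rw [if_neg hne1, if_pos (show 1 + (q - q / d₀) = q - q / d₀ + 1 by omega)]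
      · intro b hb hbd₀
        obtain ⟨hdvd, h1, h2, h3, h4, h5⟩ := hdivfacts b hb
        by_cases hb1 : b = 1
        · rw [if_pos hb1, hb1, Nat.div_one,
            if_neg (show ¬(0 + (q - q) = q - q / d₀ + 1) by omega), Nat.mul_zero]
        · have hne : q / b ≠ q / d₀ := by
            intro hcon
            apply hbd₀
            rw [← h5, hcon, hk5]
          rw [if_neg hb1,
            if_neg (show ¬(1 + (q - q / b) = q - q / d₀ + 1) by omega), Nat.mul_zero]
    have hS2 : (∑ d ∈ q.divisors, Nat.totient d *
        (if (if d = 1 then 0 else 1) + q = q - q / d₀ + 1 then q - d else 0)) = 0 := by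
      apply Finset.sum_eq_zero
      intro d _
      by_cases hd1' : d = 1
      · rw [if_pos hd1', if_neg (show ¬(0 + q = q - q / d₀ + 1) by omega), Nat.mul_zero]
      · rw [if_neg hd1', if_neg (show ¬(1 + q = q - q / d₀ + 1) by omega), Nat.mul_zero]
    rw [hS1, hS2, Nat.mul_comm, Nat.add_zero]
  · -- t = q + 1
    rw [hsplit (q + 1)]
    have hS1 : (∑ d ∈ q.divisors, Nat.totient d *
        (if (if d = 1 then 0 else 1) + (q - q / d) = q + 1 then d else 0)) = 0 := by
      apply Finset.sum_eq_zero
      intro d hd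
      obtain ⟨hdvd, h1, h2, h3, h4, h5⟩ := hdivfacts d hd
      by_cases hd1 : d = 1
      · rw [if_pos hd1, hd1, Nat.div_one, if_neg (show ¬(0 + (q - q) = q + 1) by omega),
          Nat.mul_zero]
      · rw [if_neg hd1, if_neg (show ¬(1 + (q - q / d) = q + 1) by omega), Nat.mul_zero]
    have hstep : (∑ d ∈ q.divisors, Nat.totient d *
        (if (if d = 1 then 0 else 1) + q = q + 1 then q - d else 0))
        = ∑ d ∈ q.divisors.filter (fun d => d ≠ 1), Nat.totient d * (q - d) := by
      rw [Finset.sum_filter]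
      refine Finset.sum_congr rfl fun d _ => ?_
      by_cases hd1 : d = 1
      · rw [if_pos hd1, if_neg (show ¬((0:ℕ) + q = q + 1) by omega),
          if_neg (show ¬(d ≠ 1) from not_not_intro hd1), Nat.mul_zero]
      · rw [if_neg hd1, if_pos (show (1:ℕ) + q = q + 1 by omega), if_pos hd1]
    have htot : (∑ d ∈ q.divisors.filter (fun d => d ≠ 1), Nat.totient d) = q - 1 := by
      have h2 : (∑ x ∈ q.divisors, Nat.totient x) = q := Nat.sum_totient q
      rw [Finset.filter_ne']
      have h1 := Finset.add_sum_erase q.divisors Nat.totient (Nat.one_mem_divisors.2 hq0)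
      rw [Nat.totient_one, h2] at h1
      omega
    have hS2 : (∑ d ∈ q.divisors.filter (fun d => d ≠ 1), Nat.totient d * (q - d))
        = q * (q - 1) - ∑ d ∈ q.divisors.filter (fun d => d ≠ 1), d * Nat.totient d := by
      have hle : ∀ d ∈ q.divisors.filter (fun d => d ≠ 1),
          Nat.totient d * d ≤ Nat.totient d * q := by
        intro d hd
        obtain ⟨hdvd, h1, h2, -⟩ := hdivfacts d (Finset.mem_filter.1 hd).1
        exact Nat.mul_le_mul_left _ h2
      calc (∑ d ∈ q.divisors.filter (fun d => d ≠ 1), Nat.totient d * (q - d))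
          = ∑ d ∈ q.divisors.filter (fun d => d ≠ 1),
              (Nat.totient d * q - Nat.totient d * d) :=
            Finset.sum_congr rfl fun d _ => Nat.mul_sub _ _ _
        _ = (∑ d ∈ q.divisors.filter (fun d => d ≠ 1), Nat.totient d * q) -
              ∑ d ∈ q.divisors.filter (fun d => d ≠ 1), Nat.totient d * d :=
            Finset.sum_tsub_distrib _ hle
        _ = q * (q - 1) - ∑ d ∈ q.divisors.filter (fun d => d ≠ 1), d * Nat.totient d := by
            rw [← Finset.sum_mul, htot, Nat.mul_comm]
            congr 1
            exact Finset.sum_congr rfl fun d _ => Nat.mul_comm _ _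
    rw [hS1, hstep, hS2, Nat.zero_add]
end

section
/- The weight distribution {A_i} of the Z_4-Simplex code S_3(4) of dimension 3 is: A_0 = 1, A_11 = 4, A_12 = 2, A_16 = 43, A_17 = 8, A_19 = 4, A_20 = 2, and A_i = 0 for all other i. -/
def f3 (p : ZMod 4 × ZMod 4 × ZMod 4) : List (ZMod 4) :=
  simplexWord 4 p.2.2 (simplexWord 4 p.2.1 (simplexWord 4 p.1 []))

def F3 : Finset (List (ZMod 4)) := Finset.image f3 Finset.univ

lemma simplex43_eq : simplex 4 3 = ↑F3 := by
  ext w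
  simp only [F3, Finset.coe_image, Finset.coe_univ, Set.image_univ, Set.mem_range]
  constructor
  · rintro ⟨c2, ⟨c1, ⟨c0, hc0, α, rfl⟩, β, rfl⟩, γ, rfl⟩
    obtain rfl : c0 = [] := hc0
    exact ⟨(α, β, γ), rfl⟩
  · rintro ⟨⟨α, β, γ⟩, rfl⟩
    exact ⟨_, ⟨_, ⟨[], rfl, α, rfl⟩, β, rfl⟩, γ, rfl⟩

lemma wts : ∀ w ∈ F3, wt w = 0 ∨ wt w = 11 ∨ wt w = 12 ∨ wt w = 16 ∨ wt w = 17 ∨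
    wt w = 19 ∨ wt w = 20 := by decide

/-- The weight distribution of the `ZMod 4`-Simplex code of dimension 3:
`A_0 = 1, A_11 = 4, A_12 = 2, A_16 = 43, A_17 = 8, A_19 = 4, A_20 = 2`,
and `A_i = 0` for all other `i`. -/
theorem simplex_four_three_weight_distribution :
    ∀ i : ℕ, ({w ∈ simplex 4 3 | wt w = i}).ncard =
      if i = 0 then 1 else if i = 11 then 4 else if i = 12 then 2 else if i = 16 then 43
      else if i = 17 then 8 else if i = 19 then 4 else if i = 20 then 2 else 0 := by
  intro i
  have hset : {w ∈ simplex 4 3 | wt w = i} = ↑(F3.filter (fun w => wt w = i)) := by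
    ext w
    simp [simplex43_eq, Set.mem_setOf_eq]
  rw [hset, Set.ncard_coe_finset]
  by_cases h0 : i = 0
  · subst h0; decide
  by_cases h11 : i = 11
  · subst h11; simp only [h0]; decide
  by_cases h12 : i = 12
  · subst h12; simp only []; decide
  by_cases h16 : i = 16
  · subst h16; decide
  by_cases h17 : i = 17
  · subst h17; decide
  by_cases h19 : i = 19
  · subst h19; decide
  by_cases h20 : i = 20
  · subst h20; decide
  simp only [h0, h11, h12, h16, h17, h19, h20, if_false]
  rw [Finset.card_eq_zero, Finset.filter_eq_empty_iff]
  intro w hw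
  rcases wts w hw with h | h | h | h | h | h | h <;> omega
end

section
/- For every integer q ≥ 2, the minimum Hamming distance of the Z_q-MacDonald code M_{3,2}(q) equals 2 + (q − q/d − 1)(q + 1), where d > 1 is the smallest divisor of q; in particular M_{3,2}(q) is a [q^2, 3, 2 + (q − q/d − 1)(q + 1)] Z_q-linear code. -/
set_option linter.unusedSectionVars false
namespace MacProof

open Finset

variable {q : ℕ}

def E {q : ℕ} (z : ZMod q) : ℕ := if z = 0 then 0 else 1

lemma list_sum_range (n : ℕ) (f : ℕ → ℕ) :
    ((List.range n).map f).sum = ∑ j ∈ Finset.range n, f j := by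
  induction n with
  | zero => simp
  | succ n ih =>
      rw [List.range_succ, Finset.sum_range_succ, List.map_append, List.sum_append, ih]
      simp

lemma wt_cons (x : ZMod q) (l : List (ZMod q)) :
    wt (x :: l) = E x + wt l := by
  simp only [wt, List.countP_cons, E]
  by_cases h : x = 0 <;> simp [h, Nat.add_comm]

lemma wt_flatMap (f : ℕ → List (ZMod q)) (n : ℕ) :
    wt ((List.range n).flatMap f) = ∑ i ∈ Finset.range n, wt (f i) := by
  rw [wt, List.countP_flatMap, ← list_sum_range]
  rfl

lemma wt_singleton (z : ZMod q) : wt [z] = E z := by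
  simp only [wt, E, List.countP_cons, List.countP_nil]
  by_cases h : z = 0 <;> simp [h]

lemma wt_map_simplexWord (β γ z : ZMod q) :
    wt ((simplexWord q β [γ]).map (fun x => x + z)) =
      E (γ + z) + E (β + z) + ∑ i ∈ Finset.range (q-1), E (γ + ((i+1:ℕ) : ZMod q) * β + z) := by
  have : (simplexWord q β [γ]).map (fun x => x + z)
      = (γ + z) :: (β + z) ::
        (List.range (q-1)).flatMap (fun i => [γ + ((i+1:ℕ) : ZMod q) * β + z]) := by
    simp [simplexWord, List.map_flatMap]
  rw [this, wt_cons, wt_cons, wt_flatMap]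
  simp only [wt_singleton]
  ring

lemma wt_macWord_raw (α β γ : ZMod q) :
    wt (macWord q α (simplexWord q β [γ])) =
      E α + ∑ j ∈ Finset.range (q-1),
        (E (γ + ((j+1:ℕ) : ZMod q) * α) + E (β + ((j+1:ℕ) : ZMod q) * α)
          + ∑ i ∈ Finset.range (q-1), E (γ + ((i+1:ℕ) : ZMod q) * β + ((j+1:ℕ) : ZMod q) * α)) := by
  rw [macWord, wt_cons, wt_flatMap]
  simp only [wt_map_simplexWord]

lemma sum_reindex [NeZero q] (F : ZMod q → ℕ) :
    ∑ j ∈ Finset.range (q-1), F ((j+1 : ℕ) : ZMod q)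
      = ∑ x ∈ Finset.univ.erase (0 : ZMod q), F x := by
  have hq1 : 1 ≤ q := Nat.one_le_iff_ne_zero.mpr (NeZero.ne q)
  apply Finset.sum_nbij' (i := fun j => ((j+1 : ℕ) : ZMod q)) (j := fun x => x.val - 1)
  · intro a ha
    rw [Finset.mem_range] at ha
    have hlt : a + 1 < q := by omega
    refine Finset.mem_erase.mpr ⟨?_, Finset.mem_univ _⟩
    intro h
    have := ZMod.val_cast_of_lt hlt
    rw [h, ZMod.val_zero] at this
    omega
  · intro x hx
    rw [Finset.mem_erase] at hx
    have h1 : x.val < q := ZMod.val_lt x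
    have h2 : x.val ≠ 0 := fun h => hx.1 ((ZMod.val_eq_zero x).mp h)
    rw [Finset.mem_range]
    omega
  · intro a ha
    rw [Finset.mem_range] at ha
    rw [ZMod.val_cast_of_lt (by omega : a + 1 < q)]
    omega
  · intro x hx
    rw [Finset.mem_erase] at hx
    have h2 : x.val ≠ 0 := fun h => hx.1 ((ZMod.val_eq_zero x).mp h)
    have : x.val - 1 + 1 = x.val := by omega
    rw [this, ZMod.natCast_val, ZMod.cast_id]
  · intro a _
    rfl

lemma wt_formula [NeZero q] (α β γ : ZMod q) :
    wt (macWord q α (simplexWord q β [γ])) =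
      E α + ∑ x ∈ Finset.univ.erase (0 : ZMod q), E (β + x * α)
          + ∑ x ∈ Finset.univ.erase (0 : ZMod q), ∑ y : ZMod q, E (γ + y * β + x * α) := by
  rw [wt_macWord_raw]
  rw [sum_reindex (F := fun x => (E (γ + x * α) + E (β + x * α)
      + ∑ i ∈ Finset.range (q-1), E (γ + ((i+1:ℕ) : ZMod q) * β + x * α)))]
  have hy : ∀ x : ZMod q,
      ∑ i ∈ Finset.range (q-1), E (γ + ((i+1:ℕ) : ZMod q) * β + x * α)
        = ∑ y ∈ Finset.univ.erase (0 : ZMod q), E (γ + y * β + x * α) := by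
    intro x
    exact sum_reindex (F := fun y => E (γ + y * β + x * α))
  have hins : ∀ x : ZMod q,
      E (γ + x * α) + ∑ y ∈ Finset.univ.erase (0 : ZMod q), E (γ + y * β + x * α)
        = ∑ y : ZMod q, E (γ + y * β + x * α) := by
    intro x
    have := Finset.add_sum_erase Finset.univ (fun y : ZMod q => E (γ + y * β + x * α))
      (Finset.mem_univ 0)
    simpa using this
  have step : ∀ x ∈ Finset.univ.erase (0 : ZMod q),
      (E (γ + x * α) + E (β + x * α)
        + ∑ i ∈ Finset.range (q-1), E (γ + ((i+1:ℕ) : ZMod q) * β + x * α))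
      = E (β + x * α) + ∑ y : ZMod q, E (γ + y * β + x * α) := by
    intro x _
    rw [hy x, ← hins x]
    ring
  rw [Finset.sum_congr rfl step, Finset.sum_add_distrib, ← add_assoc]


section Counting

variable {G : Type*} [AddCommGroup G] [Fintype G] [DecidableEq G]
variable {H : Type*} [AddCommGroup H] [DecidableEq H]

lemma fiber_card (φ : G → H) (hφ : ∀ a b, φ (a + b) = φ a + φ b) (x₀ : G) :
    (Finset.univ.filter (fun x => φ x = φ x₀)).card
      = (Finset.univ.filter (fun x => φ x = 0)).card := by
  apply Finset.card_bij' (i := fun x _ => x - x₀) (j := fun x _ => x + x₀)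
  · intro a ha
    rw [Finset.mem_filter] at ha ⊢
    refine ⟨Finset.mem_univ _, ?_⟩
    have h1 : φ (a - x₀ + x₀) = φ (a - x₀) + φ x₀ := hφ _ _
    rw [sub_add_cancel, ha.2] at h1
    exact right_eq_add.mp h1
  · intro a ha
    rw [Finset.mem_filter] at ha ⊢
    refine ⟨Finset.mem_univ _, ?_⟩
    rw [hφ, ha.2, zero_add]
  · intro a _
    exact sub_add_cancel a x₀
  · intro a _
    exact add_sub_cancel_right a x₀

lemma fiber_card_not_mem (φ : G → H) (b : H) (hb : b ∉ Finset.univ.image φ) :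
    (Finset.univ.filter (fun x => φ x = b)).card = 0 := by
  rw [Finset.card_eq_zero, Finset.filter_eq_empty_iff]
  intro x _
  intro h
  exact hb (Finset.mem_image.mpr ⟨x, Finset.mem_univ x, h⟩)

lemma fiber_card_le (φ : G → H) (hφ : ∀ a b, φ (a + b) = φ a + φ b) (b : H) :
    (Finset.univ.filter (fun x => φ x = b)).card
      ≤ (Finset.univ.filter (fun x => φ x = 0)).card := by
  by_cases hb : b ∈ Finset.univ.image φ
  · obtain ⟨x₀, _, rfl⟩ := Finset.mem_image.mp hb
    exact (fiber_card φ hφ x₀).le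
  · rw [fiber_card_not_mem φ b hb]
    exact Nat.zero_le _

lemma ker_mul_image_card (φ : G → H) (hφ : ∀ a b, φ (a + b) = φ a + φ b) :
    (Finset.univ.filter (fun x => φ x = 0)).card * (Finset.univ.image φ).card
      = Fintype.card G := by
  classical
  have h1 : (Finset.univ : Finset G).card
      = ∑ b ∈ Finset.univ.image φ, (Finset.univ.filter (fun x => φ x = b)).card :=
    Finset.card_eq_sum_card_fiberwise (fun x _ => Finset.mem_image_of_mem φ (Finset.mem_univ x))
  have h2 : ∀ b ∈ Finset.univ.image φ,
      (Finset.univ.filter (fun x => φ x = b)).card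
        = (Finset.univ.filter (fun x => φ x = 0)).card := by
    intro b hb
    obtain ⟨x₀, _, rfl⟩ := Finset.mem_image.mp hb
    exact fiber_card φ hφ x₀
  rw [← Finset.card_univ, h1, Finset.sum_congr rfl h2, Finset.sum_const, smul_eq_mul, mul_comm]

end Counting

lemma card_split_prod {A B : Type*} [DecidableEq A] [DecidableEq B] (s : Finset A) (t : Finset B)
    (a : A) (ha : a ∉ s) (C : A × B → Prop) [DecidablePred C] :
    (((insert a s) ×ˢ t).filter C).card
      = (t.filter (fun y => C (a, y))).card + ((s ×ˢ t).filter C).card := by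
  rw [Finset.card_filter, Finset.card_filter, Finset.card_filter, Finset.sum_product,
    Finset.sum_insert ha, Finset.sum_product]

/-- kernel-image facts for `x ↦ x * α` -/
lemma mul_ker_facts [NeZero q] (hq : 2 ≤ q) {m : ℕ} (hm : q.minFac * m = q)
    (α : ZMod q) (hα : α ≠ 0) :
    q.minFac ≤ (Finset.univ.image (fun x : ZMod q => x * α)).card ∧
    (Finset.univ.filter (fun x : ZMod q => x * α = 0)).card ≤ m ∧
    (Finset.univ.filter (fun x : ZMod q => x * α = 0)).card
      * (Finset.univ.image (fun x : ZMod q => x * α)).card = q := by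
  have hd2 : 2 ≤ q.minFac := (Nat.minFac_prime (by omega)).two_le
  have hmul : ∀ a b : ZMod q, (a + b) * α = a * α + b * α := fun a b => add_mul a b α
  have hKA : (Finset.univ.filter (fun x : ZMod q => x * α = 0)).card
      * (Finset.univ.image (fun x : ZMod q => x * α)).card = q := by
    rw [ker_mul_image_card _ hmul, ZMod.card]
  have hA2 : 2 ≤ (Finset.univ.image (fun x : ZMod q => x * α)).card := by
    rw [Nat.succ_le_iff]
    rw [Finset.one_lt_card]
    refine ⟨0, ?_, α, ?_, hα.symm⟩
    · exact Finset.mem_image.mpr ⟨0, Finset.mem_univ _, zero_mul α⟩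
    · exact Finset.mem_image.mpr ⟨1, Finset.mem_univ _, one_mul α⟩
  have hAdvd : (Finset.univ.image (fun x : ZMod q => x * α)).card ∣ q :=
    Dvd.intro_left _ hKA
  have hdA : q.minFac ≤ (Finset.univ.image (fun x : ZMod q => x * α)).card :=
    Nat.minFac_le_of_dvd hA2 hAdvd
  refine ⟨hdA, ?_, hKA⟩
  have h1 : (Finset.univ.filter (fun x : ZMod q => x * α = 0)).card * q.minFac
      ≤ (Finset.univ.filter (fun x : ZMod q => x * α = 0)).card
        * (Finset.univ.image (fun x : ZMod q => x * α)).card :=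
    Nat.mul_le_mul_left _ hdA
  rw [hKA] at h1
  have h2 : (Finset.univ.filter (fun x : ZMod q => x * α = 0)).card * q.minFac
      ≤ m * q.minFac := by
    calc (Finset.univ.filter (fun x : ZMod q => x * α = 0)).card * q.minFac ≤ q := h1
      _ = m * q.minFac := by rw [mul_comm]; exact hm.symm
  exact Nat.le_of_mul_le_mul_right h2 (by omega)

lemma central [NeZero q] (hq : 2 ≤ q) {m : ℕ} (hm : q.minFac * m = q)
    (α β γ : ZMod q) (hne : ¬(α = 0 ∧ β = 0 ∧ γ = 0)) :
    ((Finset.univ.erase (0:ZMod q)).filter (fun x => β + x * α = 0)).card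
    + (((Finset.univ.erase (0:ZMod q)) ×ˢ (Finset.univ : Finset (ZMod q))).filter
        (fun p => γ + p.2 * β + p.1 * α = 0)).card
    + 2 ≤ E α + q * m + m := by
  have hd2 : 2 ≤ q.minFac := (Nat.minFac_prime (by omega)).two_le
  have hm1 : 1 ≤ m := by
    rcases Nat.eq_zero_or_pos m with h | h
    · subst h; simp at hm; omega
    · exact h
  have hmq : m < q := by nlinarith
  have hqm_comm : q * m = m * q := mul_comm q m
  have hcard_erase : (Finset.univ.erase (0:ZMod q)).card = q - 1 := by
    rw [Finset.card_erase_of_mem (Finset.mem_univ _), Finset.card_univ, ZMod.card]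
  by_cases hα : α = 0
  · subst hα
    simp only [mul_zero, add_zero]
    have hE : E (0 : ZMod q) = 0 := by simp [E]
    rw [hE]
    by_cases hβ : β = 0
    · subst hβ
      have hγ : γ ≠ 0 := by tauto
      have h1 : ((Finset.univ.erase (0:ZMod q)).filter (fun _ => (0:ZMod q) = 0)).card = q - 1 := by
        rw [Finset.filter_true_of_mem (fun _ _ => rfl), hcard_erase]
      have h2 : (((Finset.univ.erase (0:ZMod q)) ×ˢ (Finset.univ : Finset (ZMod q))).filter
          (fun p => γ + p.2 * 0 = 0)).card = 0 := by
        rw [Finset.card_eq_zero, Finset.filter_eq_empty_iff]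
        intro p _
        simp [hγ]
      rw [h1, h2]
      have : q ≤ q * m := Nat.le_mul_of_pos_right q (by omega)
      omega
    · have h1 : ((Finset.univ.erase (0:ZMod q)).filter (fun _ => β = 0)).card = 0 := by
        rw [Finset.card_eq_zero, Finset.filter_eq_empty_iff]
        intro p _
        exact hβ
      rw [h1]
      have hsplit : (((Finset.univ.erase (0:ZMod q)) ×ˢ (Finset.univ : Finset (ZMod q))).filter
          (fun p => γ + p.2 * β = 0))
          = (Finset.univ.erase (0:ZMod q)) ×ˢ (Finset.univ.filter (fun y : ZMod q => γ + y * β = 0)) := by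
        ext p
        simp only [Finset.mem_filter, Finset.mem_product]
        tauto
      rw [hsplit, Finset.card_product, hcard_erase]
      -- bound the y-fiber by m
      have hmulβ : ∀ a b : ZMod q, (a + b) * β = a * β + b * β := fun a b => add_mul a b β
      obtain ⟨hdB, hKBm, hKB⟩ := mul_ker_facts hq hm β hβ
      have hfil : Finset.univ.filter (fun y : ZMod q => γ + y * β = 0)
          = Finset.univ.filter (fun y : ZMod q => y * β = -γ) := by
        apply Finset.filter_congr
        intro y _
        constructor
        · intro h; linear_combination h
        · intro h; linear_combination h
      have hZy : (Finset.univ.filter (fun y : ZMod q => γ + y * β = 0)).card ≤ m := by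
        rw [hfil]
        exact le_trans (fiber_card_le _ hmulβ (-γ)) hKBm
      have e1 : (q - 1) * m + m = q * m := by
        have hq1 : q - 1 + 1 = q := by omega
        calc (q-1) * m + m = (q-1+1) * m := by ring
          _ = q * m := by rw [hq1]
      have e2 : (q - 1) * (Finset.univ.filter (fun y : ZMod q => γ + y * β = 0)).card
          ≤ (q - 1) * m := Nat.mul_le_mul_left _ hZy
      linarith
  · -- α ≠ 0
    have hE : E α = 1 := by simp [E, hα]
    rw [hE]
    have hmulα : ∀ a b : ZMod q, (a + b) * α = a * α + b * α := fun a b => add_mul a b α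
    obtain ⟨hdA, hK1m, hKA⟩ := mul_ker_facts hq hm α hα
    -- Z1 bound
    have hZ1 : ((Finset.univ.erase (0:ZMod q)).filter (fun x => β + x * α = 0)).card
        ≤ (Finset.univ.filter (fun x : ZMod q => x * α = -β)).card := by
      apply Finset.card_le_card
      intro x hx
      rw [Finset.mem_filter] at hx ⊢
      refine ⟨Finset.mem_univ _, ?_⟩
      have := hx.2
      linear_combination this
    have hZ1K : ((Finset.univ.erase (0:ZMod q)).filter (fun x => β + x * α = 0)).card
        ≤ (Finset.univ.filter (fun x : ZMod q => x * α = 0)).card :=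
      le_trans hZ1 (fiber_card_le _ hmulα (-β))
    -- φ₂ setup
    have hmul2 : ∀ a b : ZMod q × ZMod q,
        (a.1 + b.1) * α + (a.2 + b.2) * β = (a.1 * α + a.2 * β) + (b.1 * α + b.2 * β) := by
      intro a b; ring
    have hmul2' : ∀ a b : ZMod q × ZMod q,
        (fun p : ZMod q × ZMod q => p.1 * α + p.2 * β) (a + b)
          = (fun p : ZMod q × ZMod q => p.1 * α + p.2 * β) a
            + (fun p : ZMod q × ZMod q => p.1 * α + p.2 * β) b := fun a b => hmul2 a b
    have hK2A2 : (Finset.univ.filter (fun p : ZMod q × ZMod q => p.1 * α + p.2 * β = 0)).card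
        * (Finset.univ.image (fun p : ZMod q × ZMod q => p.1 * α + p.2 * β)).card = q * q := by
      rw [ker_mul_image_card _ hmul2', Fintype.card_prod, ZMod.card]
    have hA1A2 : (Finset.univ.image (fun x : ZMod q => x * α)).card
        ≤ (Finset.univ.image (fun p : ZMod q × ZMod q => p.1 * α + p.2 * β)).card := by
      apply Finset.card_le_card
      intro z hz
      obtain ⟨x, _, rfl⟩ := Finset.mem_image.mp hz
      exact Finset.mem_image.mpr ⟨(x, 0), Finset.mem_univ _, by simp⟩
    have hdA2 : q.minFac ≤ (Finset.univ.image (fun p : ZMod q × ZMod q => p.1 * α + p.2 * β)).card :=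
      le_trans hdA hA1A2
    have hK2 : (Finset.univ.filter (fun p : ZMod q × ZMod q => p.1 * α + p.2 * β = 0)).card ≤ m * q := by
      have h1 : (Finset.univ.filter (fun p : ZMod q × ZMod q => p.1 * α + p.2 * β = 0)).card * q.minFac
          ≤ (Finset.univ.filter (fun p : ZMod q × ZMod q => p.1 * α + p.2 * β = 0)).card
            * (Finset.univ.image (fun p : ZMod q × ZMod q => p.1 * α + p.2 * β)).card :=
        Nat.mul_le_mul_left _ hdA2
      rw [hK2A2] at h1
      have h2 : (m * q) * q.minFac = q * q := by
        calc (m * q) * q.minFac = (q.minFac * m) * q := by ring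
          _ = q * q := by rw [hm]
      have h3 : (Finset.univ.filter (fun p : ZMod q × ZMod q => p.1 * α + p.2 * β = 0)).card
          * q.minFac ≤ (m * q) * q.minFac := by rw [h2]; exact h1
      exact Nat.le_of_mul_le_mul_right h3 (by omega)
    -- full fiber decomposition
    have hconv : (Finset.univ : Finset (ZMod q × ZMod q)).filter
        (fun p => γ + p.2 * β + p.1 * α = 0)
        = (Finset.univ : Finset (ZMod q × ZMod q)).filter
        (fun p => p.1 * α + p.2 * β = -γ) := by
      apply Finset.filter_congr
      intro p _
      constructor
      · intro h; linear_combination h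
      · intro h; linear_combination h
    have hsplit : ((Finset.univ : Finset (ZMod q × ZMod q)).filter
        (fun p => γ + p.2 * β + p.1 * α = 0)).card
        = (Finset.univ.filter (fun y : ZMod q => γ + y * β + (0:ZMod q) * α = 0)).card
          + (((Finset.univ.erase (0:ZMod q)) ×ˢ (Finset.univ : Finset (ZMod q))).filter
              (fun p => γ + p.2 * β + p.1 * α = 0)).card := by
      have h0 : (Finset.univ : Finset (ZMod q × ZMod q)) =
          (insert (0:ZMod q) (Finset.univ.erase 0)) ×ˢ (Finset.univ : Finset (ZMod q)) := by
        rw [Finset.insert_erase (Finset.mem_univ _), Finset.univ_product_univ]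
      rw [h0, card_split_prod _ _ _ (Finset.notMem_erase _ _)]
    have hfull_le : ((Finset.univ : Finset (ZMod q × ZMod q)).filter
        (fun p => γ + p.2 * β + p.1 * α = 0)).card
        ≤ (Finset.univ.filter (fun p : ZMod q × ZMod q => p.1 * α + p.2 * β = 0)).card := by
      rw [hconv]
      exact fiber_card_le _ hmul2' (-γ)
    by_cases hA1 : (Finset.univ.image (fun x : ZMod q => x * α)).card = q.minFac
    case neg =>
      -- d < A1, so K1 < m
      have hdlt : q.minFac < (Finset.univ.image (fun x : ZMod q => x * α)).card := by omega
      have hK1lt : (Finset.univ.filter (fun x : ZMod q => x * α = 0)).card < m := by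
        by_contra h
        push_neg at h
        have h1 : m * (Finset.univ.image (fun x : ZMod q => x * α)).card
            ≤ (Finset.univ.filter (fun x : ZMod q => x * α = 0)).card
              * (Finset.univ.image (fun x : ZMod q => x * α)).card :=
          Nat.mul_le_mul_right _ h
        have h2 : m * q.minFac < m * (Finset.univ.image (fun x : ZMod q => x * α)).card :=
          mul_lt_mul_of_pos_left hdlt (by omega)
        rw [hKA] at h1
        have h3 : m * q.minFac = q := by rw [mul_comm]; exact hm
        linarith
      linarith [hsplit, hfull_le, hK2, hZ1K,
        Nat.zero_le ((Finset.univ.filter (fun y : ZMod q => γ + y * β + (0:ZMod q) * α = 0)).card)]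
    case pos =>
      by_cases hβ : β = 0
      · -- Z1 = K1 - 1, K1 = m
        have hK1 : (Finset.univ.filter (fun x : ZMod q => x * α = 0)).card = m := by
          rw [hA1] at hKA
          have : m * q.minFac = q := by rw [mul_comm]; exact hm
          have := hKA.trans this.symm
          exact Nat.eq_of_mul_eq_mul_right (by omega) this
        subst hβ
        have hZ1eq : ((Finset.univ.erase (0:ZMod q)).filter (fun x => (0:ZMod q) + x * α = 0)).card
            = (Finset.univ.filter (fun x : ZMod q => x * α = 0)).card - 1 := by
          have hc : ∀ x : ZMod q, ((0:ZMod q) + x * α = 0) ↔ (x * α = 0) := by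
            intro x; rw [zero_add]
          rw [Finset.filter_congr (fun x _ => hc x), Finset.filter_erase,
            Finset.card_erase_of_mem]
          exact Finset.mem_filter.mpr ⟨Finset.mem_univ _, zero_mul α⟩
        rw [hZ1eq, hK1]
        have hsub : m - 1 + 1 = m := by omega
        linarith [hsplit, hfull_le, hK2, hsub,
          Nat.zero_le ((Finset.univ.filter (fun y : ZMod q => γ + y * (0:ZMod q) + (0:ZMod q) * α = 0)).card)]
      · by_cases hγim : (-γ) ∈ Finset.univ.image (fun p : ZMod q × ZMod q => p.1 * α + p.2 * β)
        · -- tight case: show Zy ≥ 1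
          -- -γ ∈ image φ₂ ⊆ image φ₁ = image φβ  (need β ∈ image φ₁ first)
          by_cases hβim : (-β) ∈ Finset.univ.image (fun x : ZMod q => x * α)
          · obtain ⟨x₀, _, hx₀⟩ := Finset.mem_image.mp hβim
            have hβα : β = (-x₀) * α := by linear_combination hx₀
            have hsub2 : Finset.univ.image (fun p : ZMod q × ZMod q => p.1 * α + p.2 * β)
                ⊆ Finset.univ.image (fun x : ZMod q => x * α) := by
              intro z hz
              obtain ⟨p, _, rfl⟩ := Finset.mem_image.mp hz
              refine Finset.mem_image.mpr ⟨p.1 + p.2 * (-x₀), Finset.mem_univ _, ?_⟩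
              rw [hβα]; ring
            have hsubβ : Finset.univ.image (fun y : ZMod q => y * β)
                ⊆ Finset.univ.image (fun x : ZMod q => x * α) := by
              intro z hz
              obtain ⟨y, _, rfl⟩ := Finset.mem_image.mp hz
              refine Finset.mem_image.mpr ⟨y * (-x₀), Finset.mem_univ _, ?_⟩
              rw [hβα]; ring
            obtain ⟨hdB, hKBm, hKB⟩ := mul_ker_facts hq hm β hβ
            have hBeq : Finset.univ.image (fun y : ZMod q => y * β)
                = Finset.univ.image (fun x : ZMod q => x * α) := by
              apply Finset.eq_of_subset_of_card_le hsubβ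
              rw [hA1]
              exact hdB
            have hγB : (-γ) ∈ Finset.univ.image (fun y : ZMod q => y * β) := by
              rw [hBeq]
              exact hsub2 hγim
            obtain ⟨y₀, _, hy₀⟩ := Finset.mem_image.mp hγB
            have hZy1 : 1 ≤ (Finset.univ.filter
                (fun y : ZMod q => γ + y * β + (0:ZMod q) * α = 0)).card := by
              rw [Nat.succ_le_iff, Finset.card_pos]
              exact ⟨y₀, Finset.mem_filter.mpr ⟨Finset.mem_univ _, by linear_combination hy₀⟩⟩
            linarith [hsplit, hfull_le, hK2, hZ1K, hK1m]
          · -- -β not in image φ₁ : Z1 = 0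
            have hZ10 : ((Finset.univ.erase (0:ZMod q)).filter (fun x => β + x * α = 0)).card = 0 :=
              Nat.le_zero.mp (le_trans hZ1 (le_of_eq (fiber_card_not_mem (fun x : ZMod q => x * α) (-β) hβim)))
            rw [hZ10]
            linarith [hsplit, hfull_le, hK2,
              Nat.zero_le ((Finset.univ.filter (fun y : ZMod q => γ + y * β + (0:ZMod q) * α = 0)).card)]
        · -- full fiber empty
          have hfull0 : ((Finset.univ : Finset (ZMod q × ZMod q)).filter
              (fun p => γ + p.2 * β + p.1 * α = 0)).card = 0 := by
            rw [hconv]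
            exact fiber_card_not_mem _ _ hγim
          have hz2 : (((Finset.univ.erase (0:ZMod q)) ×ˢ (Finset.univ : Finset (ZMod q))).filter
              (fun p => γ + p.2 * β + p.1 * α = 0)).card = 0 := by
            rw [hfull0] at hsplit
            omega
          rw [hz2]
          have : 1 ≤ q * m := by nlinarith
          linarith [hZ1K, hK1m]



lemma sum_E_add {A : Type*} (s : Finset A) (f : A → ZMod q) [DecidableEq (ZMod q)] :
    (s.filter (fun x => f x = 0)).card + ∑ x ∈ s, E (f x) = s.card := by
  rw [Finset.card_filter, ← Finset.sum_add_distrib]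
  have h : ∀ x ∈ s, (if f x = 0 then 1 else 0) + E (f x) = 1 := by
    intro x _
    by_cases h : f x = 0 <;> simp [E, h]
  rw [Finset.sum_congr rfl h, Finset.sum_const, smul_eq_mul, mul_one]

lemma count_dvd [NeZero q] {d M : ℕ} (hd : 0 < d) (hM : d * M = q) :
    (Finset.univ.filter (fun x : ZMod q => x * ((M : ℕ) : ZMod q) = 0)).card = M := by
  have hq0 : 0 < q := Nat.pos_of_ne_zero (NeZero.ne q)
  have hM0 : 0 < M := by
    rcases Nat.eq_zero_or_pos M with h | h
    · subst h; omega
    · exact h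
  have hnat : ∀ v : ℕ, (q ∣ v * M) ↔ d ∣ v := by
    intro v
    rw [← hM]
    exact Nat.mul_dvd_mul_iff_right hM0
  have key : ∀ x : ZMod q, (x * ((M : ℕ) : ZMod q) = 0) ↔ d ∣ x.val := by
    intro x
    have hx : x * ((M : ℕ) : ZMod q) = ((x.val * M : ℕ) : ZMod q) := by
      rw [Nat.cast_mul, ZMod.natCast_val, ZMod.cast_id]
    rw [hx, ZMod.natCast_eq_zero_iff]
    exact hnat x.val
  suffices h : (Finset.univ.filter (fun x : ZMod q => x * ((M : ℕ) : ZMod q) = 0)).card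
      = (Finset.range M).card by
    rw [h, Finset.card_range]
  apply Finset.card_bij' (i := fun x _ => x.val / d) (j := fun j _ => ((j * d : ℕ) : ZMod q))
  · intro x hx
    rw [Finset.mem_filter] at hx
    have hdvd : d ∣ x.val := (key x).mp hx.2
    have hlt : x.val < q := ZMod.val_lt x
    rw [Finset.mem_range]
    rw [Nat.div_lt_iff_lt_mul hd]
    calc x.val < q := hlt
      _ = M * d := by rw [← hM]; ring
  · intro j hj
    rw [Finset.mem_range] at hj
    have hlt : j * d < q := by
      calc j * d < M * d := by exact Nat.mul_lt_mul_of_lt_of_le hj (le_refl d) hd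
        _ = q := by rw [← hM]; ring
    rw [Finset.mem_filter]
    refine ⟨Finset.mem_univ _, ?_⟩
    rw [key, ZMod.val_cast_of_lt hlt]
    exact Dvd.intro j (mul_comm d j)
  · intro x hx
    rw [Finset.mem_filter] at hx
    have hdvd : d ∣ x.val := (key x).mp hx.2
    rw [Nat.div_mul_cancel hdvd, ZMod.natCast_val, ZMod.cast_id]
  · intro j hj
    rw [Finset.mem_range] at hj
    have hlt : j * d < q := by
      calc j * d < M * d := by exact Nat.mul_lt_mul_of_lt_of_le hj (le_refl d) hd
        _ = q := by rw [← hM]; ring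
    rw [ZMod.val_cast_of_lt hlt]
    exact Nat.mul_div_cancel j hd

lemma wt_min_word [NeZero q] (hq : 2 ≤ q) {m : ℕ} (hm : q.minFac * m = q) :
    wt (macWord q ((m : ℕ) : ZMod q) (simplexWord q 0 [-((m : ℕ) : ZMod q)]))
      = 2 + (q - m - 1) * (q + 1) := by
  have hd2 : 2 ≤ q.minFac := (Nat.minFac_prime (by omega)).two_le
  have hm1 : 1 ≤ m := by
    rcases Nat.eq_zero_or_pos m with h | h
    · subst h; simp at hm; omega
    · exact h
  have hmq : m < q := by nlinarith
  set α₀ : ZMod q := ((m : ℕ) : ZMod q) with hα₀def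
  have hα₀ : α₀ ≠ 0 := by
    intro h
    rw [hα₀def, ZMod.natCast_eq_zero_iff] at h
    have := Nat.le_of_dvd (by omega) h
    omega
  have hK : (Finset.univ.filter (fun x : ZMod q => x * α₀ = 0)).card = m :=
    count_dvd (by omega : 0 < q.minFac) hm
  rw [wt_formula]
  -- E α₀ = 1
  have hE : E α₀ = 1 := by simp [E, hα₀]
  -- first sum
  have hf1 : (Finset.univ.erase (0:ZMod q)).filter (fun x => (0:ZMod q) + x * α₀ = 0)
      = ((Finset.univ.filter (fun x : ZMod q => x * α₀ = 0))).erase 0 := by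
    rw [← Finset.filter_erase]
    apply Finset.filter_congr
    intro x _
    rw [zero_add]
  have hc1 : ((Finset.univ.erase (0:ZMod q)).filter (fun x => (0:ZMod q) + x * α₀ = 0)).card
      = m - 1 := by
    rw [hf1, Finset.card_erase_of_mem, hK]
    exact Finset.mem_filter.mpr ⟨Finset.mem_univ _, zero_mul _⟩
  have hs1 := sum_E_add (Finset.univ.erase (0:ZMod q)) (fun x => (0:ZMod q) + x * α₀)
  rw [hc1] at hs1
  have hcard_erase : (Finset.univ.erase (0:ZMod q)).card = q - 1 := by
    rw [Finset.card_erase_of_mem (Finset.mem_univ _), Finset.card_univ, ZMod.card]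
  rw [hcard_erase] at hs1
  -- second sum : inner sum constant in y
  have hinner : ∀ x : ZMod q, ∑ y : ZMod q, E (-α₀ + y * 0 + x * α₀) = q * E (-α₀ + x * α₀) := by
    intro x
    have : ∀ y : ZMod q, E (-α₀ + y * 0 + x * α₀) = E (-α₀ + x * α₀) := by
      intro y; rw [mul_zero, add_zero]
    rw [Finset.sum_congr rfl (fun y _ => this y), Finset.sum_const, smul_eq_mul,
      Finset.card_univ, ZMod.card]
  have hfib : (Finset.univ.filter (fun x : ZMod q => x * α₀ = α₀)).card = m := by
    have hmul : ∀ a b : ZMod q, (a + b) * α₀ = a * α₀ + b * α₀ := fun a b => add_mul a b α₀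
    have h1 := fiber_card (fun x : ZMod q => x * α₀) hmul 1
    rw [one_mul] at h1
    rw [h1, hK]
  have hf2 : (Finset.univ.erase (0:ZMod q)).filter (fun x => -α₀ + x * α₀ = 0)
      = Finset.univ.filter (fun x : ZMod q => x * α₀ = α₀) := by
    have hcong : (Finset.univ.erase (0:ZMod q)).filter (fun x => -α₀ + x * α₀ = 0)
        = (Finset.univ.erase (0:ZMod q)).filter (fun x => x * α₀ = α₀) := by
      apply Finset.filter_congr
      intro x _
      constructor
      · intro h; linear_combination h
      · intro h; linear_combination h
    have hnotmem : (0:ZMod q) ∉ Finset.univ.filter (fun x : ZMod q => x * α₀ = α₀) := by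
      intro hmem
      rw [Finset.mem_filter, zero_mul] at hmem
      exact hα₀ hmem.2.symm
    rw [hcong, Finset.filter_erase, Finset.erase_eq_of_notMem hnotmem]
  have hc2 : ((Finset.univ.erase (0:ZMod q)).filter (fun x => -α₀ + x * α₀ = 0)).card = m := by
    rw [hf2, hfib]
  have hs2 := sum_E_add (Finset.univ.erase (0:ZMod q)) (fun x => -α₀ + x * α₀)
  rw [hc2, hcard_erase] at hs2
  -- assemble
  rw [Finset.sum_congr rfl (fun x _ => hinner x), ← Finset.mul_sum, hE]
  have e1 : ∑ x ∈ Finset.univ.erase (0:ZMod q), E ((0:ZMod q) + x * α₀) = q - m := by omega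
  have e2 : ∑ x ∈ Finset.univ.erase (0:ZMod q), E (-α₀ + x * α₀) = q - 1 - m := by omega
  rw [e1, e2]
  have hsplitmul : q * (q - 1 - m) = (q - m - 1) * q := by
    rw [mul_comm]
    congr 1
    omega
  rw [hsplitmul]
  have hmulsucc : (q - m - 1) * (q + 1) = (q - m - 1) * q + (q - m - 1) := by
    rw [Nat.mul_succ]
  rw [hmulsucc]
  generalize (q - m - 1) * q = X
  omega


lemma simplexWord_nil (γ : ZMod q) : simplexWord q γ [] = [γ] := by
  simp [simplexWord]

lemma mac3_eq : macdonald q 3 = Set.range (fun t : ZMod q × ZMod q × ZMod q =>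
    macWord q t.1 (simplexWord q t.2.1 [t.2.2])) := by
  ext w
  constructor
  · rintro ⟨α, c, ⟨c1, ⟨c0, hc0, γ, rfl⟩, β, rfl⟩, rfl⟩
    obtain rfl : c0 = [] := hc0
    exact ⟨(α, β, γ), by simp [simplexWord_nil]⟩
  · rintro ⟨⟨α, β, γ⟩, rfl⟩
    exact ⟨α, simplexWord q β [γ], ⟨[γ], ⟨[], rfl, γ, (simplexWord_nil γ).symm⟩, β, rfl⟩, rfl⟩

lemma norm_word (hq : 2 ≤ q) (a b c : ZMod q) :
    ∃ L, macWord q a (simplexWord q b [c]) =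
      a :: (c + ((0 + 1 : ℕ) : ZMod q) * a) :: (b + ((0 + 1 : ℕ) : ZMod q) * a) :: L := by
  have h2 : q - 1 = (q-2) + 1 := by omega
  refine ⟨((List.range (q-1)).flatMap (fun i => [c + ((i+1:ℕ):ZMod q) * b + ((0+1:ℕ):ZMod q) * a]))
      ++ ((List.range (q-2)).map Nat.succ).flatMap
          (fun i => (simplexWord q b [c]).map (fun x => x + ((i+1:ℕ):ZMod q) * a)), ?_⟩
  rw [macWord, h2, List.range_succ_eq_map, List.flatMap_cons]
  simp only [simplexWord, List.cons_append, List.nil_append, List.map_cons, List.map_flatMap,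
    List.map_map, List.map_nil, Function.comp]
  rw [h2, List.range_succ_eq_map]

lemma param_inj (hq : 2 ≤ q) :
    Function.Injective (fun t : ZMod q × ZMod q × ZMod q =>
      macWord q t.1 (simplexWord q t.2.1 [t.2.2])) := by
  rintro ⟨a, b, c⟩ ⟨a', b', c'⟩ h
  simp only at h
  obtain ⟨L, hL⟩ := norm_word hq a b c
  obtain ⟨L', hL'⟩ := norm_word hq a' b' c'
  rw [hL, hL'] at h
  simp only [List.cons.injEq] at h
  obtain ⟨h1, h2, h3, -⟩ := h
  subst h1
  have hc : c = c' := add_right_cancel h2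
  have hb : b = b' := add_right_cancel h3
  rw [hb, hc]

lemma length_simplexWord_param (b c : ZMod q) :
    (simplexWord q b [c]).length = 2 + (q - 1) := by
  rw [simplexWord, List.length_append, List.length_cons, List.length_cons, List.length_flatMap,
    list_sum_range]
  have h : ∀ j ∈ Finset.range (q-1),
      (([c] : List (ZMod q)).map (fun x => x + ((j+1:ℕ):ZMod q) * b)).length
        = 1 := by
    intro j _
    simp
  rw [Finset.sum_congr rfl h, Finset.sum_const, smul_eq_mul, mul_one, Finset.card_range]
  simp
  omega

lemma length_param (hq : 2 ≤ q) (a b c : ZMod q) :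
    (macWord q a (simplexWord q b [c])).length = q ^ 2 := by
  rw [macWord, List.length_cons, List.length_flatMap, list_sum_range]
  have h : ∀ j ∈ Finset.range (q-1),
      ((simplexWord q b [c]).map (fun x => x + ((j+1:ℕ):ZMod q) * a)).length
        = q + 1 := by
    intro j _
    simp only [Function.comp, List.length_map, length_simplexWord_param]
    omega
  rw [Finset.sum_congr rfl h, Finset.sum_const, smul_eq_mul, Finset.card_range]
  obtain ⟨n, rfl⟩ : ∃ n, q = n + 2 := ⟨q - 2, by omega⟩
  have e : (n + 2 : ℕ) - 1 = n + 1 := by omega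
  rw [e]
  ring


end MacProof

/-- The `ZMod q`-MacDonald code `M_{3,2}(q)` is a
`[q², 3, 2 + (q − q/d − 1)(q + 1)]` `ZMod q`-linear code, where `d > 1` is the
smallest divisor of `q`; in particular its minimum Hamming distance equals
`2 + (q − q/d − 1)(q + 1)`. -/
theorem macdonald_three_two_params (q : ℕ) (hq : 2 ≤ q) :
    (∀ w ∈ macdonald q 3, w.length = q ^ 2) ∧
    (macdonald q 3).ncard = q ^ 3 ∧
    IsLeast {m | ∃ w ∈ macdonald q 3, wt w ≠ 0 ∧ wt w = m}
      (2 + (q - q / q.minFac - 1) * (q + 1)) := by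
  haveI : NeZero q := ⟨by omega⟩
  have hd2 : 2 ≤ q.minFac := (Nat.minFac_prime (by omega : q ≠ 1)).two_le
  obtain ⟨m, hmeq⟩ := Nat.minFac_dvd q
  have hm : q.minFac * m = q := hmeq.symm
  have hm1 : 1 ≤ m := by
    rcases Nat.eq_zero_or_pos m with h | h
    · subst h; simp at hm; omega
    · exact h
  have hmq : m < q := by nlinarith
  have hqd : q / q.minFac = m := by
    have h : ∀ d : ℕ, 0 < d → d * m = q → q / d = m := by
      intro d hd hdm
      rw [← hdm]
      exact Nat.mul_div_cancel_left m hd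
    exact h _ (by omega) hm
  rw [hqd]
  refine ⟨?_, ?_, ?_, ?_⟩
  · -- lengths
    intro w hw
    rw [MacProof.mac3_eq] at hw
    obtain ⟨⟨a, b, c⟩, rfl⟩ := hw
    exact MacProof.length_param hq a b c
  · -- cardinality
    rw [MacProof.mac3_eq, ← Set.image_univ,
      Set.ncard_image_of_injective _ (MacProof.param_inj hq), Set.ncard_univ,
      Nat.card_eq_fintype_card, Fintype.card_prod, Fintype.card_prod, ZMod.card]
    ring
  · -- the value is attained
    refine ⟨macWord q ((m : ℕ) : ZMod q) (simplexWord q 0 [-((m : ℕ) : ZMod q)]), ?_, ?_, ?_⟩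
    · rw [MacProof.mac3_eq]
      exact ⟨(((m : ℕ) : ZMod q), 0, -((m : ℕ) : ZMod q)), rfl⟩
    · rw [MacProof.wt_min_word hq hm]
      have : 0 < 2 + (q - m - 1) * (q + 1) := Nat.lt_of_lt_of_le (by norm_num) (Nat.le_add_right 2 _)
      omega
    · exact MacProof.wt_min_word hq hm
  · -- lower bound
    rintro v ⟨w, hw, hne0, rfl⟩
    rw [MacProof.mac3_eq] at hw
    obtain ⟨⟨α, β, γ⟩, rfl⟩ := hw
    simp only at hne0 ⊢
    have hform := MacProof.wt_formula (q := q) α β γ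
    have hnz : ¬(α = 0 ∧ β = 0 ∧ γ = 0) := by
      rintro ⟨rfl, rfl, rfl⟩
      apply hne0
      rw [hform]
      simp [MacProof.E]
    have hcent := MacProof.central hq hm α β γ hnz
    have hcard_erase : (Finset.univ.erase (0:ZMod q)).card = q - 1 := by
      rw [Finset.card_erase_of_mem (Finset.mem_univ _), Finset.card_univ, ZMod.card]
    have hT1 := MacProof.sum_E_add (Finset.univ.erase (0:ZMod q)) (fun x => β + x * α)
    rw [hcard_erase] at hT1
    have hprod : ∑ p ∈ (Finset.univ.erase (0:ZMod q)) ×ˢ (Finset.univ : Finset (ZMod q)),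
        MacProof.E (γ + p.2 * β + p.1 * α)
        = ∑ x ∈ Finset.univ.erase (0:ZMod q), ∑ y : ZMod q, MacProof.E (γ + y * β + x * α) :=
      Finset.sum_product _ _ _
    have hT2 := MacProof.sum_E_add
      ((Finset.univ.erase (0:ZMod q)) ×ˢ (Finset.univ : Finset (ZMod q)))
      (fun p => γ + p.2 * β + p.1 * α)
    rw [hprod, Finset.card_product, hcard_erase, Finset.card_univ, ZMod.card] at hT2
    rw [hform]
    -- arithmetic identities
    have i1 : (q-m-1) * (q+1) + m * (q+1) = (q-1) * (q+1) := by
      rw [← Nat.add_mul]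
      congr 1
      omega
    have i2 : (q-1) * (q+1) = (q-1) * q + (q-1) := by
      rw [Nat.mul_succ]
    have i3 : m * (q+1) = q * m + m := by ring
    linarith [hcent, hT1, hT2, i1, i2, i3]
end

section
/- Let q ≥ 2 and k ≥ 2 be integers and set n = (q^{k−1} − 1)/(q − 1). For every unit α of Z_q (i.e. gcd(α, q) = 1) and every c ∈ S_{k−1}(q), the codeword (α, c + α·𝟏, c + 2α·𝟏, …, c + (q−1)α·𝟏) of M_{k,k−1}(q) has Hamming weight 1 + (q − 2)·n + z(c), where z(c) is the number of zero coordinates of c. -/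
section Aux

variable {q : ℕ}

lemma aux_countP_compl {α : Type*} (p : α → Prop) [DecidablePred p] (l : List α) :
    l.countP (fun a => decide ¬ p a) + l.countP (fun a => decide (p a)) = l.length := by
  induction l with
  | nil => simp
  | cons a l ih =>
    have h2 := ih
    by_cases h : p a <;> simp [List.countP_cons, h] at h2 ⊢ <;> omega

lemma aux_range_count (hq : 2 ≤ q) (γ : ZMod q) (hγ : γ ≠ 0) :
    (List.range (q - 1)).countP (fun i => decide (((i + 1 : ℕ) : ZMod q) = γ)) = 1 := by
  haveI : NeZero q := ⟨by omega⟩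
  have hv : γ.val ≠ 0 := fun h => hγ ((ZMod.val_eq_zero γ).mp h)
  have hvlt : γ.val < q := ZMod.val_lt γ
  have hcongr : ∀ i ∈ List.range (q - 1),
      (decide (((i + 1 : ℕ) : ZMod q) = γ) = true) ↔ ((i == γ.val - 1) = true) := by
    intro i hi
    simp only [List.mem_range] at hi
    simp only [decide_eq_true_eq, beq_iff_eq]
    constructor
    · intro h
      have : ((i + 1 : ℕ) : ZMod q).val = γ.val := by rw [h]
      rw [ZMod.val_cast_of_lt (by omega)] at this
      omega
    · intro h
      have : i + 1 = γ.val := by omega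
      rw [this, ZMod.natCast_val, ZMod.cast_id]
  rw [List.countP_congr hcongr]
  have : (List.range (q - 1)).countP (· == γ.val - 1) = (List.range (q - 1)).count (γ.val - 1) := rfl
  rw [this, List.count_eq_one_of_mem List.nodup_range]
  simp only [List.mem_range]
  omega

lemma aux_shift_count (hq : 2 ≤ q) (α : ZMod q) (hα : IsUnit α) (x : ZMod q) :
    (List.range (q - 1)).countP (fun i => decide (x + ((i + 1 : ℕ) : ZMod q) * α ≠ 0)) =
      if x = 0 then q - 1 else q - 2 := by
  haveI : NeZero q := ⟨by omega⟩
  have hcompl := aux_countP_compl (fun i => x + ((i + 1 : ℕ) : ZMod q) * α = 0) (List.range (q - 1))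
  rw [List.length_range] at hcompl
  have hne : (List.range (q - 1)).countP (fun i => decide (x + ((i + 1 : ℕ) : ZMod q) * α ≠ 0)) =
      (List.range (q - 1)).countP (fun i => decide ¬ (x + ((i + 1 : ℕ) : ZMod q) * α = 0)) := by
    apply List.countP_congr; intro i _; simp
  rw [hne]
  by_cases hx : x = 0
  · subst hx
    have hz : (List.range (q - 1)).countP
        (fun i => decide ((0 : ZMod q) + ((i + 1 : ℕ) : ZMod q) * α = 0)) = 0 := by
      rw [List.countP_eq_zero]
      intro i hi
      simp only [List.mem_range] at hi
      simp only [decide_eq_true_eq, zero_add]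
      intro h
      have h2 : ((i + 1 : ℕ) : ZMod q) = 0 := by
        have := congrArg (· * α⁻¹) h
        simpa [mul_assoc, ZMod.mul_inv_of_unit α hα] using this
      have : ((i + 1 : ℕ) : ZMod q).val = 0 := by rw [h2]; simp
      rw [ZMod.val_cast_of_lt (by omega)] at this
      omega
    rw [if_pos rfl]
    omega
  · set γ : ZMod q := -x * α⁻¹ with hγdef
    have hγα : γ * α = -x := by
      rw [hγdef, mul_assoc, ZMod.inv_mul_of_unit α hα, mul_one]
    have hγ : γ ≠ 0 := by
      intro h
      apply hx
      have : -x = 0 := by rw [← hγα, h, zero_mul]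
      simpa using this
    have heq : (List.range (q - 1)).countP
        (fun i => decide (x + ((i + 1 : ℕ) : ZMod q) * α = 0)) =
        (List.range (q - 1)).countP (fun i => decide (((i + 1 : ℕ) : ZMod q) = γ)) := by
      apply List.countP_congr
      intro i _
      simp only [decide_eq_true_eq]
      constructor
      · intro h
        have h1 : ((i + 1 : ℕ) : ZMod q) * α = -x := by linear_combination h
        have := congrArg (· * α⁻¹) h1
        simpa [mul_assoc, ZMod.mul_inv_of_unit α hα, hγdef] using this
      · intro h
        rw [h, hγα]
        ring
    rw [heq, aux_range_count hq γ hγ] at hcompl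
    rw [if_neg hx]
    omega

lemma aux_sum_ite (l : List ℕ) (p : ℕ → Bool) :
    (l.map (fun i => if p i = true then 1 else 0)).sum = l.countP p := by
  induction l with
  | nil => simp
  | cons a l ih => simp [List.countP_cons, ih, Nat.add_comm]

lemma aux_sum_lemma (hq : 2 ≤ q) (α : ZMod q) (hα : IsUnit α) (c : List (ZMod q)) :
    ((List.range (q - 1)).map
      (fun i => c.countP (fun x => decide (x + ((i + 1 : ℕ) : ZMod q) * α ≠ 0)))).sum =
      (q - 2) * c.length + c.count 0 := by
  induction c with
  | nil => simp
  | cons x c ih =>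
    have hstep : ∀ i : ℕ,
        (x :: c).countP (fun y => decide (y + ((i + 1 : ℕ) : ZMod q) * α ≠ 0)) =
        c.countP (fun y => decide (y + ((i + 1 : ℕ) : ZMod q) * α ≠ 0)) +
          (if (decide (x + ((i + 1 : ℕ) : ZMod q) * α ≠ 0)) = true then 1 else 0) := by
      intro i; rw [List.countP_cons]
    simp only [hstep]
    rw [List.sum_map_add, ih, aux_sum_ite, aux_shift_count hq α hα x]
    rw [List.count_cons]
    by_cases hx : x = 0 <;> simp [hx] <;> ring_nf <;> omega

lemma aux_macWord_wt (hq : 2 ≤ q) (α : ZMod q) (hα : IsUnit α) (c : List (ZMod q)) :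
    wt (macWord q α c) = 1 + (q - 2) * c.length + c.count 0 := by
  haveI : Fact (1 < q) := ⟨by omega⟩
  have hα0 : α ≠ 0 := hα.ne_zero
  rw [wt, macWord, List.countP_cons, List.countP_flatMap]
  have hmap2 : (List.range (q - 1)).map
      ((List.countP fun x => decide (x ≠ 0)) ∘
        fun i => c.map fun x => x + ((i + 1 : ℕ) : ZMod q) * α) =
      (List.range (q - 1)).map
      (fun i => c.countP (fun x => decide (x + ((i + 1 : ℕ) : ZMod q) * α ≠ 0))) := by
    apply List.map_congr_left
    intro i _
    simp only [Function.comp_apply, List.countP_map]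
    apply List.countP_congr
    intro x _
    simp
  rw [hmap2, aux_sum_lemma hq α hα c]
  have hdec : (decide (α ≠ 0)) = true := by simp [hα0]
  rw [hdec, if_pos rfl]
  omega

lemma aux_simplex_length (hq : 2 ≤ q) :
    ∀ k (c : List (ZMod q)), c ∈ simplex q k → c.length = (q ^ k - 1) / (q - 1) := by
  intro k
  induction k with
  | zero => intro c hc; simp [simplex] at hc; simp [hc]
  | succ k ih =>
    rintro w hw
    obtain ⟨c, hc, α, rfl⟩ := hw
    have hL := ih c hc
    set L := (q ^ k - 1) / (q - 1) with hLdef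
    have hd : (q - 1) ∣ q ^ k - 1 := by
      have := Nat.sub_dvd_pow_sub_pow q 1 k
      simpa using this
    have hE : q ^ k - 1 = (q - 1) * L := by
      rw [hLdef, Nat.mul_div_cancel' hd]
    have h1 : 1 ≤ q ^ k := Nat.one_le_pow _ _ (by omega)
    have h2 : 1 ≤ q ^ (k + 1) := Nat.one_le_pow _ _ (by omega)
    have hq1 : 1 ≤ q := by omega
    have hlen : (simplexWord q α c).length = q * L + 1 := by
      rw [simplexWord]
      simp only [List.length_append, List.length_cons, List.length_flatMap]
      have hrep : (List.range (q - 1)).map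
          (List.length ∘ fun i => c.map (fun x => x + ((i + 1 : ℕ) : ZMod q) * α)) =
          List.replicate (q - 1) c.length := by
        rw [show (List.length ∘ fun i : ℕ => c.map (fun x => x + ((i + 1 : ℕ) : ZMod q) * α)) =
            Function.const ℕ c.length by funext i; simp [Function.comp]]
        rw [List.map_const, List.length_range]
      rw [show (List.range (q - 1)).map (fun a => (c.map (fun x => x + ((a + 1 : ℕ) : ZMod q) * α)).length) = List.replicate (q - 1) c.length from hrep, List.sum_replicate, smul_eq_mul, hL]
      have hmul : L + (q - 1) * L = q * L := by
        have h3 : L + (q - 1) * L = (1 + (q - 1)) * L := by ring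
        rw [h3]
        congr 1
        omega
      omega
    rw [hlen]
    have hgoal : q ^ (k + 1) - 1 = (q - 1) * (q * L + 1) := by
      zify [h1, h2, hq1] at hE ⊢
      rw [pow_succ]
      linear_combination (q : ℤ) * hE
    rw [hgoal, Nat.mul_div_cancel_left _ (by omega)]

end Aux

/-- For a unit `α` of `ZMod q` and `c ∈ S_{k−1}(q)`, the codeword
`(α, c + α·𝟏, …, c + (q−1)α·𝟏)` of `M_{k,k−1}(q)` has Hamming weight
`1 + (q − 2)·n + z(c)`, where `n = (q^{k−1} − 1)/(q − 1)` and `z(c)` is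
the number of zero coordinates of `c`. -/
theorem macdonald_unit_weight (q k : ℕ) (hq : 2 ≤ q) (hk : 2 ≤ k)
    (α : ZMod q) (hα : IsUnit α) (c : List (ZMod q)) (hc : c ∈ simplex q (k - 1)) :
    wt (macWord q α c) = 1 + (q - 2) * ((q ^ (k - 1) - 1) / (q - 1)) + c.count 0 := by
  rw [aux_macWord_wt hq α hα c, aux_simplex_length hq (k-1) c hc]
end

section
/- Let q ≥ 2 and k ≥ 2 be integers and set n = (q^{k−1} − 1)/(q − 1). Let α be a nonzero element of Z_q of additive order d (so d divides q and d > 1). Then for every c ∈ S_{k−1}(q), the codeword (α, c + α·𝟏, c + 2α·𝟏, …, c + (q−1)α·𝟏) of M_{k,k−1}(q) has Hamming weight 1 + (q/d)·[(d − 1)·n − Σ_{i=1}^{d−1} n(iα)] + (q/d − 1)·wt(c), where n(x) denotes the number of coordinates of c equal to x. -/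
lemma list_sum_range (f : ℕ → ℕ) (n : ℕ) :
    ((List.range n).map f).sum = ∑ i ∈ Finset.range n, f i := by
  induction n with
  | zero => simp
  | succ n ih => rw [List.range_succ, Finset.sum_range_succ]; simp [ih]

lemma sum_range_mul_of_periodic (g : ℕ → ℕ) (d m : ℕ)
    (hg : ∀ t r, g (d * t + r) = g r) :
    ∑ j ∈ Finset.range (d * m), g j = m * ∑ r ∈ Finset.range d, g r := by
  induction m with
  | zero => simp
  | succ m ih =>
    rw [Nat.mul_succ, Finset.sum_range_add, ih, Nat.succ_mul]
    congr 1
    exact Finset.sum_congr rfl fun r _ => hg m r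

lemma simplex_length_s9 (q : ℕ) (hq : 1 ≤ q) :
    ∀ m, ∀ c ∈ simplex q m, (q - 1) * c.length + 1 = q ^ m := by
  obtain ⟨e, rfl⟩ : ∃ e, q = e + 1 := ⟨q - 1, by omega⟩
  intro m
  induction m with
  | zero =>
    intro c hc
    rw [show c = [] from hc]
    simp
  | succ m ih =>
    rintro w ⟨c, hc, β, rfl⟩
    have h := ih c hc
    simp only [simplexWord, List.length_append, List.length_cons, List.length_flatMap,
      List.map_map, Function.comp_def, List.length_map] at *
    have hs : ((List.range (e + 1 - 1)).map fun _ => c.length).sum = e * c.length := by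
      simp [List.map_const', List.sum_replicate, smul_eq_mul]
    rw [hs, pow_succ, ← h]
    ring_nf
    omega

lemma countP_add_count (q : ℕ) (c : List (ZMod q)) (β : ZMod q) :
    (c.countP fun x => decide (x + β ≠ 0)) + c.count (-β) = c.length := by
  induction c with
  | nil => simp
  | cons a l ih =>
    simp only [ne_eq] at ih ⊢
    rw [List.countP_cons, List.count_cons, List.length_cons]
    rcases eq_or_ne (a + β) 0 with h | h
    · have ha : a = -β := eq_neg_of_add_eq_zero_left h
      simp only [h, ha, decide_not] at ih ⊢
      simp
      omega
    · have ha : a ≠ -β := fun e => h (by rw [e]; simp)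
      simp only [decide_not] at ih ⊢
      simp [h, ha]
      omega

/-- For a nonzero `α ∈ ZMod q` of additive order `d` and `c ∈ S_{k−1}(q)`, the
codeword `(α, c + α·𝟏, …, c + (q−1)α·𝟏)` of `M_{k,k−1}(q)` has Hamming weight
`1 + (q/d)·[(d − 1)·n − Σ_{i=1}^{d−1} n(iα)] + (q/d − 1)·wt(c)`, where
`n = (q^{k−1} − 1)/(q − 1)` and `n(x)` is the number of coordinates of `c` equal to `x`. -/
theorem macdonald_nonunit_weight (q k : ℕ) (hq : 2 ≤ q) (hk : 2 ≤ k)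
    (α : ZMod q) (hα : α ≠ 0) (d : ℕ) (hd : addOrderOf α = d)
    (c : List (ZMod q)) (hc : c ∈ simplex q (k - 1)) :
    wt (macWord q α c) =
      1 + (q / d) * ((d - 1) * ((q ^ (k - 1) - 1) / (q - 1))
            - ∑ i ∈ Finset.Icc 1 (d - 1), c.count ((i : ZMod q) * α))
        + (q / d - 1) * wt c := by
  haveI : NeZero q := ⟨by omega⟩
  -- order facts
  have hdα : (d : ZMod q) * α = 0 := by
    have h := addOrderOf_nsmul_eq_zero α
    rw [hd, nsmul_eq_mul] at h
    exact h
  have hdvd : d ∣ q := by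
    rw [← hd]
    apply addOrderOf_dvd_of_nsmul_eq_zero
    rw [nsmul_eq_mul, ZMod.natCast_self, zero_mul]
  have hdpos : 0 < d := hd ▸ addOrderOf_pos α
  have hdne1 : d ≠ 1 := fun h => hα (AddMonoid.addOrderOf_eq_one_iff.mp (by rw [hd, h]))
  have hd2 : 2 ≤ d := by omega
  set m := q / d with hm
  have hdm : d * m = q := Nat.mul_div_cancel' hdvd
  have hm1 : 1 ≤ m := by
    rcases Nat.eq_zero_or_pos m with h | h
    · rw [h, Nat.mul_zero] at hdm; omega
    · exact h
  -- length
  set n := c.length with hn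
  have hlen : (q - 1) * n + 1 = q ^ (k - 1) := simplex_length_s9 q (by omega) _ c hc
  have hn' : (q ^ (k - 1) - 1) / (q - 1) = n := by
    have h2 : q ^ (k - 1) - 1 = (q - 1) * n := by omega
    rw [h2, Nat.mul_div_cancel_left _ (by omega : 0 < q - 1)]
  rw [hn']
  -- the counting function
  set g : ℕ → ℕ := fun j => c.count (((j : ℕ) : ZMod q) * α) with hgdef
  have hper : ∀ t r, g (d * t + r) = g r := by
    intro t r
    simp only [hgdef]
    congr 1
    push_cast
    rw [add_mul, mul_comm (d : ZMod q) (t : ZMod q), mul_assoc, hdα, mul_zero, zero_add]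
  set S := ∑ i ∈ Finset.Icc 1 (d - 1), c.count ((i : ZMod q) * α) with hSdef
  set z := c.count (0 : ZMod q) with hzdef
  set w := wt c with hwdef
  set W := wt (macWord q α c) with hWdef
  -- weight decomposition of the MacDonald word
  set P := ∑ j ∈ Finset.range (q - 1),
      (c.countP fun x => decide (x + ((j + 1 : ℕ) : ZMod q) * α ≠ 0)) with hPdef
  have hW : W = 1 + P := by
    rw [hWdef, wt, macWord, List.countP_cons_of_pos (p := fun x => decide (x ≠ 0)) (a := α) (by simp [hα]),
      List.countP_flatMap]
    simp only [Function.comp_def, List.countP_map]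
    rw [list_sum_range]
    rw [hPdef]
    omega
  -- complement sum
  set A := ∑ j ∈ Finset.range (q - 1), c.count (-(((j + 1 : ℕ) : ZMod q) * α)) with hAdef
  have hPA : P + A = (q - 1) * n := by
    rw [hPdef, hAdef, ← Finset.sum_add_distrib]
    rw [Finset.sum_congr rfl fun j _ => countP_add_count q c (((j + 1 : ℕ) : ZMod q) * α)]
    simp [mul_comm]
    left; rfl
  -- A as a sum of g
  have hA1 : A = ∑ j ∈ Finset.range (q - 1), g (j + 1) := by
    rw [hAdef, ← Finset.sum_range_reflect (fun j => g (j + 1)) (q - 1)]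
    apply Finset.sum_congr rfl
    intro j hj
    have hjq : j < q - 1 := Finset.mem_range.mp hj
    have h1 : q - 1 - 1 - j + 1 = q - 1 - j := by omega
    rw [h1, hgdef]
    congr 1
    have h2 : (q - 1 - j) + (j + 1) = q := by omega
    have h3 : ((q - 1 - j : ℕ) : ZMod q) = -((j + 1 : ℕ) : ZMod q) := by
      apply eq_neg_of_add_eq_zero_left
      rw [← Nat.cast_add, h2, ZMod.natCast_self]
    rw [h3, neg_mul]
  have hg0 : g 0 = z := by simp [hgdef, hzdef]
  have hT : (∑ j ∈ Finset.range (q - 1), g (j + 1)) + z = m * (z + S) := by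
    have h1 : (∑ j ∈ Finset.range (q - 1), g (j + 1)) + g 0 = ∑ j ∈ Finset.range q, g j := by
      rw [← Finset.sum_range_succ' g (q - 1), show q - 1 + 1 = q by omega]
    have h2 : ∑ j ∈ Finset.range q, g j = m * ∑ r ∈ Finset.range d, g r := by
      rw [← hdm]; exact sum_range_mul_of_periodic g d m hper
    have h3 : ∑ r ∈ Finset.range d, g r = z + S := by
      rw [show d = (d - 1) + 1 by omega, Finset.sum_range_succ' g (d - 1), hg0]
      have h4 : S = ∑ i ∈ Finset.range (d - 1), g (1 + i) := by
        rw [hSdef, ← Finset.Ico_add_one_right_eq_Icc, show d - 1 + 1 = d from by omega,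
          Finset.sum_Ico_eq_sum_range]
      rw [h4]
      have : ∑ i ∈ Finset.range (d - 1), g (1 + i)
           = ∑ i ∈ Finset.range (d - 1), g (i + 1) :=
        Finset.sum_congr rfl fun i _ => by rw [add_comm]
      omega
    rw [hg0] at h1
    rw [h1, h2, h3]
  have hF2 : A + z = m * (z + S) := by rw [hA1]; exact hT
  have hF1 : W + A = 1 + (q - 1) * n := by omega
  have hF3 : z + w = n := by
    have h := countP_add_count q c 0
    simp only [add_zero, neg_zero] at h
    rw [← hn, ← hzdef] at h
    rw [hwdef, wt]
    omega
  have hS : S ≤ (d - 1) * n := by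
    calc S ≤ ∑ _i ∈ Finset.Icc 1 (d - 1), n :=
          Finset.sum_le_sum fun i _ => List.count_le_length
      _ = (d - 1) * n := by simp [Nat.card_Icc]
  -- final integer computation
  have hF1z : (W : ℤ) + A = 1 + ((q : ℤ) - 1) * n := by
    have h1 : (1 : ℤ) ≤ q := by exact_mod_cast (by omega : 1 ≤ q)
    zify [show 1 ≤ q by omega] at hF1
    exact_mod_cast hF1
  have hF2z : (A : ℤ) + z = m * (z + S) := by exact_mod_cast hF2
  have hF3z : (z : ℤ) + w = n := by exact_mod_cast hF3
  have hF5z : (d : ℤ) * m = q := by exact_mod_cast hdm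
  zify [hS, hm1, show 1 ≤ d by omega]
  linear_combination hF1z - hF2z - (n : ℤ) * hF5z - ((m : ℤ) - 1) * hF3z
end

section
/- Let q ≥ 2 and k ≥ 3 be integers and let α be any nonzero element of Z_q. Then there exists a nonzero codeword c ∈ S_{k−1}(q) all of whose coordinates lie in the cyclic subgroup ⟨α⟩ of (Z_q, +) generated by α, such that c has exactly (q^{k−2} − 1)/(q − 1) zero coordinates. -/
def myWord (q : ℕ) (α : ZMod q) : ℕ → List (ZMod q)
  | 0 => [α]
  | m + 1 => simplexWord q 0 (myWord q α m)

lemma simplexWord_zero (q : ℕ) (c : List (ZMod q)) :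
    simplexWord q 0 c = c ++ 0 :: (List.range (q - 1)).flatMap (fun _ => c) := by
  simp [simplexWord]

lemma count_flatMap_const (q n : ℕ) (c : List (ZMod q)) :
    ((List.range n).flatMap (fun _ => c)).count (0 : ZMod q) = n * c.count 0 := by
  induction n with
  | zero => simp
  | succ n ih =>
    rw [List.range_succ, List.flatMap_append, List.count_append, ih]
    simp [Nat.succ_mul]

lemma myWord_mem (q : ℕ) (α : ZMod q) (m : ℕ) : myWord q α m ∈ simplex q (m + 1) := by
  induction m with
  | zero =>
    refine ⟨[], rfl, α, ?_⟩
    simp [myWord, simplexWord]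
  | succ m ih => exact ⟨myWord q α m, ih, 0, rfl⟩

lemma myWord_coords (q : ℕ) (α : ZMod q) (m : ℕ) :
    ∀ x ∈ myWord q α m, x = 0 ∨ x = α := by
  induction m with
  | zero => intro x hx; simp [myWord] at hx; right; exact hx
  | succ m ih =>
    intro x hx
    rw [myWord, simplexWord_zero] at hx
    simp only [List.mem_append, List.mem_cons, List.mem_flatMap, List.mem_range] at hx
    rcases hx with h | h | ⟨i, _, h⟩
    · exact ih x h
    · left; exact h
    · exact ih x h

lemma myWord_mem_self (q : ℕ) (α : ZMod q) (m : ℕ) : α ∈ myWord q α m := by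
  induction m with
  | zero => simp [myWord]
  | succ m ih =>
    rw [myWord, simplexWord_zero]
    exact List.mem_append_left _ ih

lemma myWord_count (q : ℕ) (hq : 2 ≤ q) (α : ZMod q) (hα : α ≠ 0) (m : ℕ) :
    (q - 1) * (myWord q α m).count 0 = q ^ m - 1 := by
  induction m with
  | zero => simp [myWord, List.count_singleton, hα]
  | succ m ih =>
    rw [myWord, simplexWord_zero, List.count_append, List.count_cons_self,
      count_flatMap_const]
    have h1 : 1 ≤ q ^ m := Nat.one_le_pow _ _ (by omega)
    have h2 : q ^ (m + 1) = q * q ^ m := pow_succ' q m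
    obtain ⟨p, rfl⟩ : ∃ p, q = p + 2 := ⟨q - 2, by omega⟩
    set z := (myWord (p + 2) α m).count 0 with hzdef
    have hp1 : p + 2 - 1 = p + 1 := rfl
    rw [hp1] at ih ⊢
    have hA : (p + 2) ^ m = (p + 1) * z + 1 := by omega
    have e1 : (p + 1) * (z + ((p + 1) * z + 1)) = (p + 2) * ((p + 1) * z) + (p + 1) := by
      ring
    have e2 : (p + 2) * ((p + 1) * z + 1) = (p + 2) * ((p + 1) * z) + (p + 2) := by
      ring
    rw [e1, h2, hA, e2]
    omega

/-- For every nonzero `α ∈ ZMod q` there is a nonzero codeword `c ∈ S_{k−1}(q)` all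
of whose coordinates lie in the additive subgroup `⟨α⟩`, having exactly
`(q^{k−2} − 1)/(q − 1)` zero coordinates. -/
theorem simplex_exists_subgroup_codeword (q k : ℕ) (hq : 2 ≤ q) (hk : 3 ≤ k)
    (α : ZMod q) (hα : α ≠ 0) :
    ∃ c ∈ simplex q (k - 1), wt c ≠ 0 ∧ (∀ x ∈ c, x ∈ AddSubgroup.zmultiples α) ∧
      c.count 0 = (q ^ (k - 2) - 1) / (q - 1) := by
  have hk1 : k - 1 = (k - 2) + 1 := by omega
  refine ⟨myWord q α (k - 2), by rw [hk1]; exact myWord_mem q α (k - 2), ?_, ?_, ?_⟩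
  · intro h
    have hmem := myWord_mem_self q α (k - 2)
    have := List.countP_eq_zero.mp h α hmem
    simp [hα] at this
  · intro x hx
    rcases myWord_coords q α (k - 2) x hx with h | h
    · rw [h]; exact zero_mem _
    · rw [h]; exact AddSubgroup.mem_zmultiples α
  · have h := myWord_count q hq α hα (k - 2)
    have hq1 : 0 < q - 1 := by omega
    symm
    exact Nat.div_eq_of_eq_mul_left hq1 (by rw [← h, mul_comm])
end

section
/- For every integer q ≥ 2, among the codewords (0, c, c, …, c) of the Z_q-MacDonald code M_{3,2}(q) obtained with α = 0 and c ranging over S_2(q), there are: exactly 1 of Hamming weight 0; exactly d·φ(d) of Hamming weight (q − 1)(q − q/d + 1), for each divisor d of q with d ≠ 1 and d ≠ q; exactly q·φ(q) + q − 1 of Hamming weight (q − 1)q; and exactly q(q − 1) − Σ_{d | q, d ≠ 1} d·φ(d) of Hamming weight q^2 − 1, where φ is Euler's totient function. -/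
section AuxiliaryLemmas

open Finset

/-- The number of `j : ZMod q` with `β + j * α = 0`. -/
def Nab (q : ℕ) [NeZero q] (α β : ZMod q) : ℕ :=
  (Finset.univ.filter (fun j : ZMod q => β + j * α = 0)).card

theorem Nab_le (q : ℕ) [NeZero q] (α β : ZMod q) : Nab q α β ≤ q := by
  have := Finset.card_filter_le Finset.univ (fun j : ZMod q => β + j * α = 0)
  simpa [ZMod.card, Nab] using this

theorem sum_zmod_eq_sum_range (q : ℕ) [NeZero q] (f : ZMod q → ℕ) :
    ∑ x : ZMod q, f x = ∑ i ∈ Finset.range q, f (i : ZMod q) := by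
  apply Finset.sum_nbij' (fun x => ZMod.val x) (fun i => (i : ZMod q)) <;>
    simp [ZMod.val_lt, ZMod.natCast_val, ZMod.val_cast_of_lt, Finset.mem_range]
  · intro i hi; exact Nat.mod_eq_of_lt hi

theorem wt_macWord_zero (q : ℕ) (c : List (ZMod q)) :
    wt (macWord q 0 c) = (q - 1) * wt c := by
  simp [macWord, wt, List.countP_cons, List.countP_flatMap, Function.comp_def,
    List.map_const', List.sum_replicate]

theorem wt_simplexWord_s13 (q : ℕ) [NeZero q] (α β : ZMod q) :
    wt (simplexWord q α [β]) = (if α = 0 then 0 else 1) + (q - Nab q α β) := by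
  have hq1 : q - 1 + 1 = q := Nat.succ_pred_eq_of_pos (NeZero.pos q)
  have hsum : ∑ x : ZMod q, (if β + x * α ≠ 0 then 1 else 0) = q - Nab q α β := by
    have h1 := Finset.card_filter_add_card_filter_not
      (s := (Finset.univ : Finset (ZMod q))) (p := fun x => β + x * α = 0)
    rw [← Finset.card_filter]
    simp only [ZMod.card, Finset.card_univ] at h1
    have h2 : (Finset.univ.filter (fun x : ZMod q => ¬(β + x * α = 0))).card =
        (Finset.univ.filter (fun x : ZMod q => β + x * α ≠ 0)).card := rfl
    rw [Nab]
    omega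
  have expand : wt (simplexWord q α [β]) =
      (if β ≠ 0 then 1 else 0) + ((if α ≠ 0 then 1 else 0)
        + ∑ i ∈ Finset.range (q-1), (if β + ((i+1 : ℕ) : ZMod q) * α ≠ 0 then 1 else 0)) := by
    simp only [wt, simplexWord, List.map_cons, List.map_nil, List.singleton_append,
      List.countP_cons, List.countP_flatMap, Function.comp_def, List.countP_nil]
    simp only [zero_add, decide_eq_true_eq]
    rw [show (List.map (fun x => if β + ((x + 1 : ℕ) : ZMod q) * α ≠ 0 then 1 else 0)
      (List.range (q - 1))).sum
      = ∑ i ∈ Finset.range (q - 1), if β + ((i + 1 : ℕ) : ZMod q) * α ≠ 0 then 1 else 0 from rfl]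
    ring
  rw [expand, ← hsum, sum_zmod_eq_sum_range]
  have hsplit := Finset.sum_range_succ'
    (fun i => if β + ((i : ℕ) : ZMod q) * α ≠ 0 then 1 else 0) (q - 1)
  rw [hq1] at hsplit
  rw [hsplit]
  push_cast
  simp only [zero_mul, add_zero]
  by_cases hb : β = 0 <;> by_cases ha : α = 0 <;> simp [hb, ha] <;> ring

theorem Nab_zero_left (q : ℕ) [NeZero q] (β : ZMod q) :
    Nab q 0 β = if β = 0 then q else 0 := by
  by_cases h : β = 0 <;> simp [Nab, h, Finset.filter_true_of_mem, ZMod.card]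

theorem nat_dvd_mul_iff (a q x : ℕ) (hq : 0 < q) :
    q ∣ x * a ↔ (q / Nat.gcd a q) ∣ x := by
  set g := Nat.gcd a q with hgdef
  have hgq : g ∣ q := Nat.gcd_dvd_right _ _
  have hg : 0 < g := Nat.gcd_pos_of_pos_right _ hq
  set e := q / g with hedef
  have hge : g * e = q := Nat.mul_div_cancel' hgq
  constructor
  · intro hd
    have ha' : g * (a / g) = a := Nat.mul_div_cancel' (Nat.gcd_dvd_left _ _)
    rw [← hge, ← ha', mul_left_comm] at hd
    have hd2 : e ∣ x * (a / g) := (mul_dvd_mul_iff_left hg.ne').mp hd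
    have hco : Nat.Coprime (a / g) (q / g) := Nat.coprime_div_gcd_div_gcd hg
    exact Nat.Coprime.dvd_of_dvd_mul_right hco.symm hd2
  · intro hd
    have h2 : g * e ∣ a * x := mul_dvd_mul (Nat.gcd_dvd_left _ _) hd
    rw [hge] at h2
    rwa [Nat.mul_comm]

theorem Nab_eq_gcd (q : ℕ) [NeZero q] (α : ZMod q) :
    Nab q α 0 = Nat.gcd α.val q := by
  have hq : 0 < q := NeZero.pos q
  set g := Nat.gcd α.val q with hgdef
  have hgq : g ∣ q := Nat.gcd_dvd_right _ _
  have hg : 0 < g := Nat.gcd_pos_of_pos_right _ hq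
  set e := q / g with hedef
  have hge : g * e = q := Nat.mul_div_cancel' hgq
  have he : 0 < e := Nat.div_pos (Nat.le_of_dvd hq hgq) hg
  have heg : e * g = q := by rw [mul_comm]; exact hge
  have hiff : ∀ j : ZMod q, (0 + j * α = 0) ↔ e ∣ j.val := by
    intro j
    rw [zero_add]
    have h1 : j * α = ((j.val * α.val : ℕ) : ZMod q) := by
      push_cast [ZMod.natCast_val, ZMod.cast_id]; ring
    rw [h1, ZMod.natCast_eq_zero_iff]
    exact nat_dvd_mul_iff α.val q j.val hq
  rw [Nab, Finset.filter_congr (fun j _ => hiff j), ← Finset.card_range g]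
  apply Finset.card_bij' (fun j _ => j.val / e) (fun t _ => ((e * t : ℕ) : ZMod q))
  · intro j hj
    simp only [Finset.mem_filter, Finset.mem_univ, true_and] at hj
    simp only [Finset.mem_range]
    rw [Nat.div_lt_iff_lt_mul he]
    calc j.val < q := ZMod.val_lt j
    _ = g * e := hge.symm
  · intro t ht
    simp only [Finset.mem_range] at ht
    simp only [Finset.mem_filter, Finset.mem_univ, true_and]
    rw [ZMod.val_cast_of_lt (by calc e * t < e * g := mul_lt_mul_of_pos_left ht he
      _ = q := heg)]
    exact ⟨t, rfl⟩
  · intro j hj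
    simp only [Finset.mem_filter, Finset.mem_univ, true_and] at hj
    rw [Nat.mul_div_cancel' hj]
    exact ZMod.natCast_rightInverse j
  · intro t ht
    simp only [Finset.mem_range] at ht
    rw [ZMod.val_cast_of_lt (by calc e * t < e * g := mul_lt_mul_of_pos_left ht he
      _ = q := heg)]
    exact Nat.mul_div_cancel_left t he

theorem Nab_eq_of_root (q : ℕ) [NeZero q] (α β j₀ : ZMod q) (h : β + j₀ * α = 0) :
    Nab q α β = Nab q α 0 := by
  apply Finset.card_bij' (fun j _ => j - j₀) (fun j _ => j + j₀)
  · intro j hj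
    simp only [Finset.mem_filter, Finset.mem_univ, true_and] at hj ⊢
    have : (0 : ZMod q) + (j - j₀) * α = (β + j * α) - (β + j₀ * α) := by ring
    rw [this, hj, h]; simp
  · intro j hj
    simp only [Finset.mem_filter, Finset.mem_univ, true_and] at hj ⊢
    have : β + (j + j₀) * α = (0 + j * α) + (β + j₀ * α) := by ring
    rw [this, hj, h]; simp
  · intro j _; ring
  · intro j _; ring

theorem Nab_ne_zero_eq_gcd (q : ℕ) [NeZero q] (α β : ZMod q) (h : Nab q α β ≠ 0) :
    Nab q α β = Nat.gcd α.val q := by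
  have hne : (Finset.univ.filter (fun j : ZMod q => β + j * α = 0)).Nonempty := by
    rw [← Finset.card_pos]
    exact Nat.pos_of_ne_zero h
  obtain ⟨j₀, hj₀⟩ := hne
  simp only [Finset.mem_filter, Finset.mem_univ, true_and] at hj₀
  rw [Nab_eq_of_root q α β j₀ hj₀, Nab_eq_gcd]

theorem sum_Nab (q : ℕ) [NeZero q] (α : ZMod q) : ∑ β : ZMod q, Nab q α β = q := by
  have h := Finset.card_eq_sum_card_fiberwise
    (f := fun j : ZMod q => -(j * α)) (s := Finset.univ) (t := Finset.univ)
    (fun _ _ => Finset.mem_univ _)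
  rw [Finset.card_univ, ZMod.card] at h
  refine Eq.trans ?_ h.symm
  apply Finset.sum_congr rfl
  intro β _
  rw [Nab]
  congr 1
  apply Finset.filter_congr
  intro j _
  constructor
  · intro hh; linear_combination -hh
  · intro hh; linear_combination -hh

theorem card_Nab_ne_zero (q : ℕ) [NeZero q] (α : ZMod q) :
    (Finset.univ.filter (fun β : ZMod q => Nab q α β ≠ 0)).card * Nab q α 0 = q := by
  have h := sum_Nab q α
  rw [← Finset.sum_filter_ne_zero Finset.univ] at h
  calc (Finset.univ.filter (fun β : ZMod q => Nab q α β ≠ 0)).card * Nab q α 0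
      = ∑ _β ∈ Finset.univ.filter (fun β : ZMod q => Nab q α β ≠ 0), Nab q α 0 := by
        rw [Finset.sum_const, smul_eq_mul]
  _ = ∑ β ∈ Finset.univ.filter (fun β : ZMod q => Nab q α β ≠ 0), Nab q α β := by
        apply Finset.sum_congr rfl
        intro β hβ
        simp only [Finset.mem_filter, Finset.mem_univ, true_and] at hβ
        have hne : (Finset.univ.filter (fun j : ZMod q => β + j * α = 0)).Nonempty := by
          rw [← Finset.card_pos]
          exact Nat.pos_of_ne_zero hβ
        obtain ⟨j₀, hj₀⟩ := hne
        simp only [Finset.mem_filter, Finset.mem_univ, true_and] at hj₀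
        exact (Nab_eq_of_root q α β j₀ hj₀).symm
  _ = q := h

theorem card_gcd_eq_totient (q : ℕ) [NeZero q] (m : ℕ) (hm : m ∣ q) :
    (Finset.univ.filter (fun α : ZMod q => Nat.gcd α.val q = m)).card
      = Nat.totient (q / m) := by
  have hq : 0 < q := NeZero.pos q
  have hm0 : 0 < m := Nat.pos_of_ne_zero (by rintro rfl; exact absurd (Nat.zero_dvd.mp hm) hq.ne')
  rw [Nat.totient_eq_card_coprime]
  apply Finset.card_bij' (fun α _ => α.val / m) (fun t _ => ((m * t : ℕ) : ZMod q))
  · intro α hα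
    simp only [Finset.mem_filter, Finset.mem_univ, true_and] at hα
    simp only [Finset.mem_filter, Finset.mem_range]
    constructor
    · exact Nat.div_lt_div_of_lt_of_dvd hm (ZMod.val_lt α)
    · have := Nat.coprime_div_gcd_div_gcd (m := α.val) (n := q) (hα ▸ hm0)
      rw [hα] at this
      exact this.symm
  · intro t ht
    simp only [Finset.mem_filter, Finset.mem_range] at ht
    simp only [Finset.mem_filter, Finset.mem_univ, true_and]
    have hlt : m * t < q := by
      calc m * t < m * (q / m) := mul_lt_mul_of_pos_left ht.1 hm0
      _ = q := Nat.mul_div_cancel' hm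
    rw [ZMod.val_cast_of_lt hlt]
    have : Nat.gcd (m * t) (m * (q / m)) = m * Nat.gcd t (q / m) := Nat.gcd_mul_left _ _ _
    rw [Nat.mul_div_cancel' hm] at this
    rw [this, Nat.Coprime.gcd_eq_one ht.2.symm, mul_one]
  · intro α hα
    simp only [Finset.mem_filter, Finset.mem_univ, true_and] at hα
    have hdvd : m ∣ α.val := hα ▸ Nat.gcd_dvd_left _ _
    rw [Nat.mul_div_cancel' hdvd]
    exact ZMod.natCast_rightInverse α
  · intro t ht
    simp only [Finset.mem_filter, Finset.mem_range] at ht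
    have hlt : m * t < q := by
      calc m * t < m * (q / m) := mul_lt_mul_of_pos_left ht.1 hm0
      _ = q := Nat.mul_div_cancel' hm
    rw [ZMod.val_cast_of_lt hlt]
    exact Nat.mul_div_cancel_left t hm0

theorem cardPairs (q : ℕ) [NeZero q] (pred : ZMod q → ZMod q → Prop)
    [∀ a b, Decidable (pred a b)] :
    (Finset.univ.filter (fun p : ZMod q × ZMod q => pred p.1 p.2)).card
      = ∑ α : ZMod q, (Finset.univ.filter (fun β => pred α β)).card := by
  simp only [Finset.card_filter]
  rw [Fintype.sum_prod_type]

theorem card_pairs_Nab (q : ℕ) [NeZero q] (m : ℕ) (hm : m ∣ q) (hmq : m ≠ q) :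
    (Finset.univ.filter (fun p : ZMod q × ZMod q => p.1 ≠ 0 ∧ Nab q p.1 p.2 = m)).card
      = (q / m) * Nat.totient (q / m) := by
  have hq : 0 < q := NeZero.pos q
  have hm0 : 0 < m := Nat.pos_of_ne_zero (by rintro rfl; exact absurd (Nat.zero_dvd.mp hm) hq.ne')
  rw [cardPairs q (fun α β => α ≠ 0 ∧ Nab q α β = m)]
  have key : ∀ α : ZMod q, (Finset.univ.filter (fun β => α ≠ 0 ∧ Nab q α β = m)).card
      = if Nat.gcd α.val q = m then q / m else 0 := by
    intro α
    by_cases hg : Nat.gcd α.val q = m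
    · rw [if_pos hg]
      have hα : α ≠ 0 := by
        rintro rfl
        rw [ZMod.val_zero, Nat.gcd_zero_left] at hg
        exact hmq hg.symm
      have hfe : (Finset.univ.filter (fun β => α ≠ 0 ∧ Nab q α β = m))
          = Finset.univ.filter (fun β : ZMod q => Nab q α β ≠ 0) := by
        apply Finset.filter_congr
        intro β _
        simp only [hα, ne_eq, not_false_iff, true_and]
        constructor
        · intro h; rw [h]; exact hm0.ne'
        · intro h
          rw [Nab_ne_zero_eq_gcd q α β h, hg]
      rw [hfe]
      have h6 := card_Nab_ne_zero q α
      rw [Nab_eq_gcd, hg] at h6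
      exact (Nat.div_eq_of_eq_mul_left hm0 h6.symm).symm
    · rw [if_neg hg]
      rw [Finset.card_eq_zero, Finset.filter_eq_empty_iff]
      intro β _
      rintro ⟨hα, hN⟩
      apply hg
      rw [← hN, Nab_ne_zero_eq_gcd q α β (by rw [hN]; exact hm0.ne')]
  rw [Finset.sum_congr rfl (fun α _ => key α), ← Finset.sum_filter,
    Finset.sum_const, smul_eq_mul, card_gcd_eq_totient q m hm, mul_comm]

theorem mem_simplex_two (q : ℕ) (c : List (ZMod q)) :
    c ∈ simplex q 2 ↔ ∃ p : ZMod q × ZMod q, c = simplexWord q p.1 [p.2] := by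
  have h1 : ∀ β : ZMod q, simplexWord q β [] = [β] := by intro β; simp [simplexWord]
  constructor
  · rintro ⟨c₁, hc₁, α, rfl⟩
    obtain ⟨c₀, hc₀, β, rfl⟩ := hc₁
    obtain rfl : c₀ = [] := hc₀
    exact ⟨(α, β), by rw [h1]⟩
  · rintro ⟨p, rfl⟩
    exact ⟨[p.2], ⟨[], rfl, p.2, (h1 p.2).symm⟩, p.1, rfl⟩

theorem ncard_bridge (q : ℕ) [NeZero q] (w : ℕ) :
    ({c ∈ simplex q 2 | wt (macWord q 0 c) = w}).ncard
      = ((Finset.univ : Finset (ZMod q × ZMod q)).filter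
          (fun p => (q - 1) * wt (simplexWord q p.1 [p.2]) = w)).card := by
  have hinj : Function.Injective (fun p : ZMod q × ZMod q => simplexWord q p.1 [p.2]) := by
    intro p p' h
    simp only [simplexWord, List.singleton_append, List.cons.injEq] at h
    exact Prod.ext h.2.1 h.1
  have hset : {c ∈ simplex q 2 | wt (macWord q 0 c) = w}
      = (fun p : ZMod q × ZMod q => simplexWord q p.1 [p.2]) ''
        ↑((Finset.univ : Finset (ZMod q × ZMod q)).filter
          (fun p => (q - 1) * wt (simplexWord q p.1 [p.2]) = w)) := by
    ext c
    simp only [Set.mem_setOf_eq, Set.mem_image, Finset.coe_filter, Finset.mem_univ, true_and]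
    constructor
    · rintro ⟨hc, hw⟩
      obtain ⟨p, rfl⟩ := (mem_simplex_two q c).mp hc
      rw [wt_macWord_zero] at hw
      exact ⟨p, hw, rfl⟩
    · rintro ⟨p, hp, rfl⟩
      refine ⟨(mem_simplex_two q _).mpr ⟨p, rfl⟩, ?_⟩
      rwa [wt_macWord_zero]
  rw [hset, Set.ncard_image_of_injective _ hinj, Set.ncard_coe_finset]

end AuxiliaryLemmas

/-- Among the codewords `(0, c, …, c)` of `M_{3,2}(q)` with `c ∈ S_2(q)`, exactly 1 has
weight 0, exactly `d·φ(d)` have weight `(q − 1)(q − q/d + 1)` for each divisor `d` of `q`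
with `d ≠ 1, d ≠ q`, exactly `q·φ(q) + q − 1` have weight `(q − 1)q`, and exactly
`q(q − 1) − Σ_{d ∣ q, d ≠ 1} d·φ(d)` have weight `q² − 1`. -/
theorem macdonald_three_two_alpha_zero_distribution (q : ℕ) (hq : 2 ≤ q) :
    ({c ∈ simplex q 2 | wt (macWord q 0 c) = 0}).ncard = 1 ∧
    (∀ d : ℕ, d ∣ q → d ≠ 1 → d ≠ q →
      ({c ∈ simplex q 2 | wt (macWord q 0 c) = (q - 1) * (q - q / d + 1)}).ncard
        = d * Nat.totient d) ∧
    ({c ∈ simplex q 2 | wt (macWord q 0 c) = (q - 1) * q}).ncard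
      = q * Nat.totient q + q - 1 ∧
    ({c ∈ simplex q 2 | wt (macWord q 0 c) = q ^ 2 - 1}).ncard
      = q * (q - 1) - ∑ d ∈ q.divisors.filter (fun d => d ≠ 1), d * Nat.totient d := by
  haveI : NeZero q := ⟨by omega⟩
  have hq0 : 0 < q := by omega
  refine ⟨?_, ?_, ?_, ?_⟩
  · rw [ncard_bridge]
    have hfilt : (Finset.univ.filter (fun p : ZMod q × ZMod q =>
        (q - 1) * wt (simplexWord q p.1 [p.2]) = 0)) = {((0 : ZMod q), (0 : ZMod q))} := by
      ext p
      simp only [Finset.mem_filter, Finset.mem_univ, true_and, Finset.mem_singleton]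
      rw [wt_simplexWord_s13]
      have hN := Nab_le q p.1 p.2
      constructor
      · intro h
        have h2 : (if p.1 = 0 then 0 else 1) + (q - Nab q p.1 p.2) = 0 := by
          rcases Nat.mul_eq_zero.mp h with h' | h'
          · omega
          · exact h'
        have hp1 : p.1 = 0 := by
          by_cases hp : p.1 = 0
          · exact hp
          · rw [if_neg hp] at h2; omega
        have hNq : Nab q p.1 p.2 = q := by
          rw [if_pos hp1] at h2; omega
        rw [hp1, Nab_zero_left] at hNq
        by_cases hp2 : p.2 = 0
        · exact Prod.ext hp1 hp2
        · rw [if_neg hp2] at hNq; omega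
      · rintro rfl
        simp [Nab_zero_left]
    rw [hfilt, Finset.card_singleton]
  · intro d hd hd1 hdq
    rw [ncard_bridge]
    have hd0 : 0 < d := Nat.pos_of_ne_zero (by
      rintro rfl
      have := Nat.eq_zero_of_zero_dvd hd
      omega)
    have hdvd : q / d ∣ q := Nat.div_dvd_of_dvd hd
    have hdd : q / d * d = q := Nat.div_mul_cancel hd
    have hqd_pos : 0 < q / d := Nat.div_pos (Nat.le_of_dvd hq0 hd) hd0
    have hqd_le : q / d ≤ q := Nat.div_le_self q d
    have hdivdiv : q / (q / d) = d := Nat.div_div_self hd hq0.ne'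
    have hqdq : q / d ≠ q := by
      intro h
      rw [h] at hdd
      exact hd1 (Nat.eq_of_mul_eq_mul_left hq0 (by rw [mul_one]; exact hdd))
    have hiff : ∀ p : ZMod q × ZMod q,
        (q - 1) * wt (simplexWord q p.1 [p.2]) = (q - 1) * (q - q / d + 1)
          ↔ (p.1 ≠ 0 ∧ Nab q p.1 p.2 = q / d) := by
      intro p
      rw [wt_simplexWord_s13]
      have hN := Nab_le q p.1 p.2
      constructor
      · intro h
        have h2 : (if p.1 = 0 then 0 else 1) + (q - Nab q p.1 p.2) = q - q / d + 1 :=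
          Nat.eq_of_mul_eq_mul_left (by omega) h
        by_cases hp : p.1 = 0
        · exfalso
          rw [if_pos hp] at h2
          rw [hp, Nab_zero_left] at h2
          by_cases hp2 : p.2 = 0
          · rw [if_pos hp2] at h2; omega
          · rw [if_neg hp2] at h2
            have h3 : q / d = 1 := by omega
            rw [h3, one_mul] at hdd
            exact hdq hdd
        · rw [if_neg hp] at h2
          exact ⟨hp, by omega⟩
      · rintro ⟨hp, hNab⟩
        rw [if_neg hp, hNab]
        congr 1
        omega
    rw [Finset.filter_congr (fun p _ => hiff p), card_pairs_Nab q (q / d) hdvd hqdq, hdivdiv]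
  · rw [ncard_bridge]
    have hiff : ∀ p : ZMod q × ZMod q,
        (q - 1) * wt (simplexWord q p.1 [p.2]) = (q - 1) * q
          ↔ ((p.1 = 0 ∧ p.2 ≠ 0) ∨ (p.1 ≠ 0 ∧ Nab q p.1 p.2 = 1)) := by
      intro p
      rw [wt_simplexWord_s13]
      have hN := Nab_le q p.1 p.2
      constructor
      · intro h
        have h2 : (if p.1 = 0 then 0 else 1) + (q - Nab q p.1 p.2) = q :=
          Nat.eq_of_mul_eq_mul_left (by omega) h
        by_cases hp : p.1 = 0
        · rw [if_pos hp] at h2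
          left
          refine ⟨hp, ?_⟩
          intro hp2
          rw [hp, Nab_zero_left, if_pos hp2] at h2
          omega
        · rw [if_neg hp] at h2
          right
          exact ⟨hp, by omega⟩
      · intro h
        rcases h with ⟨hp, hp2⟩ | ⟨hp, hNab⟩
        · rw [if_pos hp, hp, Nab_zero_left, if_neg hp2]
          congr 1
          omega
        · rw [if_neg hp, hNab]
          congr 1
          omega
    rw [Finset.filter_congr (fun p _ => hiff p), Finset.filter_or]
    rw [Finset.card_union_of_disjoint (by
      rw [Finset.disjoint_left]
      intro p hp hp'
      simp only [Finset.mem_filter, Finset.mem_univ, true_and] at hp hp'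
      exact hp'.1 hp.1)]
    have hc1 : (Finset.univ.filter
        (fun p : ZMod q × ZMod q => p.1 = 0 ∧ p.2 ≠ 0)).card = q - 1 := by
      rw [show (Finset.univ.filter (fun p : ZMod q × ZMod q => p.1 = 0 ∧ p.2 ≠ 0))
          = ({(0 : ZMod q)} : Finset (ZMod q)) ×ˢ ({(0 : ZMod q)} : Finset (ZMod q))ᶜ by
        ext p
        simp only [Finset.mem_filter, Finset.mem_univ, true_and, Finset.mem_product,
          Finset.mem_singleton, Finset.mem_compl]]
      rw [Finset.card_product, Finset.card_singleton, Finset.card_compl, Finset.card_singleton]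
      simp [ZMod.card]
    rw [hc1, card_pairs_Nab q 1 (one_dvd q) (by omega), Nat.div_one]
    omega
  · rw [ncard_bridge]
    have hsq : q ^ 2 - 1 = (q - 1) * (q + 1) := by
      have h := Nat.sq_sub_sq q 1
      simp only [one_pow] at h
      rw [h, mul_comm]
    have hiff : ∀ p : ZMod q × ZMod q,
        (q - 1) * wt (simplexWord q p.1 [p.2]) = q ^ 2 - 1
          ↔ (p.1 ≠ 0 ∧ Nab q p.1 p.2 = 0) := by
      intro p
      rw [hsq, wt_simplexWord_s13]
      have hN := Nab_le q p.1 p.2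
      constructor
      · intro h
        have h2 : (if p.1 = 0 then 0 else 1) + (q - Nab q p.1 p.2) = q + 1 :=
          Nat.eq_of_mul_eq_mul_left (by omega) h
        by_cases hp : p.1 = 0
        · rw [if_pos hp] at h2; omega
        · rw [if_neg hp] at h2; exact ⟨hp, by omega⟩
      · rintro ⟨hp, hNab⟩
        rw [if_neg hp, hNab]
        congr 1
        omega
    rw [Finset.filter_congr (fun p _ => hiff p)]
    have hsub : (Finset.univ.filter (fun p : ZMod q × ZMod q => p.1 ≠ 0 ∧ Nab q p.1 p.2 = 0))
        = (Finset.univ.filter (fun p : ZMod q × ZMod q => p.1 ≠ 0))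
          \ (Finset.univ.filter (fun p : ZMod q × ZMod q => p.1 ≠ 0 ∧ Nab q p.1 p.2 ≠ 0)) := by
      ext p
      simp only [Finset.mem_filter, Finset.mem_univ, true_and, Finset.mem_sdiff,
        not_and, ne_eq, not_not]
      tauto
    rw [hsub, Finset.card_sdiff_of_subset (by
      intro p hp
      simp only [Finset.mem_filter, Finset.mem_univ, true_and] at hp ⊢
      exact hp.1)]
    have hfull : (Finset.univ.filter
        (fun p : ZMod q × ZMod q => p.1 ≠ 0)).card = q * (q - 1) := by
      rw [show (Finset.univ.filter (fun p : ZMod q × ZMod q => p.1 ≠ 0))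
          = (({(0 : ZMod q)} : Finset (ZMod q))ᶜ) ×ˢ (Finset.univ : Finset (ZMod q)) by
        ext p
        simp only [Finset.mem_filter, Finset.mem_univ, true_and, Finset.mem_product,
          Finset.mem_singleton, Finset.mem_compl, and_true]]
      rw [Finset.card_product, Finset.card_compl, Finset.card_singleton, Finset.card_univ]
      simp [ZMod.card, mul_comm]
    have hB : (Finset.univ.filter
          (fun p : ZMod q × ZMod q => p.1 ≠ 0 ∧ Nab q p.1 p.2 ≠ 0)).card
        = ∑ d ∈ q.divisors.filter (fun d => d ≠ 1), d * Nat.totient d := by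
      rw [Finset.card_eq_sum_card_fiberwise (f := fun p : ZMod q × ZMod q => q / Nab q p.1 p.2)
        (t := q.divisors.filter (fun d => d ≠ 1)) (by
          intro p hp
          simp only [Finset.mem_coe, Finset.mem_filter, Finset.mem_univ, true_and] at hp
          obtain ⟨hp1, hpN⟩ := hp
          have hg := Nab_ne_zero_eq_gcd q p.1 p.2 hpN
          have hgdvd : Nab q p.1 p.2 ∣ q := hg ▸ Nat.gcd_dvd_right _ _
          have hval : p.1.val ≠ 0 := fun h => hp1 ((ZMod.val_eq_zero p.1).mp h)
          have hglt : Nab q p.1 p.2 < q := by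
            rw [hg]
            calc Nat.gcd p.1.val q ≤ p.1.val :=
              Nat.le_of_dvd (Nat.pos_of_ne_zero hval) (Nat.gcd_dvd_left _ _)
            _ < q := ZMod.val_lt p.1
          simp only [Finset.mem_coe, Finset.mem_filter, Nat.mem_divisors]
          refine ⟨⟨Nat.div_dvd_of_dvd hgdvd, hq0.ne'⟩, ?_⟩
          intro h1
          have hmc := Nat.div_mul_cancel hgdvd
          rw [h1, one_mul] at hmc
          omega)]
      apply Finset.sum_congr rfl
      intro d hd
      simp only [Finset.mem_filter, Nat.mem_divisors] at hd
      obtain ⟨⟨hdq, _⟩, hd1⟩ := hd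
      have hdd2 : q / d * d = q := Nat.div_mul_cancel hdq
      have hdivdiv : q / (q / d) = d := Nat.div_div_self hdq hq0.ne'
      have hqd_pos : 0 < q / d :=
        Nat.div_pos (Nat.le_of_dvd hq0 hdq) (Nat.pos_of_ne_zero (by rintro rfl; omega))
      have hqdq : q / d ≠ q := by
        intro h
        rw [h] at hdd2
        exact hd1 (Nat.eq_of_mul_eq_mul_left hq0 (by rw [mul_one]; exact hdd2))
      have hfe : (Finset.univ.filter
            (fun p : ZMod q × ZMod q => p.1 ≠ 0 ∧ Nab q p.1 p.2 ≠ 0)).filter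
            (fun p => q / Nab q p.1 p.2 = d)
          = Finset.univ.filter (fun p : ZMod q × ZMod q => p.1 ≠ 0 ∧ Nab q p.1 p.2 = q / d) := by
        ext p
        simp only [Finset.mem_filter, Finset.mem_univ, true_and]
        constructor
        · rintro ⟨⟨h1, h2⟩, h3⟩
          refine ⟨h1, ?_⟩
          have hg := Nab_ne_zero_eq_gcd q p.1 p.2 h2
          have hgdvd : Nab q p.1 p.2 ∣ q := hg ▸ Nat.gcd_dvd_right _ _
          have hdds := Nat.div_div_self hgdvd hq0.ne'
          rw [h3] at hdds
          omega
        · rintro ⟨h1, h2⟩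
          exact ⟨⟨h1, by omega⟩, by rw [h2, hdivdiv]⟩
      rw [hfe, card_pairs_Nab q (q / d) (Nat.div_dvd_of_dvd hdq) hqdq, hdivdiv]
    rw [hfull, hB]
end

section
/- For every integer q ≥ 2, among the pairs (α, c) with α a unit of Z_q and c ∈ S_2(q), the corresponding codewords (α, c + α·𝟏, c + 2α·𝟏, …, c + (q−1)α·𝟏) of M_{3,2}(q) realize the following weights with the following multiplicities: exactly φ(q) pairs give weight 1 + (q − 1)(q + 1); exactly d·φ(d)·φ(q) pairs give weight 1 + (q − 2)(q + 1) + q/d, for each divisor d of q with d ≠ 1 and d ≠ q; exactly (q·φ(q) + q − 1)·φ(q) pairs give weight 2 + (q − 2)(q + 1); and exactly (q(q − 1) − Σ_{d | q, d ≠ 1} d·φ(d))·φ(q) pairs give weight 1 + (q − 2)(q + 1), where φ is Euler's totient function. -/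
lemma simplexWord_nil (q : ℕ) (γ : ZMod q) : simplexWord q γ [] = [γ] := by
  simp [simplexWord]

def word2 (q : ℕ) (β γ : ZMod q) : List (ZMod q) := simplexWord q β [γ]

lemma simplex_two (q : ℕ) : simplex q 2 = {w | ∃ β γ : ZMod q, w = word2 q β γ} := by
  ext w
  simp only [simplex, Set.mem_setOf_eq, Set.mem_singleton_iff, word2]
  constructor
  · rintro ⟨c, ⟨c0, rfl, γ, rfl⟩, β, rfl⟩
    exact ⟨β, γ, by rw [simplexWord_nil]⟩
  · rintro ⟨β, γ, rfl⟩
    exact ⟨[γ], ⟨[], rfl, γ, (simplexWord_nil q γ).symm⟩, β, rfl⟩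

lemma word2_eq (q : ℕ) (β γ : ZMod q) :
    word2 q β γ = γ :: β :: (List.range (q - 1)).flatMap
      (fun i => [γ + ((i + 1 : ℕ) : ZMod q) * β]) := by
  simp [word2, simplexWord]

lemma word2_inj (q : ℕ) : Function.Injective fun t : ZMod q × ZMod q => word2 q t.1 t.2 := by
  rintro ⟨β, γ⟩ ⟨β', γ'⟩ h
  simp only [word2_eq, List.cons.injEq] at h
  exact Prod.ext h.2.1 h.1

lemma wt_cons {q : ℕ} (a : ZMod q) (l : List (ZMod q)) :
    wt (a :: l) = (if a = 0 then 0 else 1) + wt l := by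
  simp [wt, List.countP_cons]
  by_cases h : a = 0 <;> simp [h] <;> omega

lemma wt_flatMap_range {q : ℕ} (n : ℕ) (f : ℕ → List (ZMod q)) :
    wt ((List.range n).flatMap f) = ∑ i ∈ Finset.range n, wt (f i) := by
  induction n with
  | zero => simp [wt]
  | succ n ih =>
      rw [List.range_succ, List.flatMap_append, Finset.sum_range_succ, ← ih]
      simp [wt, List.countP_append]

lemma wt_singleton {q : ℕ} (a : ZMod q) : wt [a] = if a = 0 then 0 else 1 := by
  simp [wt]

-- reindexing: i+1 for i < q-1 ↔ nonzero elements of ZMod q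
lemma sum_reindex {q : ℕ} [NeZero q] (hq : 2 ≤ q) (f : ZMod q → ℕ) :
    ∑ i ∈ Finset.range (q - 1), f ((i + 1 : ℕ) : ZMod q)
      = ∑ j ∈ Finset.univ.filter (fun j : ZMod q => j ≠ 0), f j := by
  apply Finset.sum_nbij' (fun i => ((i + 1 : ℕ) : ZMod q)) (fun j => j.val - 1)
  · intro i hi
    simp only [Finset.mem_range] at hi
    simp only [Finset.mem_filter, Finset.mem_univ, true_and]
    intro h
    have := Nat.le_of_dvd (by omega) ((ZMod.natCast_eq_zero_iff (i+1) q).mp h)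
    omega
  · intro j hj
    simp only [Finset.mem_filter, Finset.mem_univ, true_and] at hj
    have h1 : j.val ≠ 0 := fun h => hj (by rwa [← ZMod.val_eq_zero])
    have h2 : j.val < q := ZMod.val_lt j
    simp only [Finset.mem_range]; omega
  · intro i hi
    simp only [Finset.mem_range] at hi
    have : ((i + 1 : ℕ) : ZMod q).val = i + 1 := ZMod.val_cast_of_lt (by omega)
    omega
  · intro j hj
    simp only [Finset.mem_filter, Finset.mem_univ, true_and] at hj
    have h1 : j.val ≠ 0 := fun h => hj (by rwa [← ZMod.val_eq_zero])
    have : j.val - 1 + 1 = j.val := by omega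
    rw [this, ZMod.natCast_val, ZMod.cast_id]
  · intros; rfl

section
variable {q : ℕ} [NeZero q]

lemma card_filter_ne_zero (hq : 2 ≤ q) :
    (Finset.univ.filter (fun j : ZMod q => j ≠ 0)).card = q - 1 := by
  rw [Finset.filter_ne', Finset.card_erase_of_mem (Finset.mem_univ _), Finset.card_univ,
    ZMod.card]

lemma sum_unit_eq (hq : 2 ≤ q) {α : ZMod q} (hα : IsUnit α) (c : ZMod q) :
    (∑ j ∈ Finset.univ.filter (fun j : ZMod q => j ≠ 0), if c + j * α = 0 then 1 else 0)
      = if c = 0 then 0 else 1 := by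
  obtain ⟨u, rfl⟩ := hα
  set j₀ : ZMod q := -c * ↑u⁻¹ with hj₀
  have key : ∀ j : ZMod q, c + j * ↑u = 0 ↔ j = j₀ := by
    intro j
    constructor
    · intro h
      have : j * ↑u = -c := by linear_combination h
      rw [hj₀, ← this]
      simp [mul_assoc]
    · rintro rfl
      rw [hj₀]
      simp [mul_assoc]
  have : ∀ j : ZMod q, (if c + j * ↑u = 0 then (1:ℕ) else 0) = if j = j₀ then 1 else 0 := by
    intro j; simp [key j]
  rw [Finset.sum_congr rfl (fun j _ => this j), Finset.sum_ite_eq']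
  have hz : j₀ = 0 ↔ c = 0 := by
    constructor
    · intro h
      have h2 := (key j₀).mpr rfl
      rw [h] at h2
      simpa using h2
    · rintro rfl; simp [hj₀]
  by_cases hc : c = 0
  · simp [hc, hz.mpr hc]
  · have hmem : j₀ ∈ Finset.univ.filter (fun j : ZMod q => j ≠ 0) :=
      Finset.mem_filter.mpr ⟨Finset.mem_univ _, fun h => hc (hz.mp h)⟩
    simp [hmem, hc]

lemma sum_unit_ne (hq : 2 ≤ q) {α : ZMod q} (hα : IsUnit α) (c : ZMod q) :
    (∑ j ∈ Finset.univ.filter (fun j : ZMod q => j ≠ 0), if c + j * α = 0 then 0 else 1)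
      = (q - 1) - (if c = 0 then 0 else 1) := by
  have h1 : ∀ j : ZMod q, (if c + j * α = 0 then (0:ℕ) else 1)
      + (if c + j * α = 0 then 1 else 0) = 1 := by
    intro j; by_cases h : c + j * α = 0 <;> simp [h]
  have hsum : (∑ j ∈ Finset.univ.filter (fun j : ZMod q => j ≠ 0), if c + j * α = 0 then (0:ℕ) else 1)
      + (∑ j ∈ Finset.univ.filter (fun j : ZMod q => j ≠ 0), if c + j * α = 0 then (1:ℕ) else 0)
      = q - 1 := by
    rw [← Finset.sum_add_distrib, Finset.sum_congr rfl (fun j _ => h1 j), Finset.sum_const,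
      smul_eq_mul, mul_one, card_filter_ne_zero hq]
  rw [sum_unit_eq hq hα c] at hsum
  by_cases hc : c = 0 <;> simp [hc] at hsum ⊢ <;> omega

def mm (q : ℕ) [NeZero q] (β γ : ZMod q) : ℕ :=
  (Finset.univ.filter (fun k : ZMod q => k ≠ 0 ∧ γ + k * β = 0)).card

lemma wt_macWord_eq (hq : 2 ≤ q) {α : ZMod q} (hα : IsUnit α) (β γ : ZMod q) :
    wt (macWord q α (word2 q β γ))
      = 1 + (((q-1) - (if γ = 0 then 0 else 1)) + (((q-1) - (if β = 0 then 0 else 1))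
        + ((q-1) * (q-2) + mm q β γ))) := by
  haveI : Fact (1 < q) := ⟨by omega⟩
  have hα0 : α ≠ 0 := hα.ne_zero
  have hw2 : word2 q β γ = γ :: β :: (List.range (q - 1)).flatMap
      (fun i => [γ + ((i + 1 : ℕ) : ZMod q) * β]) := by
    simp [word2, simplexWord]
  rw [macWord, wt_cons, if_neg hα0, hw2]
  rw [wt_flatMap_range]
  have hrow : ∀ i : ℕ,
      wt ((γ :: β :: (List.range (q - 1)).flatMap (fun i' => [γ + ((i' + 1 : ℕ) : ZMod q) * β])).map
        (fun x => x + ((i + 1 : ℕ) : ZMod q) * α))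
      = (if γ + ((i + 1 : ℕ) : ZMod q) * α = 0 then 0 else 1)
        + ((if β + ((i + 1 : ℕ) : ZMod q) * α = 0 then 0 else 1)
        + ∑ i' ∈ Finset.range (q-1),
            (if (γ + ((i' + 1 : ℕ) : ZMod q) * β) + ((i + 1 : ℕ) : ZMod q) * α = 0 then 0 else 1)) := by
    intro i
    rw [List.map_cons, List.map_cons, wt_cons, wt_cons, List.map_flatMap, wt_flatMap_range]
    simp only [List.map_singleton, wt_singleton]
  rw [Finset.sum_congr rfl (fun i _ => hrow i)]
  rw [sum_reindex hq (fun j => (if γ + j * α = 0 then 0 else 1)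
    + ((if β + j * α = 0 then 0 else 1)
    + ∑ i' ∈ Finset.range (q-1), (if (γ + ((i' + 1 : ℕ) : ZMod q) * β) + j * α = 0 then 0 else 1)))]
  rw [Finset.sum_add_distrib, Finset.sum_add_distrib]
  rw [sum_unit_ne hq hα γ, sum_unit_ne hq hα β]
  congr 2
  congr 1
  -- the double sum
  rw [Finset.sum_comm]
  have hinner : ∀ i' : ℕ,
      (∑ j ∈ Finset.univ.filter (fun j : ZMod q => j ≠ 0),
        if (γ + ((i' + 1 : ℕ) : ZMod q) * β) + j * α = 0 then 0 else 1)
      = (q - 1) - (if γ + ((i' + 1 : ℕ) : ZMod q) * β = 0 then 0 else 1) :=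
    fun i' => sum_unit_ne hq hα _
  rw [Finset.sum_congr rfl (fun i' _ => hinner i')]
  rw [sum_reindex hq (fun k => (q - 1) - (if γ + k * β = 0 then 0 else 1))]
  have hterm : ∀ k : ZMod q, (q - 1) - (if γ + k * β = 0 then (0:ℕ) else 1)
      = (q - 2) + (if γ + k * β = 0 then 1 else 0) := by
    intro k; by_cases h : γ + k * β = 0 <;> simp [h] <;> omega
  rw [Finset.sum_congr rfl (fun k _ => hterm k), Finset.sum_add_distrib, Finset.sum_const,
    smul_eq_mul, card_filter_ne_zero hq]
  congr 1
  rw [Finset.sum_boole, Finset.filter_filter]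
  rfl

end

section
variable {q : ℕ} [NeZero q]

/-- the multiplication-by-β hom -/
def mul_hom (q : ℕ) (β : ZMod q) : ZMod q →+ ZMod q := AddMonoidHom.mulRight β

lemma mul_hom_range (β : ZMod q) :
    (mul_hom q β).range = AddSubgroup.zmultiples β := by
  ext x
  simp only [AddMonoidHom.mem_range, AddSubgroup.mem_zmultiples_iff, mul_hom,
    AddMonoidHom.mulRight_apply]
  constructor
  · rintro ⟨a, rfl⟩
    exact ⟨(a.val : ℤ), by push_cast [zsmul_eq_mul]; rw [ZMod.natCast_val, ZMod.cast_id]⟩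
  · rintro ⟨n, rfl⟩
    exact ⟨(n : ZMod q), by rw [zsmul_eq_mul]⟩

lemma card_range_eq (β : ZMod q) : Nat.card (mul_hom q β).range = addOrderOf β := by
  rw [mul_hom_range]; exact Nat.card_zmultiples β

lemma card_ker_eq (β : ZMod q) : Nat.card (mul_hom q β).ker = q / addOrderOf β := by
  have h := AddSubgroup.card_eq_card_quotient_mul_card_addSubgroup (mul_hom q β).ker
  rw [Nat.card_congr (QuotientAddGroup.quotientKerEquivRange (mul_hom q β)).toEquiv,
    card_range_eq] at h
  have hq : Nat.card (ZMod q) = q := by rw [Nat.card_eq_fintype_card, ZMod.card]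
  rw [hq] at h
  have hpos : 0 < addOrderOf β := addOrderOf_pos β
  exact (Nat.div_eq_of_eq_mul_right hpos h).symm

end

section
variable {q : ℕ} [NeZero q]

lemma card_ker_filter (β : ZMod q) :
    (Finset.univ.filter (fun k : ZMod q => k * β = 0)).card = q / addOrderOf β := by
  calc (Finset.univ.filter (fun k : ZMod q => k * β = 0)).card
      = Fintype.card {k : ZMod q // k * β = 0} := (Fintype.card_subtype _).symm
    _ = Nat.card {k : ZMod q // k * β = 0} := (Nat.card_eq_fintype_card).symm
    _ = Nat.card (mul_hom q β).ker := Nat.card_congr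
        (Equiv.subtypeEquivRight (fun k => by
          simp [mul_hom, AddMonoidHom.mem_ker]))
    _ = q / addOrderOf β := card_ker_eq β

lemma card_fiber (β γ : ZMod q) (h : ∃ k : ZMod q, k * β = γ) :
    (Finset.univ.filter (fun k : ZMod q => γ + k * β = 0)).card = q / addOrderOf β := by
  obtain ⟨k₀, hk₀⟩ := h
  rw [← card_ker_filter β]
  apply Finset.card_bij' (fun k _ => k + k₀) (fun k _ => k - k₀)
  · intro k hk
    simp only [Finset.mem_filter, Finset.mem_univ, true_and] at hk ⊢
    rw [add_mul, hk₀]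
    linear_combination hk
  · intro k hk
    simp only [Finset.mem_filter, Finset.mem_univ, true_and] at hk ⊢
    rw [sub_mul, hk₀]
    linear_combination hk
  · intro k _; ring
  · intro k _; ring

lemma card_span (β : ZMod q) :
    (Finset.univ.filter (fun γ : ZMod q => ∃ k : ZMod q, k * β = γ)).card = addOrderOf β := by
  calc (Finset.univ.filter (fun γ : ZMod q => ∃ k : ZMod q, k * β = γ)).card
      = Fintype.card {γ : ZMod q // ∃ k : ZMod q, k * β = γ} := (Fintype.card_subtype _).symm
    _ = Nat.card {γ : ZMod q // ∃ k : ZMod q, k * β = γ} := (Nat.card_eq_fintype_card).symm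
    _ = Nat.card (mul_hom q β).range := Nat.card_congr
        (Equiv.subtypeEquivRight (fun γ => by
          simp [mul_hom, AddMonoidHom.mem_range]))
    _ = addOrderOf β := card_range_eq β

lemma card_filter_ne_zero' (hq : 2 ≤ q) :
    (Finset.univ.filter (fun j : ZMod q => j ≠ 0)).card = q - 1 := by
  rw [Finset.filter_ne', Finset.card_erase_of_mem (Finset.mem_univ _), Finset.card_univ,
    ZMod.card]

lemma mm_eq (β γ : ZMod q) :
    mm q β γ = (Finset.univ.filter (fun k : ZMod q => γ + k * β = 0)).card
      - (if γ = 0 then 1 else 0) := by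
  have hset : Finset.univ.filter (fun k : ZMod q => k ≠ 0 ∧ γ + k * β = 0)
      = (Finset.univ.filter (fun k : ZMod q => γ + k * β = 0)).erase 0 := by
    ext k
    simp only [Finset.mem_filter, Finset.mem_univ, true_and, Finset.mem_erase]
  rw [mm, hset]
  by_cases hγ : γ = 0
  · have h0 : (0 : ZMod q) ∈ Finset.univ.filter (fun k : ZMod q => γ + k * β = 0) := by
      simp [hγ]
    simp [Finset.card_erase_of_mem h0, hγ]
  · have h0 : (0 : ZMod q) ∉ Finset.univ.filter (fun k : ZMod q => γ + k * β = 0) := by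
      simp [hγ]
    simp [Finset.erase_eq_of_notMem h0, hγ]

lemma mm_span (β γ : ZMod q) (h : ∃ k : ZMod q, k * β = γ) :
    mm q β γ = q / addOrderOf β - (if γ = 0 then 1 else 0) := by
  rw [mm_eq, card_fiber β γ h]

lemma mm_nospan (β γ : ZMod q) (h : ¬∃ k : ZMod q, k * β = γ) : mm q β γ = 0 := by
  rw [mm, Finset.card_eq_zero]
  ext k
  simp only [Finset.mem_filter, Finset.mem_univ, true_and, Finset.notMem_empty, iff_false]
  rintro ⟨-, hk⟩
  exact h ⟨-k, by linear_combination -hk⟩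

lemma mm_zero_zero (hq : 2 ≤ q) : mm q (0 : ZMod q) 0 = q - 1 := by
  rw [mm]
  rw [show (Finset.univ.filter (fun k : ZMod q => k ≠ 0 ∧ (0:ZMod q) + k * 0 = 0))
      = Finset.univ.filter (fun k : ZMod q => k ≠ 0) by ext k; simp]
  exact card_filter_ne_zero' hq

lemma mm_zero (γ : ZMod q) (hγ : γ ≠ 0) : mm q (0 : ZMod q) γ = 0 := by
  rw [mm, Finset.card_eq_zero]
  ext k
  simp [hγ]

end

section
variable {q : ℕ} [NeZero q]

lemma addOrderOf_dvd_q (β : ZMod q) : addOrderOf β ∣ q := by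
  have := addOrderOf_dvd_card (x := β)
  rwa [ZMod.card] at this

lemma count_order {d : ℕ} (hd : d ∣ q) :
    (Finset.univ.filter (fun β : ZMod q => addOrderOf β = d)).card = Nat.totient d := by
  have hd' : d ∣ Fintype.card (ZMod q) := by rwa [ZMod.card]
  exact IsAddCyclic.card_addOrderOf_eq_totient hd'

lemma span_all {β : ZMod q} (h : addOrderOf β = q) (γ : ZMod q) : ∃ k : ZMod q, k * β = γ := by
  have hcard : (Finset.univ.filter (fun γ : ZMod q => ∃ k : ZMod q, k * β = γ)).card
      = Fintype.card (ZMod q) := by rw [card_span, h, ZMod.card]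
  have huniv := Finset.eq_univ_of_card _ hcard
  have : γ ∈ Finset.univ.filter (fun γ : ZMod q => ∃ k : ZMod q, k * β = γ) := by
    rw [huniv]; exact Finset.mem_univ γ
  exact (Finset.mem_filter.mp this).2

lemma sum_order :
    ∑ β ∈ Finset.univ.filter (fun β : ZMod q => β ≠ 0), addOrderOf β
      = ∑ d ∈ q.divisors.filter (fun d => d ≠ 1), d * Nat.totient d := by
  rw [← Finset.sum_fiberwise_of_maps_to (g := addOrderOf)
    (t := q.divisors.filter (fun d => d ≠ 1))
    (fun β hβ => by
      simp only [Finset.mem_filter, Finset.mem_univ, true_and] at hβ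
      simp only [Finset.mem_filter, Nat.mem_divisors]
      exact ⟨⟨addOrderOf_dvd_q β, NeZero.ne q⟩, fun h1 => hβ (AddMonoid.addOrderOf_eq_one_iff.mp h1)⟩)]
  apply Finset.sum_congr rfl
  intro d hd
  simp only [Finset.mem_filter, Nat.mem_divisors] at hd
  have hfib : (Finset.univ.filter (fun β : ZMod q => β ≠ 0)).filter
      (fun β => addOrderOf β = d) = Finset.univ.filter (fun β : ZMod q => addOrderOf β = d) := by
    ext β
    simp only [Finset.filter_filter, Finset.mem_filter, Finset.mem_univ, true_and]
    constructor
    · rintro ⟨-, h⟩; exact h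
    · intro h
      refine ⟨fun h0 => hd.2 ?_, h⟩
      rw [h0] at h
      rw [← h]
      simp
  rw [hfib]
  have : ∀ β ∈ Finset.univ.filter (fun β : ZMod q => addOrderOf β = d), addOrderOf β = d :=
    fun β hβ => (Finset.mem_filter.mp hβ).2
  rw [Finset.sum_congr rfl this, Finset.sum_const, count_order hd.1.1, smul_eq_mul, mul_comm]

end
section
variable {q : ℕ} [NeZero q]

def WW (q : ℕ) [NeZero q] (β γ : ZMod q) : ℕ := wt (macWord q 1 (word2 q β γ))

lemma wt_indep (hq : 2 ≤ q) {α : ZMod q} (hα : IsUnit α) (β γ : ZMod q) :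
    wt (macWord q α (word2 q β γ)) = WW q β γ := by
  rw [wt_macWord_eq hq hα, WW, wt_macWord_eq hq isUnit_one]

lemma WW_eq (hq : 2 ≤ q) (β γ : ZMod q) :
    WW q β γ = 1 + (((q-1) - (if γ = 0 then 0 else 1)) + (((q-1) - (if β = 0 then 0 else 1))
      + ((q-1) * (q-2) + mm q β γ))) := wt_macWord_eq hq isUnit_one β γ

lemma WW_A (hq : 2 ≤ q) : WW q 0 0 = 1 + (q-1) * (q+1) := by
  rw [WW_eq hq, mm_zero_zero hq, if_pos rfl]
  obtain ⟨r, rfl⟩ : ∃ r, q = r + 2 := ⟨q - 2, by omega⟩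
  have e1 : r + 2 - 1 = r + 1 := by omega
  have e2 : r + 2 - 2 = r := by omega
  simp only [e1, e2, Nat.sub_zero]
  ring

lemma WW_B (hq : 2 ≤ q) {γ : ZMod q} (hγ : γ ≠ 0) : WW q 0 γ = 2 + (q-2) * (q+1) := by
  rw [WW_eq hq, mm_zero γ hγ, if_neg hγ, if_pos rfl]
  obtain ⟨r, rfl⟩ : ∃ r, q = r + 2 := ⟨q - 2, by omega⟩
  have e1 : r + 2 - 1 = r + 1 := by omega
  have e2 : r + 2 - 2 = r := by omega
  simp only [e1, e2, Nat.sub_zero, Nat.add_sub_cancel]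
  ring

lemma WW_C (hq : 2 ≤ q) {β γ : ZMod q} (hβ : β ≠ 0) (h : ∃ k : ZMod q, k * β = γ) :
    WW q β γ = 1 + (q-2) * (q+1) + q / addOrderOf β := by
  rw [WW_eq hq, mm_span β γ h, if_neg hβ]
  have ho : 0 < addOrderOf β := addOrderOf_pos β
  have hole : addOrderOf β ≤ q := Nat.le_of_dvd (by omega) (addOrderOf_dvd_q β)
  have hQ1 : 1 ≤ q / addOrderOf β := (Nat.one_le_div_iff ho).mpr hole
  obtain ⟨s, hs⟩ : ∃ s, q / addOrderOf β = s + 1 := ⟨q / addOrderOf β - 1, by omega⟩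
  rw [hs]
  obtain ⟨r, rfl⟩ : ∃ r, q = r + 2 := ⟨q - 2, by omega⟩
  have e1 : r + 2 - 1 = r + 1 := by omega
  have e2 : r + 2 - 2 = r := by omega
  by_cases hγ : γ = 0
  · simp only [if_pos hγ, e1, e2, Nat.sub_zero, Nat.add_sub_cancel]
    ring
  · simp only [if_neg hγ, e1, e2, Nat.sub_zero, Nat.add_sub_cancel]
    ring

lemma WW_D (hq : 2 ≤ q) {β γ : ZMod q} (hβ : β ≠ 0) (h : ¬∃ k : ZMod q, k * β = γ) :
    WW q β γ = 1 + (q-2) * (q+1) := by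
  have hγ : γ ≠ 0 := by rintro rfl; exact h ⟨0, by ring⟩
  rw [WW_eq hq, mm_nospan β γ h, if_neg hβ, if_neg hγ]
  obtain ⟨r, rfl⟩ : ∃ r, q = r + 2 := ⟨q - 2, by omega⟩
  have e1 : r + 2 - 1 = r + 1 := by omega
  have e2 : r + 2 - 2 = r := by omega
  simp only [e1, e2, Nat.sub_zero, Nat.add_sub_cancel]
  ring

lemma Wval_cases (hq : 2 ≤ q) (β γ : ZMod q) :
    (β = 0 ∧ γ = 0 ∧ WW q β γ = 1 + (q-1) * (q+1)) ∨
    (β = 0 ∧ γ ≠ 0 ∧ WW q β γ = 2 + (q-2) * (q+1)) ∨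
    (β ≠ 0 ∧ (∃ k : ZMod q, k * β = γ) ∧
      WW q β γ = 1 + (q-2) * (q+1) + q / addOrderOf β) ∨
    (β ≠ 0 ∧ (¬∃ k : ZMod q, k * β = γ) ∧ WW q β γ = 1 + (q-2) * (q+1)) := by
  by_cases hβ : β = 0
  · subst hβ
    by_cases hγ : γ = 0
    · exact Or.inl ⟨rfl, hγ, by rw [hγ]; exact WW_A hq⟩
    · exact Or.inr (Or.inl ⟨rfl, hγ, WW_B hq hγ⟩)
  · by_cases h : ∃ k : ZMod q, k * β = γ
    · exact Or.inr (Or.inr (Or.inl ⟨hβ, h, WW_C hq hβ h⟩))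
    · exact Or.inr (Or.inr (Or.inr ⟨hβ, h, WW_D hq hβ h⟩))

lemma hE_split (hq : 2 ≤ q) : (q-1) * (q+1) = (q-2) * (q+1) + (q+1) := by
  obtain ⟨r, rfl⟩ : ∃ r, q = r + 2 := ⟨q - 2, by omega⟩
  have e1 : r + 2 - 1 = r + 1 := by omega
  have e2 : r + 2 - 2 = r := by omega
  rw [e1, e2]
  ring

lemma div_order_pos (hq : 2 ≤ q) (β : ZMod q) : 1 ≤ q / addOrderOf β :=
  (Nat.one_le_div_iff (addOrderOf_pos β)).mpr
    (Nat.le_of_dvd (by omega) (addOrderOf_dvd_q β))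

end
section
variable {q : ℕ} [NeZero q]

lemma card_pair (P : ZMod q × ZMod q → Prop) [DecidablePred P] :
    (Finset.univ.filter P).card
      = ∑ β : ZMod q, (Finset.univ.filter (fun γ : ZMod q => P (β, γ))).card := by
  rw [Finset.card_eq_sum_card_fiberwise
    (f := Prod.fst) (t := Finset.univ) (fun x _ => Finset.mem_univ x.1)]
  refine Finset.sum_congr rfl (fun β _ => ?_)
  refine Finset.card_bij' (fun t _ => t.2) (fun γ _ => (β, γ)) ?_ ?_ ?_ ?_
  · rintro ⟨t1, t2⟩ ht
    simp only [Finset.mem_filter, Finset.mem_univ, true_and] at ht ⊢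
    obtain ⟨h1, h2⟩ := ht
    subst h2
    exact h1
  · intro γ hγ
    simp only [Finset.mem_filter, Finset.mem_univ, true_and] at hγ
    exact Finset.mem_filter.mpr ⟨Finset.mem_filter.mpr ⟨Finset.mem_univ _, hγ⟩, rfl⟩
  · rintro ⟨t1, t2⟩ ht
    simp only [Finset.mem_filter, Finset.mem_univ, true_and] at ht
    obtain ⟨-, h2⟩ := ht
    subst h2
    rfl
  · intro γ _; rfl

lemma count_one (hq : 2 ≤ q) :
    (Finset.univ.filter (fun t : ZMod q × ZMod q => WW q t.1 t.2 = 1 + (q-1) * (q+1))).card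
      = 1 := by
  have hset : Finset.univ.filter (fun t : ZMod q × ZMod q => WW q t.1 t.2 = 1 + (q-1) * (q+1))
      = {((0 : ZMod q), (0 : ZMod q))} := by
    ext ⟨β, γ⟩
    simp only [Finset.mem_filter, Finset.mem_univ, true_and, Finset.mem_singleton,
      Prod.mk.injEq]
    constructor
    · intro hW
      rw [hE_split hq] at hW
      rcases Wval_cases hq β γ with ⟨h1, h2, h3⟩ | ⟨h1, h2, h3⟩ | ⟨h1, h2, h3⟩ | ⟨h1, h2, h3⟩
      · exact ⟨h1, h2⟩
      · rw [h3] at hW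
        generalize (q-2) * (q+1) = E at hW
        omega
      · rw [h3] at hW
        have hle := Nat.div_le_self q (addOrderOf β)
        generalize (q-2) * (q+1) = E at hW
        generalize q / addOrderOf β = Q at hW hle
        omega
      · rw [h3] at hW
        generalize (q-2) * (q+1) = E at hW
        omega
    · rintro ⟨rfl, rfl⟩
      exact WW_A hq
  rw [hset, Finset.card_singleton]

lemma count_d (hq : 2 ≤ q) {d : ℕ} (hd : d ∣ q) (hd1 : d ≠ 1) (hdq : d ≠ q) :
    (Finset.univ.filter (fun t : ZMod q × ZMod q =>
        WW q t.1 t.2 = 1 + (q-2) * (q+1) + q / d)).card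
      = d * Nat.totient d := by
  have hq0 : q ≠ 0 := by omega
  have hd0 : 0 < d := Nat.pos_of_dvd_of_pos hd (by omega)
  have hQd1 : 1 ≤ q / d := (Nat.one_le_div_iff hd0).mpr (Nat.le_of_dvd (by omega) hd)
  have hQdne : q / d ≠ 1 := by
    intro h
    have := Nat.mul_div_cancel' hd
    rw [h, mul_one] at this
    exact hdq this
  have hQdq : q / d ≤ q := Nat.div_le_self q d
  have hset : Finset.univ.filter (fun t : ZMod q × ZMod q =>
        WW q t.1 t.2 = 1 + (q-2) * (q+1) + q / d)
      = Finset.univ.filter (fun t : ZMod q × ZMod q =>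
        addOrderOf t.1 = d ∧ ∃ k : ZMod q, k * t.1 = t.2) := by
    ext ⟨β, γ⟩
    simp only [Finset.mem_filter, Finset.mem_univ, true_and]
    constructor
    · intro hW
      rcases Wval_cases hq β γ with ⟨h1, h2, h3⟩ | ⟨h1, h2, h3⟩ | ⟨h1, h2, h3⟩ | ⟨h1, h2, h3⟩
      · rw [h3, hE_split hq] at hW
        generalize (q-2) * (q+1) = E at hW
        omega
      · rw [h3] at hW
        generalize (q-2) * (q+1) = E at hW
        omega
      · rw [h3] at hW
        have heq : q / addOrderOf β = q / d := by
          generalize (q-2) * (q+1) = E at hW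
          omega
        have ho : addOrderOf β = d := by
          have h1' := Nat.div_div_self (addOrderOf_dvd_q β) hq0
          have h2' := Nat.div_div_self hd hq0
          rw [← h1', heq, h2']
        exact ⟨ho, h2⟩
      · rw [h3] at hW
        generalize (q-2) * (q+1) = E at hW
        omega
    · rintro ⟨ho, hspan⟩
      have hβ : β ≠ 0 := by
        rintro rfl
        rw [addOrderOf_zero] at ho
        exact hd1 ho.symm
      rw [WW_C hq hβ hspan, ho]
  rw [hset, card_pair]
  have hterm : ∀ β : ZMod q,
      (Finset.univ.filter (fun γ : ZMod q => addOrderOf β = d ∧ ∃ k : ZMod q, k * β = γ)).card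
      = if addOrderOf β = d then d else 0 := by
    intro β
    by_cases ho : addOrderOf β = d
    · rw [if_pos ho]
      rw [show (Finset.univ.filter (fun γ : ZMod q => addOrderOf β = d ∧ ∃ k : ZMod q, k * β = γ))
          = Finset.univ.filter (fun γ : ZMod q => ∃ k : ZMod q, k * β = γ) by
            ext γ; simp [ho]]
      rw [card_span, ho]
    · rw [if_neg ho]
      rw [show (Finset.univ.filter (fun γ : ZMod q => addOrderOf β = d ∧ ∃ k : ZMod q, k * β = γ))
          = (∅ : Finset (ZMod q)) by ext γ; simp [ho]]
      rfl
  refine Eq.trans (Finset.sum_congr rfl (fun β _ => hterm β)) ?_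
  rw [← Finset.sum_filter, Finset.sum_const, count_order hd, smul_eq_mul, mul_comm]

lemma count_three (hq : 2 ≤ q) :
    (Finset.univ.filter (fun t : ZMod q × ZMod q =>
        WW q t.1 t.2 = 2 + (q-2) * (q+1))).card
      = q * Nat.totient q + q - 1 := by
  have hq0 : q ≠ 0 := by omega
  have hset : Finset.univ.filter (fun t : ZMod q × ZMod q => WW q t.1 t.2 = 2 + (q-2) * (q+1))
      = Finset.univ.filter (fun t : ZMod q × ZMod q =>
          (t.1 = 0 ∧ t.2 ≠ 0) ∨ addOrderOf t.1 = q) := by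
    ext ⟨β, γ⟩
    simp only [Finset.mem_filter, Finset.mem_univ, true_and]
    constructor
    · intro hW
      rcases Wval_cases hq β γ with ⟨h1, h2, h3⟩ | ⟨h1, h2, h3⟩ | ⟨h1, h2, h3⟩ | ⟨h1, h2, h3⟩
      · rw [h3, hE_split hq] at hW
        generalize (q-2) * (q+1) = E at hW
        omega
      · exact Or.inl ⟨h1, h2⟩
      · rw [h3] at hW
        have heq : q / addOrderOf β = 1 := by
          generalize (q-2) * (q+1) = E at hW
          omega
        refine Or.inr ?_
        have h1' := Nat.mul_div_cancel' (addOrderOf_dvd_q β)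
        rw [heq, mul_one] at h1'
        exact h1'
      · rw [h3] at hW
        generalize (q-2) * (q+1) = E at hW
        omega
    · rintro (⟨rfl, hγ⟩ | ho)
      · exact WW_B hq hγ
      · have hβ : β ≠ 0 := by
          rintro rfl
          rw [addOrderOf_zero] at ho
          omega
        rw [WW_C hq hβ (span_all ho γ), ho, Nat.div_self (by omega)]
        generalize (q-2) * (q+1) = E
        omega
  rw [hset, card_pair]
  have hterm : ∀ β : ZMod q,
      (Finset.univ.filter (fun γ : ZMod q => (β = 0 ∧ γ ≠ 0) ∨ addOrderOf β = q)).card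
      = (if β = 0 then q - 1 else 0) + (if addOrderOf β = q then q else 0) := by
    intro β
    by_cases hβ : β = 0
    · have ho : addOrderOf β ≠ q := by
        rw [hβ, addOrderOf_zero]; omega
      rw [if_pos hβ, if_neg ho]
      have h1q : (1:ℕ) ≠ q := by omega
      rw [show (Finset.univ.filter (fun γ : ZMod q => (β = 0 ∧ γ ≠ 0) ∨ addOrderOf β = q))
          = Finset.univ.filter (fun γ : ZMod q => γ ≠ 0) by
            ext γ; simp [hβ, h1q]]
      rw [card_filter_ne_zero hq]
      omega
    · rw [if_neg hβ]
      by_cases ho : addOrderOf β = q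
      · rw [if_pos ho]
        rw [show (Finset.univ.filter (fun γ : ZMod q => (β = 0 ∧ γ ≠ 0) ∨ addOrderOf β = q))
            = Finset.univ by ext γ; simp [hβ, ho]]
        rw [Finset.card_univ, ZMod.card]
        omega
      · rw [if_neg ho]
        rw [show (Finset.univ.filter (fun γ : ZMod q => (β = 0 ∧ γ ≠ 0) ∨ addOrderOf β = q))
            = (∅ : Finset (ZMod q)) by ext γ; simp [hβ, ho]]
        rfl
  refine Eq.trans (Finset.sum_congr rfl (fun β _ => hterm β)) ?_
  rw [Finset.sum_add_distrib]
  rw [Finset.sum_ite_eq' Finset.univ (0 : ZMod q) (fun _ => q - 1)]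
  rw [← Finset.sum_filter, Finset.sum_const, count_order dvd_rfl, smul_eq_mul,
    if_pos (Finset.mem_univ _)]
  rw [mul_comm (Nat.totient q) q]
  generalize q * Nat.totient q = A
  omega

lemma count_four (hq : 2 ≤ q) :
    (Finset.univ.filter (fun t : ZMod q × ZMod q =>
        WW q t.1 t.2 = 1 + (q-2) * (q+1))).card
      = q * (q - 1) - ∑ d ∈ q.divisors.filter (fun d => d ≠ 1), d * Nat.totient d := by
  have hq0 : q ≠ 0 := by omega
  have hset : Finset.univ.filter (fun t : ZMod q × ZMod q => WW q t.1 t.2 = 1 + (q-2) * (q+1))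
      = Finset.univ.filter (fun t : ZMod q × ZMod q =>
          t.1 ≠ 0 ∧ ¬∃ k : ZMod q, k * t.1 = t.2) := by
    ext ⟨β, γ⟩
    simp only [Finset.mem_filter, Finset.mem_univ, true_and]
    constructor
    · intro hW
      rcases Wval_cases hq β γ with ⟨h1, h2, h3⟩ | ⟨h1, h2, h3⟩ | ⟨h1, h2, h3⟩ | ⟨h1, h2, h3⟩
      · rw [h3, hE_split hq] at hW
        generalize (q-2) * (q+1) = E at hW
        omega
      · rw [h3] at hW
        generalize (q-2) * (q+1) = E at hW
        omega
      · rw [h3] at hW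
        have := div_order_pos hq β
        generalize (q-2) * (q+1) = E at hW
        generalize q / addOrderOf β = Q at hW this
        omega
      · exact ⟨h1, h2⟩
    · rintro ⟨hβ, hnospan⟩
      exact WW_D hq hβ hnospan
  rw [hset, card_pair]
  have hterm : ∀ β : ZMod q,
      (Finset.univ.filter (fun γ : ZMod q => β ≠ 0 ∧ ¬∃ k : ZMod q, k * β = γ)).card
      = if β ≠ 0 then q - addOrderOf β else 0 := by
    intro β
    by_cases hβ : β = 0
    · rw [if_neg (by simpa using hβ)]
      rw [show (Finset.univ.filter (fun γ : ZMod q => β ≠ 0 ∧ ¬∃ k : ZMod q, k * β = γ))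
          = (∅ : Finset (ZMod q)) by ext γ; simp [hβ]]
      rfl
    · rw [if_pos hβ]
      rw [show (Finset.univ.filter (fun γ : ZMod q => β ≠ 0 ∧ ¬∃ k : ZMod q, k * β = γ))
          = Finset.univ.filter (fun γ : ZMod q => ¬∃ k : ZMod q, k * β = γ) by
            ext γ; simp [hβ]]
      rw [Finset.filter_not, Finset.card_sdiff_of_subset (Finset.filter_subset _ _), card_span,
        Finset.card_univ, ZMod.card]
  refine Eq.trans (Finset.sum_congr rfl (fun β _ => hterm β)) ?_
  rw [← Finset.sum_filter]
  rw [Finset.sum_tsub_distrib _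
    (fun β _ => Nat.le_of_dvd (by omega) (addOrderOf_dvd_q β))]
  rw [Finset.sum_const, card_filter_ne_zero hq, smul_eq_mul, sum_order, mul_comm]

end
section
variable {q : ℕ} [NeZero q]

lemma card_isUnit_filter : (Finset.univ.filter (fun a : ZMod q => IsUnit a)).card
    = Nat.totient q := by
  rw [← ZMod.card_units_eq_totient q, ← Fintype.card_subtype]
  refine Fintype.card_congr ?_ |>.symm
  exact
    { toFun := fun u => ⟨u.1, u.isUnit⟩
      invFun := fun a => a.2.unit
      left_inv := fun u => Units.ext u.isUnit.unit_spec
      right_inv := fun a => Subtype.ext a.2.unit_spec }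

lemma master (hq : 2 ≤ q) (w : ℕ) :
    ({p : ZMod q × List (ZMod q) | IsUnit p.1 ∧ p.2 ∈ simplex q 2 ∧
        wt (macWord q p.1 p.2) = w}).ncard
      = Nat.totient q *
        (Finset.univ.filter (fun t : ZMod q × ZMod q => WW q t.1 t.2 = w)).card := by
  classical
  have hinj : Function.Injective
      (fun t : ZMod q × (ZMod q × ZMod q) => (t.1, word2 q t.2.1 t.2.2)) := by
    rintro ⟨a, t⟩ ⟨a', t'⟩ h
    simp only [Prod.mk.injEq] at h
    obtain ⟨h1, h2⟩ := h
    exact Prod.ext h1 (word2_inj q h2)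
  have hset : {p : ZMod q × List (ZMod q) | IsUnit p.1 ∧ p.2 ∈ simplex q 2 ∧
        wt (macWord q p.1 p.2) = w}
      = (fun t : ZMod q × (ZMod q × ZMod q) => (t.1, word2 q t.2.1 t.2.2)) ''
        {t : ZMod q × (ZMod q × ZMod q) | IsUnit t.1 ∧ WW q t.2.1 t.2.2 = w} := by
    ext ⟨a, l⟩
    simp only [Set.mem_setOf_eq, Set.mem_image]
    constructor
    · rintro ⟨h1, h2, h3⟩
      rw [simplex_two] at h2
      obtain ⟨β, γ, rfl⟩ := h2
      rw [wt_indep hq h1] at h3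
      exact ⟨(a, (β, γ)), ⟨h1, h3⟩, rfl⟩
    · rintro ⟨⟨a', β, γ⟩, ⟨h1, h2⟩, heq⟩
      obtain ⟨rfl, rfl⟩ : a' = a ∧ word2 q β γ = l := by
        simpa [Prod.ext_iff] using heq
      refine ⟨h1, ?_, ?_⟩
      · rw [simplex_two]; exact ⟨β, γ, rfl⟩
      · rw [wt_indep hq h1]; exact h2
  rw [hset, Set.ncard_image_of_injective _ hinj]
  have hset2 : {t : ZMod q × (ZMod q × ZMod q) | IsUnit t.1 ∧ WW q t.2.1 t.2.2 = w}
      = ↑((Finset.univ.filter (fun a : ZMod q => IsUnit a)) ×ˢ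
          (Finset.univ.filter (fun t : ZMod q × ZMod q => WW q t.1 t.2 = w))) := by
    ext ⟨a, t⟩
    simp only [Set.mem_setOf_eq, Finset.coe_filter, Finset.mem_coe, Finset.mem_product,
      Finset.mem_filter, Finset.mem_univ, true_and]
  rw [hset2, Set.ncard_coe_finset, Finset.card_product, card_isUnit_filter]

end

/-- Among the pairs `(α, c)` with `α` a unit of `ZMod q` and `c ∈ S_2(q)`, the
codewords `(α, c + α·𝟏, …, c + (q−1)α·𝟏)` of `M_{3,2}(q)` realize: weight
`1 + (q − 1)(q + 1)` for exactly `φ(q)` pairs; weight `1 + (q − 2)(q + 1) + q/d` for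
exactly `d·φ(d)·φ(q)` pairs, for each divisor `d` of `q` with `d ≠ 1, d ≠ q`; weight
`2 + (q − 2)(q + 1)` for exactly `(q·φ(q) + q − 1)·φ(q)` pairs; and weight
`1 + (q − 2)(q + 1)` for exactly `(q(q − 1) − Σ_{d ∣ q, d ≠ 1} d·φ(d))·φ(q)` pairs. -/
theorem macdonald_three_two_unit_distribution (q : ℕ) (hq : 2 ≤ q) :
    ({p : ZMod q × List (ZMod q) | IsUnit p.1 ∧ p.2 ∈ simplex q 2 ∧
        wt (macWord q p.1 p.2) = 1 + (q - 1) * (q + 1)}).ncard = Nat.totient q ∧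
    (∀ d : ℕ, d ∣ q → d ≠ 1 → d ≠ q →
      ({p : ZMod q × List (ZMod q) | IsUnit p.1 ∧ p.2 ∈ simplex q 2 ∧
          wt (macWord q p.1 p.2) = 1 + (q - 2) * (q + 1) + q / d}).ncard
        = d * Nat.totient d * Nat.totient q) ∧
    ({p : ZMod q × List (ZMod q) | IsUnit p.1 ∧ p.2 ∈ simplex q 2 ∧
        wt (macWord q p.1 p.2) = 2 + (q - 2) * (q + 1)}).ncard
      = (q * Nat.totient q + q - 1) * Nat.totient q ∧
    ({p : ZMod q × List (ZMod q) | IsUnit p.1 ∧ p.2 ∈ simplex q 2 ∧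
        wt (macWord q p.1 p.2) = 1 + (q - 2) * (q + 1)}).ncard
      = (q * (q - 1) - ∑ d ∈ q.divisors.filter (fun d => d ≠ 1), d * Nat.totient d)
          * Nat.totient q := by
  haveI : NeZero q := ⟨by omega⟩
  refine ⟨?_, ?_, ?_, ?_⟩
  · rw [master hq _, count_one hq, mul_one]
  · intro d hd hd1 hdq
    rw [master hq _, count_d hq hd hd1 hdq]
    ring
  · rw [master hq _, count_three hq, mul_comm]
  · rw [master hq _, count_four hq, mul_comm]
end
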